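/- arXiv:2403.01293 — 10 statements merged into one kernel-verified Lean document; each statement's English description precedes it below -/
import Mathlib

section
/- For every integer n ≥ 4, the graph Γ(n) is a strongly regular graph with parameters (n², 3n−3, n, 6); that is, Γ(n) has n² vertices, every vertex has exactly 3n−3 neighbours, every pair of adjacent vertices has exactly n common neighbours, and every pair of distinct non-adjacent vertices has exactly 6 common neighbours. -/
/-- The connection set `S = {(i,0), (0,i), (i,i) : 1 ≤ i ≤ n-1}` of `ℤ_n × ℤ_n`. -/
def cayS (n : ℕ) : Set (ZMod n × ZMod n) :=
  {p | p ≠ 0 ∧ (p.2 = 0 ∨ p.1 = 0 ∨ p.1 = p.2)}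

/-- The Cayley graph `Γ(n) = Cay(ℤ_n × ℤ_n; S)`. -/
def Gamma (n : ℕ) : SimpleGraph (ZMod n × ZMod n) where
  Adj x y := x ≠ y ∧ x - y ∈ cayS n
  symm := by
    constructor
    rintro x y ⟨hxy, hne, h⟩
    refine ⟨Ne.symm hxy, sub_ne_zero_of_ne (Ne.symm hxy), ?_⟩
    simp only [Prod.fst_sub, Prod.snd_sub] at h ⊢
    rcases h with h | h | h
    · exact Or.inl (by linear_combination -h)
    · exact Or.inr (Or.inl (by linear_combination -h))
    · exact Or.inr (Or.inr (by linear_combination -h))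
  loopless := ⟨fun x h => h.1 rfl⟩

section Aux

variable {n : ℕ}

lemma gamma_adj {x y : ZMod n × ZMod n} :
    (Gamma n).Adj x y ↔ x ≠ y ∧ x - y ∈ cayS n := Iff.rfl

lemma mem_cayS {p : ZMod n × ZMod n} :
    p ∈ cayS n ↔ p ≠ 0 ∧ (p.2 = 0 ∨ p.1 = 0 ∨ p.1 = p.2) := Iff.rfl

lemma neg_mem_cayS {p : ZMod n × ZMod n} : -p ∈ cayS n ↔ p ∈ cayS n := by
  simp [mem_cayS, Prod.fst_neg, Prod.snd_neg, neg_eq_zero, neg_inj]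

/-- Transfer common-neighbour counts along an adjacency-preserving bijection. -/
lemma card_CN_equiv (e : (ZMod n × ZMod n) ≃ (ZMod n × ZMod n))
    (he : ∀ x y, (Gamma n).Adj x y ↔ (Gamma n).Adj (e x) (e y)) (v w : ZMod n × ZMod n) :
    Nat.card ((Gamma n).commonNeighbors (e v) (e w)) =
      Nat.card ((Gamma n).commonNeighbors v w) :=
  Nat.card_congr (Equiv.subtypeEquiv e (fun z => by
    simp only [SimpleGraph.mem_commonNeighbors]
    rw [he v z, he w z])).symm

lemma card_CN_translate (v w : ZMod n × ZMod n) :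
    Nat.card ((Gamma n).commonNeighbors v w) =
      Nat.card ((Gamma n).commonNeighbors (v - w) 0) := by
  have he : ∀ x y : ZMod n × ZMod n,
      (Gamma n).Adj x y ↔ (Gamma n).Adj (Equiv.subRight w x) (Equiv.subRight w y) := by
    intro x y
    simp only [gamma_adj, Equiv.subRight_apply, sub_sub_sub_cancel_right, Ne, sub_left_inj]
  have := card_CN_equiv (Equiv.subRight w) he v w
  simp only [Equiv.subRight_apply, sub_self] at this
  exact this.symm

lemma card_CN_addEquiv (f : (ZMod n × ZMod n) ≃+ (ZMod n × ZMod n))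
    (hf : ∀ p, p ∈ cayS n ↔ f p ∈ cayS n) (d : ZMod n × ZMod n) :
    Nat.card ((Gamma n).commonNeighbors (f d) 0) =
      Nat.card ((Gamma n).commonNeighbors d 0) := by
  have key := card_CN_equiv f.toEquiv (fun x y => by
    simp only [gamma_adj, AddEquiv.toEquiv_eq_coe, EquivLike.coe_coe,
      Ne, f.injective.eq_iff, ← map_sub]
    rw [← hf]) d 0
  simp only [AddEquiv.toEquiv_eq_coe, EquivLike.coe_coe, map_zero] at key
  exact key

/-- The coordinate swap preserves `cayS`. -/
lemma swap_mem_cayS (p : ZMod n × ZMod n) :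
    p ∈ cayS n ↔ (AddEquiv.prodComm (p : ZMod n × ZMod n)) ∈ cayS n := by
  have hzero : ∀ q : ZMod n × ZMod n, (q.swap = 0 ↔ q = 0) := by
    intro q
    constructor
    · intro h
      exact Prod.ext (congrArg Prod.snd h) (congrArg Prod.fst h)
    · intro h; rw [h]; rfl
  simp only [mem_cayS, AddEquiv.coe_prodComm, Prod.fst_swap, Prod.snd_swap, Ne, hzero]
  constructor
  · rintro ⟨h0, h⟩
    refine ⟨h0, ?_⟩
    rcases h with h | h | h
    · exact Or.inr (Or.inl h)
    · exact Or.inl h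
    · exact Or.inr (Or.inr h.symm)
  · rintro ⟨h0, h⟩
    refine ⟨h0, ?_⟩
    rcases h with h | h | h
    · exact Or.inr (Or.inl h)
    · exact Or.inl h
    · exact Or.inr (Or.inr h.symm)

/-- The map `(x, y) ↦ (x, x - y)`, an additive involution. -/
def tau (n : ℕ) : (ZMod n × ZMod n) ≃+ (ZMod n × ZMod n) where
  toFun p := (p.1, p.1 - p.2)
  invFun p := (p.1, p.1 - p.2)
  left_inv p := by simp
  right_inv p := by simp
  map_add' p q := by
    apply Prod.ext
    · rfl
    · show (p.1 + q.1) - (p.2 + q.2) = (p.1 - p.2) + (q.1 - q.2)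
      ring

lemma tau_mem_cayS (p : ZMod n × ZMod n) : p ∈ cayS n ↔ tau n p ∈ cayS n := by
  simp only [mem_cayS, tau, AddEquiv.coe_mk, Equiv.coe_fn_mk]
  constructor
  · rintro ⟨h0, h⟩
    refine ⟨?_, ?_⟩
    · simp only [Ne, Prod.ext_iff, Prod.fst_zero, Prod.snd_zero] at h0 ⊢
      intro ⟨h1, h2⟩
      exact h0 ⟨h1, by linear_combination h1 - h2⟩
    · rcases h with h | h | h
      · exact Or.inr (Or.inr (by rw [h, sub_zero]))
      · exact Or.inr (Or.inl h)
      · exact Or.inl (by rw [h, sub_self])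
  · rintro ⟨h0, h⟩
    refine ⟨?_, ?_⟩
    · simp only [Ne, Prod.ext_iff, Prod.fst_zero, Prod.snd_zero] at h0 ⊢
      intro ⟨h1, h2⟩
      exact h0 ⟨h1, by rw [h1, h2, sub_zero]⟩
    · rcases h with h | h | h
      · exact Or.inr (Or.inr (by linear_combination h))
      · exact Or.inr (Or.inl h)
      · exact Or.inl (by linear_combination h)

variable [NeZero n]

lemma ncard_horiz : {z : ZMod n × ZMod n | z.2 = 0}.ncard = n := by
  have h : {z : ZMod n × ZMod n | z.2 = 0} = (fun t : ZMod n => ((t, 0) : ZMod n × ZMod n)) '' Set.univ := by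
    ext ⟨x, y⟩
    simp [Prod.ext_iff, eq_comm]
  rw [h, Set.ncard_image_of_injective _ (fun a b hab => (Prod.mk.injEq _ _ _ _ ▸ hab).1),
    Set.ncard_univ, Nat.card_zmod]

lemma ncard_vert : {z : ZMod n × ZMod n | z.1 = 0}.ncard = n := by
  have h : {z : ZMod n × ZMod n | z.1 = 0} = (fun t : ZMod n => ((0, t) : ZMod n × ZMod n)) '' Set.univ := by
    ext ⟨x, y⟩
    simp [Prod.ext_iff, eq_comm]
  rw [h, Set.ncard_image_of_injective _ (fun a b hab => (Prod.mk.injEq _ _ _ _ ▸ hab).2),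
    Set.ncard_univ, Nat.card_zmod]

lemma ncard_diag : {z : ZMod n × ZMod n | z.1 = z.2}.ncard = n := by
  have h : {z : ZMod n × ZMod n | z.1 = z.2} = (fun t : ZMod n => ((t, t) : ZMod n × ZMod n)) '' Set.univ := by
    ext ⟨x, y⟩
    constructor
    · intro hxy
      exact ⟨x, trivial, by simp_all⟩
    · rintro ⟨t, -, ht⟩
      simp only [Prod.mk.injEq] at ht
      simp [← ht.1, ← ht.2]
  rw [h, Set.ncard_image_of_injective _ (fun a b hab => (Prod.mk.injEq _ _ _ _ ▸ hab).1),
    Set.ncard_univ, Nat.card_zmod]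

lemma ncard_cayS (hn : 1 ≤ n) : (cayS n).ncard = 3 * n - 3 := by
  have hdecomp : cayS n =
      ({z : ZMod n × ZMod n | z.2 = 0} \ {0}) ∪
        (({z : ZMod n × ZMod n | z.1 = 0} \ {0}) ∪ ({z : ZMod n × ZMod n | z.1 = z.2} \ {0})) := by
    ext z
    simp only [mem_cayS, Set.mem_union, Set.mem_diff, Set.mem_setOf_eq, Set.mem_singleton_iff]
    tauto
  have h0h : (0 : ZMod n × ZMod n) ∈ {z : ZMod n × ZMod n | z.2 = 0} := rfl
  have h0v : (0 : ZMod n × ZMod n) ∈ {z : ZMod n × ZMod n | z.1 = 0} := rfl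
  have h0d : (0 : ZMod n × ZMod n) ∈ {z : ZMod n × ZMod n | z.1 = z.2} := rfl
  have hd1 : Disjoint ({z : ZMod n × ZMod n | z.1 = 0} \ {0})
      ({z : ZMod n × ZMod n | z.1 = z.2} \ {0}) := by
    rw [Set.disjoint_left]
    rintro z ⟨h1, hz0⟩ ⟨h2, -⟩
    apply hz0
    simp only [Set.mem_setOf_eq] at h1 h2
    simp only [Set.mem_singleton_iff, Prod.ext_iff, Prod.fst_zero, Prod.snd_zero]
    exact ⟨h1, by rw [← h2, h1]⟩
  have hd2 : Disjoint ({z : ZMod n × ZMod n | z.2 = 0} \ {0})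
      (({z : ZMod n × ZMod n | z.1 = 0} \ {0}) ∪ ({z : ZMod n × ZMod n | z.1 = z.2} \ {0})) := by
    rw [Set.disjoint_left]
    rintro z ⟨h1, hz0⟩ (⟨h2, -⟩ | ⟨h2, -⟩) <;>
        apply hz0 <;>
        simp only [Set.mem_setOf_eq] at h1 h2 <;>
        simp only [Set.mem_singleton_iff, Prod.ext_iff, Prod.fst_zero, Prod.snd_zero]
    · exact ⟨h2, h1⟩
    · exact ⟨h2.trans h1, h1⟩
  rw [hdecomp, Set.ncard_union_eq hd2, Set.ncard_union_eq hd1,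
    Set.ncard_diff_singleton_of_mem h0h, Set.ncard_diff_singleton_of_mem h0v,
    Set.ncard_diff_singleton_of_mem h0d, ncard_horiz, ncard_vert, ncard_diag]
  omega

lemma neighborSet_zero : (Gamma n).neighborSet 0 = cayS n := by
  ext z
  simp only [SimpleGraph.mem_neighborSet, gamma_adj, zero_sub, neg_mem_cayS]
  constructor
  · exact fun h => h.2
  · exact fun h => ⟨fun h0 => h.1 h0.symm, h⟩

lemma card_neighborSet (v : ZMod n × ZMod n) (hn : 1 ≤ n) :
    Nat.card ((Gamma n).neighborSet v) = 3 * n - 3 := by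
  have he : ∀ x y : ZMod n × ZMod n,
      (Gamma n).Adj x y ↔ (Gamma n).Adj (Equiv.subRight v x) (Equiv.subRight v y) := by
    intro x y
    simp only [gamma_adj, Equiv.subRight_apply, sub_sub_sub_cancel_right, Ne, sub_left_inj]
  have hcong : Nat.card ((Gamma n).neighborSet v) = Nat.card ((Gamma n).neighborSet 0) := by
    refine Nat.card_congr ((Equiv.subRight v).subtypeEquiv fun z => ?_)
    simp only [SimpleGraph.mem_neighborSet]
    rw [he v z]
    simp only [Equiv.subRight_apply, sub_self]
  rw [hcong, neighborSet_zero, Nat.card_coe_set_eq, ncard_cayS hn]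

lemma mem_CN {v z : ZMod n × ZMod n} :
    z ∈ (Gamma n).commonNeighbors v 0 ↔
      z ≠ 0 ∧ z ≠ v ∧ (z.2 = 0 ∨ z.1 = 0 ∨ z.1 = z.2) ∧
        ((v - z).2 = 0 ∨ (v - z).1 = 0 ∨ (v - z).1 = (v - z).2) := by
  simp only [SimpleGraph.mem_commonNeighbors, gamma_adj, zero_sub, neg_mem_cayS]
  simp only [mem_cayS]
  constructor
  · rintro ⟨⟨hvz, -, h1⟩, h0z, hz0, h2⟩
    exact ⟨hz0, fun h => hvz h.symm, h2, h1⟩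
  · rintro ⟨hz0, hzv, h2, h1⟩
    exact ⟨⟨fun h => hzv h.symm, sub_ne_zero_of_ne (fun h => hzv h.symm), h1⟩,
      fun h => hz0 h.symm, ⟨hz0, h2⟩⟩

/-- Common neighbours of `(c,0)` and `0`, for `c ≠ 0`. -/
lemma cardA (hn : 4 ≤ n) {c : ZMod n} (hc : c ≠ 0) :
    Nat.card ((Gamma n).commonNeighbors ((c, 0) : ZMod n × ZMod n) 0) = n := by
  have hset : (Gamma n).commonNeighbors ((c, 0) : ZMod n × ZMod n) 0 =
      insert ((0 : ZMod n), -c) (insert ((c : ZMod n), c)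
        ({z : ZMod n × ZMod n | z.2 = 0} \ {((0 : ZMod n), (0 : ZMod n)), (c, 0)})) := by
    ext ⟨x, y⟩
    rw [mem_CN]
    simp only [Prod.mk_sub_mk, Ne, Prod.mk.injEq, Prod.mk_eq_zero, zero_sub,
      Set.mem_insert_iff, Set.mem_diff, Set.mem_setOf_eq, Set.mem_singleton_iff, not_or]
    constructor
    · rintro ⟨hz0, hzv, h2 | h2 | h2, h1 | h1 | h1⟩
      · exact Or.inr (Or.inr ⟨h2, hz0, hzv⟩)
      · exact absurd ⟨(sub_eq_zero.mp h1).symm, h2⟩ hzv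
      · exact absurd ⟨(by linear_combination -h1 + h2 : x = c), h2⟩ hzv
      · exact absurd ⟨h2, (by linear_combination -h1 : y = 0)⟩ hz0
      · exact absurd (by linear_combination h1 + h2 : c = 0) hc
      · exact Or.inl ⟨h2, by linear_combination h1 + h2⟩
      · have hy : y = 0 := by linear_combination -h1
        exact absurd ⟨h2.trans hy, hy⟩ hz0
      · exact Or.inr (Or.inl ⟨(by linear_combination -h1 : x = c),
          by linear_combination -h1 - h2⟩)
      · exact absurd (by linear_combination h1 + h2 : c = 0) hc
    · rintro (⟨hx, hy⟩ | ⟨hx, hy⟩ | ⟨hy, h1', h2'⟩)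
      · subst hx; subst hy
        refine ⟨?_, ?_, Or.inr (Or.inl rfl), Or.inr (Or.inr (by ring))⟩
        · rintro ⟨-, h⟩; exact hc (neg_eq_zero.mp h)
        · rintro ⟨h, -⟩; exact hc h.symm
      · subst hx; subst hy
        refine ⟨?_, ?_, Or.inr (Or.inr rfl), Or.inr (Or.inl (by ring))⟩
        · rintro ⟨h, -⟩; exact hc h
        · rintro ⟨-, h⟩; exact hc h
      · refine ⟨h1', h2', Or.inl hy, Or.inl (by rw [hy, neg_zero])⟩
  rw [Nat.card_coe_set_eq, hset]
  have hsub : ({((0 : ZMod n), (0 : ZMod n)), (c, 0)} : Set (ZMod n × ZMod n)) ⊆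
      {z : ZMod n × ZMod n | z.2 = 0} := by
    rintro z (hz | hz) <;> · rw [hz]; rfl
  have hpair : (({((0 : ZMod n), (0 : ZMod n)), (c, 0)} : Set (ZMod n × ZMod n))).ncard = 2 :=
    Set.ncard_pair (fun h => hc (congrArg Prod.fst h).symm)
  have hdiff : ({z : ZMod n × ZMod n | z.2 = 0} \
      {((0 : ZMod n), (0 : ZMod n)), (c, 0)}).ncard = n - 2 := by
    rw [Set.ncard_diff hsub, hpair, ncard_horiz]
  have hcc : ((c : ZMod n), c) ∉
      ({z : ZMod n × ZMod n | z.2 = 0} \ {((0 : ZMod n), (0 : ZMod n)), (c, 0)}) := by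
    rintro ⟨h, -⟩; exact hc h
  have h0c : ((0 : ZMod n), -c) ∉ insert ((c : ZMod n), c)
      ({z : ZMod n × ZMod n | z.2 = 0} \ {((0 : ZMod n), (0 : ZMod n)), (c, 0)}) := by
    rintro (h | ⟨h, -⟩)
    · exact hc (congrArg Prod.fst h).symm
    · exact hc (neg_eq_zero.mp h)
  rw [Set.ncard_insert_of_notMem h0c, Set.ncard_insert_of_notMem hcc, hdiff]
  omega

/-- Common neighbours of a non-adjacent pair `(a,b)`, `0`. -/
lemma cardB (hn : 4 ≤ n) {a b : ZMod n} (ha : a ≠ 0) (hb : b ≠ 0) (hab : a ≠ b) :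
    Nat.card ((Gamma n).commonNeighbors ((a, b) : ZMod n × ZMod n) 0) = 6 := by
  have hba : b - a ≠ 0 := fun h => hab (by linear_combination -h)
  have hab2 : a - b ≠ 0 := fun h => hab (by linear_combination h)
  have hset : (Gamma n).commonNeighbors ((a, b) : ZMod n × ZMod n) 0 =
      {((a : ZMod n), (0 : ZMod n)), (a - b, 0), (0, b), (0, b - a), (b, b), (a, a)} := by
    ext ⟨x, y⟩
    rw [mem_CN]
    simp only [Prod.mk_sub_mk, Ne, Prod.mk.injEq, Prod.mk_eq_zero,
      Set.mem_insert_iff, Set.mem_singleton_iff, not_or]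
    constructor
    · rintro ⟨hz0, hzv, h2 | h2 | h2, h1 | h1 | h1⟩
      · exact absurd (by linear_combination h1 + h2 : b = 0) hb
      · exact Or.inl ⟨by linear_combination -h1, h2⟩
      · exact Or.inr (Or.inl ⟨by linear_combination h2 - h1, h2⟩)
      · exact Or.inr (Or.inr (Or.inl ⟨h2, by linear_combination -h1⟩))
      · exact absurd (by linear_combination h1 + h2 : a = 0) ha
      · exact Or.inr (Or.inr (Or.inr (Or.inl ⟨h2, by linear_combination h1 + h2⟩)))
      · exact Or.inr (Or.inr (Or.inr (Or.inr (Or.inl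
          ⟨by linear_combination h2 - h1, by linear_combination -h1⟩))))
      · exact Or.inr (Or.inr (Or.inr (Or.inr (Or.inr
          ⟨by linear_combination -h1, by linear_combination -h1 - h2⟩))))
      · exact absurd (by linear_combination h1 + h2 : a = b) hab
    · rintro (⟨hx, hy⟩ | ⟨hx, hy⟩ | ⟨hx, hy⟩ | ⟨hx, hy⟩ | ⟨hx, hy⟩ | ⟨hx, hy⟩) <;>
        subst hx <;> subst hy
      · exact ⟨fun ⟨h, _⟩ => ha h, fun ⟨_, h⟩ => hb h.symm, Or.inl rfl,
          Or.inr (Or.inl (by ring))⟩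
      · exact ⟨fun ⟨h, _⟩ => hab2 h, fun ⟨_, h⟩ => hb h.symm, Or.inl rfl,
          Or.inr (Or.inr (by ring))⟩
      · exact ⟨fun ⟨_, h⟩ => hb h, fun ⟨h, _⟩ => ha h.symm, Or.inr (Or.inl rfl),
          Or.inl (by ring)⟩
      · exact ⟨fun ⟨_, h⟩ => hba h, fun ⟨h, _⟩ => ha h.symm, Or.inr (Or.inl rfl),
          Or.inr (Or.inr (by ring))⟩
      · exact ⟨fun ⟨h, _⟩ => hb h, fun ⟨h, _⟩ => hab h.symm, Or.inr (Or.inr rfl),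
          Or.inl (by ring)⟩
      · exact ⟨fun ⟨h, _⟩ => ha h, fun ⟨_, h⟩ => hab h, Or.inr (Or.inr rfl),
          Or.inr (Or.inl (by ring))⟩
  rw [Nat.card_coe_set_eq, hset]
  have h1 : ((a : ZMod n), (0 : ZMod n)) ∉
      ({(a - b, 0), (0, b), (0, b - a), (b, b), (a, a)} : Set (ZMod n × ZMod n)) := by
    simp only [Set.mem_insert_iff, Set.mem_singleton_iff, Prod.mk.injEq, not_or]
    refine ⟨?_, ?_, ?_, ?_, ?_⟩
    · rintro ⟨h, -⟩; exact hb (by linear_combination h)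
    · rintro ⟨h, -⟩; exact ha h
    · rintro ⟨h, -⟩; exact ha h
    · rintro ⟨-, h⟩; exact hb h.symm
    · rintro ⟨-, h⟩; exact ha h.symm
  have h2 : ((a - b : ZMod n), (0 : ZMod n)) ∉
      ({(0, b), (0, b - a), (b, b), (a, a)} : Set (ZMod n × ZMod n)) := by
    simp only [Set.mem_insert_iff, Set.mem_singleton_iff, Prod.mk.injEq, not_or]
    refine ⟨?_, ?_, ?_, ?_⟩
    · rintro ⟨h, -⟩; exact hab2 h
    · rintro ⟨h, -⟩; exact hab2 h
    · rintro ⟨-, h⟩; exact hb h.symm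
    · rintro ⟨-, h⟩; exact ha h.symm
  have h3 : ((0 : ZMod n), b) ∉
      ({(0, b - a), (b, b), (a, a)} : Set (ZMod n × ZMod n)) := by
    simp only [Set.mem_insert_iff, Set.mem_singleton_iff, Prod.mk.injEq, not_or]
    refine ⟨?_, ?_, ?_⟩
    · rintro ⟨-, h⟩; exact ha (by linear_combination h)
    · rintro ⟨h, -⟩; exact hb h.symm
    · rintro ⟨h, -⟩; exact ha h.symm
  have h4 : ((0 : ZMod n), b - a) ∉ ({(b, b), (a, a)} : Set (ZMod n × ZMod n)) := by
    simp only [Set.mem_insert_iff, Set.mem_singleton_iff, Prod.mk.injEq, not_or]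
    refine ⟨?_, ?_⟩
    · rintro ⟨h, -⟩; exact hb h.symm
    · rintro ⟨h, -⟩; exact ha h.symm
  have h5 : ((b : ZMod n), b) ∉ ({(a, a)} : Set (ZMod n × ZMod n)) := by
    simp only [Set.mem_singleton_iff, Prod.mk.injEq]
    rintro ⟨h, -⟩; exact hab h.symm
  rw [Set.ncard_insert_of_notMem h1, Set.ncard_insert_of_notMem h2,
    Set.ncard_insert_of_notMem h3, Set.ncard_insert_of_notMem h4,
    Set.ncard_insert_of_notMem h5, Set.ncard_singleton]

end Aux

/-- For `n ≥ 4`, `Γ(n)` is strongly regular with parameters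
`(n², 3n-3, n, 6)`. -/
theorem Gamma_isSRGWith (n : ℕ) (hn : 4 ≤ n) :
    haveI : NeZero n := ⟨by omega⟩
    haveI : DecidableRel (Gamma n).Adj := Classical.decRel _
    (Gamma n).IsSRGWith (n ^ 2) (3 * n - 3) n 6 := by
  haveI : NeZero n := ⟨by omega⟩
  letI : DecidableRel (Gamma n).Adj := Classical.decRel _
  refine @SimpleGraph.IsSRGWith.mk _ _ _ (Classical.decRel _) _ _ _ _ ?_ ?_ ?_ ?_
  · rw [Fintype.card_prod, ZMod.card, sq]
  · intro v
    have h1 : (Gamma n).degree v = Fintype.card ((Gamma n).neighborSet v) :=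
      ((Gamma n).card_neighborSet_eq_degree v).symm
    rw [h1, Fintype.card_eq_nat_card]
    exact card_neighborSet v (by omega)
  · intro v w hvw
    rw [Fintype.card_eq_nat_card, card_CN_translate]
    obtain ⟨hne, hd0, hL⟩ := hvw
    set d := v - w with hd
    rcases hL with h2 | h1 | hdg
    · have hdeq : d = (d.1, (0 : ZMod n)) := Prod.ext rfl h2
      have hd1 : d.1 ≠ 0 := fun h => hd0 (Prod.ext h h2)
      rw [hdeq]
      exact cardA hn hd1
    · have hd2 : d.2 ≠ 0 := fun h => hd0 (Prod.ext h1 h)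
      have hdeq : d = (AddEquiv.prodComm ((d.2, (0 : ZMod n)) : ZMod n × ZMod n)) :=
        Prod.ext h1 rfl
      have hkey := card_CN_addEquiv (n := n) AddEquiv.prodComm swap_mem_cayS ((d.2, 0) : ZMod n × ZMod n)
      rw [hdeq, hkey]
      exact cardA hn hd2
    · have hd1 : d.1 ≠ 0 := fun h => hd0 (Prod.ext h (by rw [← hdg]; exact h))
      have hdeq : d = tau n ((d.1, (0 : ZMod n)) : ZMod n × ZMod n) := by
        refine Prod.ext rfl ?_
        show d.2 = d.1 - 0
        rw [sub_zero, hdg]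
      have hkey := card_CN_addEquiv (n := n) (tau n) tau_mem_cayS ((d.1, 0) : ZMod n × ZMod n)
      rw [hdeq, hkey]
      exact cardA hn hd1
  · intro v w hvw hna
    rw [Fintype.card_eq_nat_card, card_CN_translate]
    have hd0 : v - w ≠ 0 := sub_ne_zero_of_ne hvw
    have hL : ¬((v - w).2 = 0 ∨ (v - w).1 = 0 ∨ (v - w).1 = (v - w).2) := by
      intro h
      exact hna ⟨hvw, hd0, h⟩
    push_neg at hL
    obtain ⟨h2, h1, h12⟩ := hL
    have hdeq : v - w = (((v - w).1 : ZMod n), (v - w).2) := rfl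
    rw [hdeq]
    exact cardB hn h1 h2 h12
end

section
/- Let n ≥ 4 and let f be an automorphism of Γ(n) with f(0,0) = (0,0). Then f permutes the three cliques C₁, C₂, C₃: for every k ∈ {1,2,3} there exists ℓ ∈ {1,2,3} such that the image f(C_k) equals C_ℓ. -/
/-- `C₁ = {(i,0) : 1 ≤ i ≤ n-1}`. -/
def C1 (n : ℕ) : Set (ZMod n × ZMod n) := {p | p.2 = 0 ∧ p.1 ≠ 0}

/-- `C₂ = {(0,i) : 1 ≤ i ≤ n-1}`. -/
def C2 (n : ℕ) : Set (ZMod n × ZMod n) := {p | p.1 = 0 ∧ p.2 ≠ 0}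

/-- `C₃ = {(i,i) : 1 ≤ i ≤ n-1}`. -/
def C3 (n : ℕ) : Set (ZMod n × ZMod n) := {p | p.1 = p.2 ∧ p.1 ≠ 0}

namespace GammaAux

variable {n : ℕ}

lemma mem_cayS {p : ZMod n × ZMod n} :
    p ∈ cayS n ↔ p ≠ 0 ∧ (p.2 = 0 ∨ p.1 = 0 ∨ p.1 = p.2) := Iff.rfl

lemma gamma_adj {x y : ZMod n × ZMod n} :
    (Gamma n).Adj x y ↔ x ≠ y ∧ x - y ∈ cayS n := Iff.rfl

lemma mem_cayS_iff_adj {s : ZMod n × ZMod n} :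
    s ∈ cayS n ↔ (Gamma n).Adj s (0, 0) := by
  rw [gamma_adj]
  constructor
  · intro hs
    refine ⟨by simpa [Prod.mk_zero_zero] using hs.1, by simpa [Prod.mk_zero_zero] using hs⟩
  · intro h
    simpa [Prod.mk_zero_zero] using h.2

def Tadj (n : ℕ) (u v : ZMod n × ZMod n) : Prop :=
  u ∈ cayS n ∧ v ∈ cayS n ∧ (Gamma n).Adj u v ∧
    ∃ w ∈ cayS n, w ≠ u ∧ w ≠ v ∧ (Gamma n).Adj w u ∧ (Gamma n).Adj w v

lemma mapS (f : Gamma n ≃g Gamma n) (hf : f (0, 0) = (0, 0)) {s : ZMod n × ZMod n}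
    (hs : s ∈ cayS n) : f s ∈ cayS n := by
  rw [mem_cayS_iff_adj] at hs ⊢
  rw [← hf]
  exact f.map_adj_iff.mpr hs

lemma Tadj_map (f : Gamma n ≃g Gamma n) (hf : f (0, 0) = (0, 0)) {u v : ZMod n × ZMod n}
    (h : Tadj n u v) : Tadj n (f u) (f v) := by
  obtain ⟨hu, hv, huv, w, hw, hwu, hwv, h1, h2⟩ := h
  exact ⟨mapS f hf hu, mapS f hf hv, f.map_adj_iff.mpr huv, f w, mapS f hf hw,
    fun e => hwu (f.injective e), fun e => hwv (f.injective e),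
    f.map_adj_iff.mpr h1, f.map_adj_iff.mpr h2⟩

lemma symm_fix (f : Gamma n ≃g Gamma n) (hf : f (0, 0) = (0, 0)) :
    f.symm (0, 0) = (0, 0) := by
  conv_lhs => rw [← hf]
  exact f.symm_apply_apply _

lemma exists_ne3 (hn : 4 ≤ n) (a b c : ZMod n) : ∃ d : ZMod n, d ≠ a ∧ d ≠ b ∧ d ≠ c := by
  haveI : NeZero n := ⟨by omega⟩
  by_contra h
  push_neg at h
  have hsub : (Finset.univ : Finset (ZMod n)) ⊆ {a, b, c} := by
    intro d _
    by_cases h1 : d = a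
    · simp [h1]
    by_cases h2 : d = b
    · simp [h2]
    simp [h d h1 h2]
  have hle := Finset.card_le_card hsub
  have h3 : ({a, b, c} : Finset (ZMod n)).card ≤ 3 := by
    apply le_trans (Finset.card_insert_le _ _)
    have := Finset.card_insert_le b ({c} : Finset (ZMod n))
    simp at this ⊢
    omega
  rw [Finset.card_univ, ZMod.card] at hle
  omega

lemma one_ne (hn : 4 ≤ n) : (1 : ZMod n) ≠ 0 := by
  haveI : NeZero n := ⟨by omega⟩
  intro h
  have h1 := Nat.le_of_dvd one_pos
    ((ZMod.natCast_eq_zero_iff 1 n).mp (by exact_mod_cast h))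
  omega

lemma two_ne (hn : 4 ≤ n) : (1 : ZMod n) + 1 ≠ 0 := by
  haveI : NeZero n := ⟨by omega⟩
  intro h
  have h2 : ((2 : ℕ) : ZMod n) = 0 := by push_cast; linear_combination h
  have h3 := Nat.le_of_dvd two_pos ((ZMod.natCast_eq_zero_iff 2 n).mp h2)
  omega

lemma memS_C1 {b : ZMod n} (hb : b ≠ 0) : ((b, 0) : ZMod n × ZMod n) ∈ cayS n :=
  ⟨by simp [Prod.ext_iff, hb], Or.inl rfl⟩

lemma adj_mk {a1 a2 b1 b2 : ZMod n} (h : ((a1 - b1, a2 - b2) : ZMod n × ZMod n) ∈ cayS n) :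
    (Gamma n).Adj (a1, a2) (b1, b2) := by
  refine ⟨fun he => ?_, ?_⟩
  · rw [Prod.mk.injEq] at he
    exact h.1 (by simp [Prod.ext_iff, he.1, he.2])
  · simpa [gamma_adj, Prod.mk_sub_mk] using h

lemma classify {b : ZMod n} (hb : b ≠ 0) {w : ZMod n × ZMod n} (hw : w ∈ cayS n)
    (hadj : (Gamma n).Adj (b, 0) w) : w.2 = 0 ∨ w = (0, -b) ∨ w = (b, b) := by
  obtain ⟨w1, w2⟩ := w
  obtain ⟨hw0, hw⟩ := hw
  obtain ⟨hne, hd0, hd⟩ := hadj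
  simp only [Prod.mk_sub_mk, Prod.ext_iff] at hd ⊢
  simp only at hw hd ⊢
  rcases hw with h | h | h
  · exact Or.inl h
  · rcases hd with g | g | g
    · exact Or.inl (by linear_combination -g)
    · exact absurd (by linear_combination g + h) hb
    · exact Or.inr (Or.inl ⟨h, by linear_combination g + h⟩)
  · rcases hd with g | g | g
    · exact Or.inl (by linear_combination -g)
    · exact Or.inr (Or.inr ⟨by linear_combination -g, by linear_combination -g - h⟩)
    · exact absurd (by linear_combination g + h) hb

lemma tri_line (hn : 4 ≤ n) {b c : ZMod n} (hb : b ≠ 0) (hc : c ≠ 0) (hbc : b ≠ c) :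
    Tadj n (b, 0) (c, 0) := by
  obtain ⟨d, hd0, hdb, hdc⟩ := exists_ne3 hn 0 b c
  refine ⟨memS_C1 hb, memS_C1 hc, adj_mk ⟨?_, Or.inl (by simp)⟩, (d, 0), memS_C1 hd0, ?_, ?_,
    adj_mk ⟨?_, Or.inl (by simp)⟩, adj_mk ⟨?_, Or.inl (by simp)⟩⟩ <;>
    simp [Prod.ext_iff, sub_eq_zero, hbc, hdb, hdc]

lemma tri_cross_a {b : ZMod n} (hb : b ≠ 0) (h2 : b + b = 0) : Tadj n (b, 0) (0, -b) := by
  have hmb : -b ≠ 0 := fun h => hb (by linear_combination -h)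
  refine ⟨memS_C1 hb, ⟨by simp [Prod.ext_iff, hmb], Or.inr (Or.inl rfl)⟩,
    adj_mk ⟨by simp [Prod.ext_iff, hb], Or.inr (Or.inr (by simp))⟩,
    (b, b), ⟨by simp [Prod.ext_iff, hb], Or.inr (Or.inr rfl)⟩,
    by simp [Prod.ext_iff, hb], by simp [Prod.ext_iff, hb],
    adj_mk ⟨by simp [Prod.ext_iff, hb], Or.inr (Or.inl (by simp))⟩,
    adj_mk ⟨by simp [Prod.ext_iff, hb], Or.inl (by linear_combination h2)⟩⟩

lemma tri_cross_b {b : ZMod n} (hb : b ≠ 0) (h2 : b + b = 0) : Tadj n (b, 0) (b, b) := by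
  have hmb : -b ≠ 0 := fun h => hb (by linear_combination -h)
  refine ⟨memS_C1 hb, ⟨by simp [Prod.ext_iff, hb], Or.inr (Or.inr rfl)⟩,
    adj_mk ⟨by simp [Prod.ext_iff, hmb], Or.inr (Or.inl (by simp))⟩,
    (0, -b), ⟨by simp [Prod.ext_iff, hmb], Or.inr (Or.inl rfl)⟩,
    by simp [Prod.ext_iff, hmb], fun h => hb ((Prod.ext_iff.mp h).1).symm,
    adj_mk ⟨by simp [Prod.ext_iff, hmb], Or.inr (Or.inr (by ring))⟩,
    adj_mk ⟨by simp [Prod.ext_iff, hmb], Or.inl (by linear_combination -h2)⟩⟩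

lemma notri_a {b : ZMod n} (hb : b ≠ 0) (h2 : b + b ≠ 0) : ¬ Tadj n (b, 0) (0, -b) := by
  rintro ⟨-, -, -, ⟨w1, w2⟩, ⟨hw0, hw⟩, hwu, hwv, ⟨-, -, h1⟩, ⟨-, -, hc⟩⟩
  have hw0' : ¬(w1 = 0 ∧ w2 = 0) := by simpa [Prod.ext_iff] using hw0
  have hwu' : ¬(w1 = b ∧ w2 = 0) := by simpa [Prod.ext_iff] using hwu
  have hwv' : ¬(w1 = 0 ∧ w2 = -b) := by simpa [Prod.ext_iff] using hwv
  simp only [Prod.mk_sub_mk, sub_zero, sub_neg_eq_add] at h1 hc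
  simp only at h1 hc hw
  rcases hw with h | h | h
  · rcases hc with g | g | g
    · exact hb (by linear_combination g - h)
    · exact hw0' ⟨g, h⟩
    · exact hwu' ⟨by linear_combination g + h, h⟩
  · rcases h1 with g | g | g
    · exact hw0' ⟨h, g⟩
    · exact hb (by linear_combination h - g)
    · exact hwv' ⟨h, by linear_combination -g + h⟩
  · rcases h1 with g | g | g
    · exact hw0' ⟨by linear_combination h + g, g⟩
    · rcases hc with k | k | k
      · exact h2 (by linear_combination k - g + h)
      · exact hb (by linear_combination k - g)
      · exact hb (by linear_combination h - k)
    · exact hb (by linear_combination h - g)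

lemma notri_b {b : ZMod n} (hb : b ≠ 0) (h2 : b + b ≠ 0) : ¬ Tadj n (b, 0) (b, b) := by
  rintro ⟨-, -, -, ⟨w1, w2⟩, ⟨hw0, hw⟩, hwu, hwv, ⟨-, -, h1⟩, ⟨-, -, hc⟩⟩
  have hw0' : ¬(w1 = 0 ∧ w2 = 0) := by simpa [Prod.ext_iff] using hw0
  have hwu' : ¬(w1 = b ∧ w2 = 0) := by simpa [Prod.ext_iff] using hwu
  have hwv' : ¬(w1 = b ∧ w2 = b) := by simpa [Prod.ext_iff] using hwv
  simp only [Prod.mk_sub_mk, sub_zero] at h1 hc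
  simp only at h1 hc hw
  rcases hw with h | h | h
  · rcases hc with g | g | g
    · exact hb (by linear_combination h - g)
    · exact hwu' ⟨by linear_combination g, h⟩
    · exact hw0' ⟨by linear_combination g + h, h⟩
  · rcases h1 with g | g | g
    · exact hw0' ⟨h, g⟩
    · exact hb (by linear_combination h - g)
    · rcases hc with k | k | k
      · exact h2 (by linear_combination -k - g + h)
      · exact hb (by linear_combination h - k)
      · exact hb (by linear_combination k - g)
  · rcases h1 with g | g | g
    · exact hw0' ⟨by linear_combination h + g, g⟩
    · exact hwv' ⟨by linear_combination g, by linear_combination g - h⟩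
    · exact hb (by linear_combination h - g)

lemma Tnbr_C1 {b : ZMod n} (hb : b ≠ 0) (h2 : b + b ≠ 0) {w : ZMod n × ZMod n}
    (h : Tadj n (b, 0) w) : w ∈ C1 n ∧ w ≠ (b, 0) := by
  have hvS := h.2.1
  have hadj := h.2.2.1
  rcases classify hb hvS hadj with hc | hc | hc
  · refine ⟨⟨hc, fun h0 => hvS.1 (by rw [Prod.ext_iff]; exact ⟨h0, hc⟩)⟩,
      fun he => hadj.1 he.symm⟩
  · rw [hc] at h
    exact absurd h (notri_a hb h2)
  · rw [hc] at h
    exact absurd h (notri_b hb h2)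

lemma master (hn : 4 ≤ n) (h : Gamma n ≃g Gamma n) (h0 : h (0, 0) = (0, 0))
    (hv : h (1, 0) ∈ C1 n) : ⇑h '' C1 n = C1 n := by
  have h1 : (1 : ZMod n) ≠ 0 := one_ne hn
  have h11 : (1 : ZMod n) + 1 ≠ 0 := two_ne hn
  have hv2 : (h (1, 0)).2 = 0 := hv.1
  have hb : (h (1, 0)).1 ≠ 0 := hv.2
  have hvpair : h (1, 0) = ((h (1, 0)).1, 0) := Prod.ext_iff.mpr ⟨rfl, hv2⟩
  have hS11 : ((1, 1) : ZMod n × ZMod n) ∈ cayS n :=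
    ⟨by simp [Prod.ext_iff, h1], Or.inr (Or.inr rfl)⟩
  have hw0S : h (1, 1) ∈ cayS n := mapS h h0 hS11
  have hAdj : (Gamma n).Adj ((1 : ZMod n), (0 : ZMod n)) (1, 1) :=
    adj_mk ⟨by simp [Prod.ext_iff, h1], Or.inr (Or.inl (by simp))⟩
  have hAdj' : (Gamma n).Adj (h (1, 0)) (h (1, 1)) := h.map_adj_iff.mpr hAdj
  have hTn : ¬ Tadj n (1, 0) (1, 1) := notri_b h1 h11
  have hTnv : ¬ Tadj n (h (1, 0)) (h (1, 1)) := by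
    intro t
    have t2 := Tadj_map h.symm (symm_fix h h0) t
    simp only [RelIso.symm_apply_apply] at t2
    exact hTn t2
  have h2b : (h (1, 0)).1 + (h (1, 0)).1 ≠ 0 := by
    intro heq
    have hAdjp : (Gamma n).Adj ((h (1, 0)).1, 0) (h (1, 1)) := by rw [← hvpair]; exact hAdj'
    rcases classify hb hw0S hAdjp with hc | hc | hc
    · have hc1 : (h (1, 1)).1 ≠ 0 := fun e =>
        hw0S.1 (by rw [Prod.ext_iff]; exact ⟨e, hc⟩)
      have hcpair : h (1, 1) = ((h (1, 1)).1, 0) := Prod.ext_iff.mpr ⟨rfl, hc⟩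
      have hne : (h (1, 0)).1 ≠ (h (1, 1)).1 := by
        intro e
        apply hAdj'.1
        rw [hvpair, hcpair, e]
      apply hTnv
      rw [hvpair, hcpair]
      exact tri_line hn hb hc1 hne
    · apply hTnv
      rw [hvpair, hc]
      exact tri_cross_a hb heq
    · apply hTnv
      rw [hvpair, hc]
      exact tri_cross_b hb heq
  ext w
  constructor
  · rintro ⟨x, hx, rfl⟩
    by_cases hx1 : x = (1, 0)
    · rw [hx1]; exact hv
    · have hxpair : x = (x.1, 0) := Prod.ext_iff.mpr ⟨rfl, hx.1⟩
      have hT : Tadj n ((1 : ZMod n), (0 : ZMod n)) x := by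
        rw [hxpair]
        exact tri_line hn h1 hx.2 (fun e => hx1 (Prod.ext_iff.mpr ⟨e.symm, hx.1⟩))
      have hT2 : Tadj n (h (1, 0)) (h x) := Tadj_map h h0 hT
      rw [hvpair] at hT2
      exact (Tnbr_C1 hb h2b hT2).1
  · intro hw
    by_cases hwv : w = h (1, 0)
    · exact ⟨(1, 0), ⟨rfl, h1⟩, hwv.symm⟩
    · have hwpair : w = (w.1, 0) := Prod.ext_iff.mpr ⟨rfl, hw.1⟩
      have hne : (h (1, 0)).1 ≠ w.1 := by
        intro e
        exact hwv (Prod.ext_iff.mpr ⟨e.symm, by rw [hw.1, hv2]⟩)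
      have hT : Tadj n (h (1, 0)) w := by
        rw [hvpair, hwpair]
        exact tri_line hn hb hw.2 hne
      have hT2 := Tadj_map h.symm (symm_fix h h0) hT
      simp only [RelIso.symm_apply_apply] at hT2
      have hmem := Tnbr_C1 h1 h11 hT2
      exact ⟨h.symm w, hmem.1, by simp⟩

end GammaAux

namespace GammaAux
variable {n : ℕ}

lemma memS_swap {p : ZMod n × ZMod n} (hp : p ∈ cayS n) : p.swap ∈ cayS n := by
  obtain ⟨p1, p2⟩ := p
  obtain ⟨h0, h⟩ := hp
  have h0' : ¬(p1 = 0 ∧ p2 = 0) := by simpa [Prod.ext_iff] using h0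
  refine ⟨by simp [Prod.ext_iff]; tauto, ?_⟩
  simp only [Prod.swap_prod_mk] at *
  rcases h with h | h | h
  · exact Or.inr (Or.inl h)
  · exact Or.inl h
  · exact Or.inr (Or.inr h.symm)

def sigmaIso (n : ℕ) : Gamma n ≃g Gamma n where
  toEquiv := Equiv.prodComm (ZMod n) (ZMod n)
  map_rel_iff' := by
    intro x y
    simp only [Equiv.prodComm_apply]
    constructor
    · rintro ⟨hne, hmem⟩
      refine ⟨fun e => hne (by rw [e]), ?_⟩
      have : (x.swap - y.swap).swap ∈ cayS n := memS_swap hmem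
      simpa [Prod.ext_iff] using this
    · rintro ⟨hne, hmem⟩
      refine ⟨fun e => hne (Prod.swap_injective e), ?_⟩
      have : (x - y).swap ∈ cayS n := memS_swap hmem
      simpa [Prod.ext_iff] using this

def tauEquiv (n : ℕ) : (ZMod n × ZMod n) ≃ (ZMod n × ZMod n) where
  toFun p := (p.1, p.1 - p.2)
  invFun p := (p.1, p.1 - p.2)
  left_inv p := by simp
  right_inv p := by simp

lemma memS_tau {p : ZMod n × ZMod n} (hp : p ∈ cayS n) : ((p.1, p.1 - p.2) : ZMod n × ZMod n) ∈ cayS n := by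
  obtain ⟨p1, p2⟩ := p
  obtain ⟨h0, h⟩ := hp
  have h0' : ¬(p1 = 0 ∧ p2 = 0) := by simpa [Prod.ext_iff] using h0
  refine ⟨?_, ?_⟩
  · intro e
    have e1 : p1 = 0 := (Prod.ext_iff.mp e).1
    have e2 : p1 - p2 = 0 := (Prod.ext_iff.mp e).2
    exact h0' ⟨e1, by linear_combination e1 - e2⟩
  · simp only at h
    rcases h with h | h | h
    · exact Or.inr (Or.inr (by linear_combination h))
    · exact Or.inr (Or.inl h)
    · exact Or.inl (by linear_combination h)

def tauIso (n : ℕ) : Gamma n ≃g Gamma n where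
  toEquiv := tauEquiv n
  map_rel_iff' := by
    intro x y
    constructor
    · rintro ⟨hne, hmem⟩
      refine ⟨fun e => hne (by rw [e]), ?_⟩
      have key : ((tauEquiv n) x - (tauEquiv n) y) = ((x - y).1, (x-y).1 - (x-y).2) := by
        simp [tauEquiv, Prod.ext_iff]
        ring
      rw [key] at hmem
      have := memS_tau hmem
      convert this using 1
      simp [Prod.ext_iff, sub_sub_cancel]
    · rintro ⟨hne, hmem⟩
      refine ⟨fun e => hne ((tauEquiv n).injective e), ?_⟩
      have := memS_tau hmem
      have key : ((tauEquiv n) x - (tauEquiv n) y) = ((x - y).1, (x-y).1 - (x-y).2) := by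
        simp [tauEquiv, Prod.ext_iff]
        ring
      rw [key]
      exact this

lemma sigma_zero : sigmaIso n (0, 0) = (0, 0) := rfl

lemma tau_zero : tauIso n (0, 0) = (0, 0) := by
  show ((0 : ZMod n), (0 : ZMod n) - 0) = (0, 0)
  simp

lemma sigma_image : ⇑(sigmaIso n) '' C1 n = C2 n := by
  ext q
  constructor
  · rintro ⟨p, hp, rfl⟩
    exact ⟨hp.1, hp.2⟩
  · intro hq
    refine ⟨(q.2, q.1), ⟨hq.1, hq.2⟩, ?_⟩
    show ((q.1, q.2) : ZMod n × ZMod n) = q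
    exact Prod.mk.eta

lemma tau_image : ⇑(tauIso n) '' C1 n = C3 n := by
  ext q
  constructor
  · rintro ⟨p, hp, rfl⟩
    show ((p.1, p.1 - p.2) : ZMod n × ZMod n).1 = _ ∧ _
    constructor
    · show p.1 = p.1 - p.2
      rw [hp.1]; ring
    · exact hp.2
  · intro hq
    refine ⟨(q.1, 0), ⟨rfl, hq.2⟩, ?_⟩
    refine Prod.ext_iff.mpr ⟨rfl, ?_⟩
    show q.1 - 0 = q.2
    rw [sub_zero]
    exact hq.1

lemma S_split {v : ZMod n × ZMod n} (hv : v ∈ cayS n) :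
    v ∈ C1 n ∨ v ∈ C2 n ∨ v ∈ C3 n := by
  obtain ⟨v1, v2⟩ := v
  obtain ⟨h0, h⟩ := hv
  have h0' : ¬(v1 = 0 ∧ v2 = 0) := by simpa [Prod.ext_iff] using h0
  simp only at h
  rcases h with h | h | h
  · exact Or.inl ⟨h, fun e => h0' ⟨e, h⟩⟩
  · exact Or.inr (Or.inl ⟨h, fun e => h0' ⟨h, e⟩⟩)
  · exact Or.inr (Or.inr ⟨h, fun e => h0' ⟨e, by rw [← h]; exact e⟩⟩)

lemma general (hn : 4 ≤ n) (f : Gamma n ≃g Gamma n) (hf : f (0, 0) = (0, 0))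
    (φ ψ : Gamma n ≃g Gamma n) (hφ0 : φ (0, 0) = (0, 0)) (hψ0 : ψ (0, 0) = (0, 0))
    {A B : Set (ZMod n × ZMod n)} (hφC : ⇑φ '' C1 n = A) (hψC : ⇑ψ '' C1 n = B)
    (hv : f (φ (1, 0)) ∈ B) : ⇑f '' A = B := by
  set h : Gamma n ≃g Gamma n := ψ.symm.comp (f.comp φ) with hdef
  have hcoe : ∀ x, h x = ψ.symm (f (φ x)) := fun x => rfl
  have h00 : h (0, 0) = (0, 0) := by
    rw [hcoe, hφ0, hf, symm_fix ψ hψ0]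
  have h10 : h (1, 0) ∈ C1 n := by
    rw [← hψC] at hv
    obtain ⟨x, hx, hxe⟩ := hv
    rw [hcoe, ← hxe, RelIso.symm_apply_apply]
    exact hx
  have hm := master hn h h00 h10
  calc ⇑f '' A = ⇑f '' (⇑φ '' C1 n) := by rw [hφC]
    _ = (fun x => f (φ x)) '' C1 n := Set.image_image _ _ _
    _ = (fun x => ψ (h x)) '' C1 n := by
          apply Set.image_congr'
          intro x
          rw [hcoe, RelIso.apply_symm_apply]
    _ = ⇑ψ '' (⇑h '' C1 n) := (Set.image_image _ _ _).symm
    _ = ⇑ψ '' C1 n := by rw [hm]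
    _ = B := hψC

end GammaAux


open GammaAux in
/-- If `f` is an automorphism of `Γ(n)` fixing `(0,0)`, then `f`
permutes the three cliques `C₁, C₂, C₃`. -/
theorem Gamma_aut_permutes_cliques (n : ℕ) (hn : 4 ≤ n) (f : Gamma n ≃g Gamma n)
    (hf : f (0, 0) = (0, 0)) :
    ∀ k : Fin 3, ∃ l : Fin 3,
      ⇑f '' (![C1 n, C2 n, C3 n] k) = ![C1 n, C2 n, C3 n] l := by
  have refl_image : ⇑((SimpleGraph.Iso.refl : Gamma n ≃g Gamma n)) '' C1 n = C1 n := by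
    rw [show ⇑((SimpleGraph.Iso.refl : Gamma n ≃g Gamma n)) = id from rfl, Set.image_id]
  have pick : ∀ (φ : Gamma n ≃g Gamma n), φ (0, 0) = (0, 0) →
      ∀ A : Set (ZMod n × ZMod n), ⇑φ '' C1 n = A →
      ∃ l : Fin 3, ⇑f '' A = ![C1 n, C2 n, C3 n] l := by
    intro φ hφ0 A hφC
    have hvS : f (φ (1, 0)) ∈ cayS n :=
      mapS f hf (mapS φ hφ0 (memS_C1 (one_ne hn)))
    rcases S_split hvS with h | h | h
    · refine ⟨0, ?_⟩
      simp only [Matrix.cons_val_zero]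
      exact general hn f hf φ (SimpleGraph.Iso.refl : Gamma n ≃g Gamma n) hφ0 rfl hφC refl_image h
    · refine ⟨1, ?_⟩
      simp only [Matrix.cons_val_one, Matrix.head_cons]
      exact general hn f hf φ (sigmaIso n) hφ0 sigma_zero hφC sigma_image h
    · refine ⟨2, ?_⟩
      show ⇑f '' A = C3 n
      exact general hn f hf φ (tauIso n) hφ0 tau_zero hφC tau_image h
  intro k
  fin_cases k
  · simpa using pick (SimpleGraph.Iso.refl : Gamma n ≃g Gamma n) rfl (C1 n) refl_image
  · simpa using pick (sigmaIso n) sigma_zero (C2 n) sigma_image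
  · simpa using pick (tauIso n) tau_zero (C3 n) tau_image
end

section
/- Let n ≥ 4 and let f be an automorphism of Γ(n) such that f(0,0) = (0,0), f(C₁) = C₁, f(C₂) = C₂ and f(C₃) = C₃ (setwise). Then there exists a unit u of the ring ℤ_n such that f = ψ_u, i.e., f(i,j) = (u·i, u·j) for all (i,j) ∈ ℤ_n × ℤ_n. -/
/-- `ψ_u : (i,j) ↦ (u·i, u·j)` for a unit `u` of `ℤ_n`. -/
def psiMap (n : ℕ) (u : (ZMod n)ˣ) : ZMod n × ZMod n → ZMod n × ZMod n :=
  fun p => (u * p.1, u * p.2)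

lemma gamma_adj_iff (n : ℕ) (x y : ZMod n × ZMod n) :
    (Gamma n).Adj x y ↔ x ≠ y ∧ (x.2 = y.2 ∨ x.1 = y.1 ∨ x.1 - y.1 = x.2 - y.2) := by
  show (x ≠ y ∧ x - y ∈ cayS n) ↔ _
  simp only [cayS, Set.mem_setOf_eq, Prod.fst_sub, Prod.snd_sub, sub_eq_zero,
    ne_eq, sub_ne_zero]
  tauto


/-- If an automorphism `f` of `Γ(n)` fixes `(0,0)` and stabilizes each
of `C₁`, `C₂`, `C₃` setwise, then `f = ψ_u` for some unit `u` of `ℤ_n`. -/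
theorem Gamma_aut_fixing_cliques_is_psi (n : ℕ) (hn : 4 ≤ n) (f : Gamma n ≃g Gamma n)
    (hf : f (0, 0) = (0, 0)) (h1 : ⇑f '' C1 n = C1 n) (h2 : ⇑f '' C2 n = C2 n)
    (h3 : ⇑f '' C3 n = C3 n) :
    ∃ u : (ZMod n)ˣ, ∀ p : ZMod n × ZMod n, f p = psiMap n u p := by
  haveI : NeZero n := ⟨by omega⟩
  haveI : Fact (1 < n) := ⟨by omega⟩
  have hinj : Function.Injective ⇑f := f.injective
  have hmadj : ∀ a b, (Gamma n).Adj a b → (Gamma n).Adj (f a) (f b) :=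
    fun a b h => f.map_rel_iff.mpr h
  have hC1 : ∀ p, f p ∈ C1 n ↔ p ∈ C1 n := by
    intro p
    constructor
    · intro hp
      rw [← h1] at hp
      obtain ⟨q, hq, he⟩ := hp
      exact hinj he ▸ hq
    · intro hp
      rw [← h1]
      exact Set.mem_image_of_mem _ hp
  have hC2 : ∀ p, f p ∈ C2 n ↔ p ∈ C2 n := by
    intro p
    constructor
    · intro hp
      rw [← h2] at hp
      obtain ⟨q, hq, he⟩ := hp
      exact hinj he ▸ hq
    · intro hp
      rw [← h2]
      exact Set.mem_image_of_mem _ hp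
  have hC3 : ∀ p, f p ∈ C3 n ↔ p ∈ C3 n := by
    intro p
    constructor
    · intro hp
      rw [← h3] at hp
      obtain ⟨q, hq, he⟩ := hp
      exact hinj he ▸ hq
    · intro hp
      rw [← h3]
      exact Set.mem_image_of_mem _ hp
  set A : ZMod n → ZMod n := fun i => (f (i, 0)).1 with hA
  have hA0 : A 0 = 0 := by simp only [hA]; rw [hf]
  have hfC1pt : ∀ i, f (i, 0) = (A i, 0) := by
    intro i
    rcases eq_or_ne i 0 with rfl | hi
    · rw [hf, hA0]
    · have hm : ((i, (0:ZMod n)) : ZMod n × ZMod n) ∈ C1 n := ⟨rfl, hi⟩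
      have := (hC1 _).mpr hm
      exact Prod.ext rfl this.1
  have hAne : ∀ i, i ≠ 0 → A i ≠ 0 := by
    intro i hi
    have hm : ((i, (0:ZMod n)) : ZMod n × ZMod n) ∈ C1 n := ⟨rfl, hi⟩
    exact ((hC1 _).mpr hm).2
  have hAinj : ∀ a b, A a = A b → a = b := by
    intro a b h
    have : f (a, 0) = f (b, 0) := by rw [hfC1pt, hfC1pt, h]
    exact congrArg Prod.fst (hinj this)
  have hfC3pt : ∀ i, f (i, i) = ((f (i,i)).1, (f (i,i)).1) := by
    intro i
    rcases eq_or_ne i 0 with rfl | hi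
    · rw [hf]
    · have hm : ((i, i) : ZMod n × ZMod n) ∈ C3 n := ⟨rfl, hi⟩
      have := (hC3 _).mpr hm
      exact Prod.ext rfl this.1.symm
  have hGA : ∀ i, (f (i,i)).1 = A i := by
    intro i
    rcases eq_or_ne i 0 with rfl | hi
    · rw [hf, hA0]
    · have hGne : (f (i,i)).1 ≠ 0 := ((hC3 _).mpr ⟨rfl, hi⟩).2
      have hadj : (Gamma n).Adj (i, 0) (i, i) := by
        rw [gamma_adj_iff]
        exact ⟨fun h => hi (congrArg Prod.snd h).symm, Or.inr (Or.inl rfl)⟩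
      have hh := hmadj _ _ hadj
      rw [hfC1pt, hfC3pt, gamma_adj_iff] at hh
      dsimp only at hh
      obtain ⟨-, h | h | h⟩ := hh
      · exact absurd h.symm hGne
      · exact h.symm
      · exact absurd (by linear_combination h) (hAne i hi)
  have hfC3pt' : ∀ i, f (i, i) = (A i, A i) := by
    intro i; rw [hfC3pt, hGA]
  have hfC2pt : ∀ j, f (0, j) = (0, A j) := by
    intro j
    rcases eq_or_ne j 0 with rfl | hj
    · rw [hf, hA0]
    · have hm : (((0:ZMod n), j) : ZMod n × ZMod n) ∈ C2 n := ⟨rfl, hj⟩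
      have hmem := (hC2 _).mpr hm
      have hadj : (Gamma n).Adj (0, j) (j, j) := by
        rw [gamma_adj_iff]
        exact ⟨fun h => hj (congrArg Prod.fst h).symm, Or.inl rfl⟩
      have hh := hmadj _ _ hadj
      rw [hfC3pt', gamma_adj_iff] at hh
      dsimp only at hh
      obtain ⟨-, h | h | h⟩ := hh
      · exact Prod.ext hmem.1 h
      · exact absurd (h.symm.trans hmem.1) (hAne j hj)
      · exfalso
        apply hmem.2
        rw [hmem.1] at h
        linear_combination -h
  have hgen : ∀ i j : ZMod n, i ≠ 0 → j ≠ 0 → i ≠ j →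
      (f (i,j)).1 ≠ 0 ∧ (f (i,j)).2 ≠ 0 ∧ (f (i,j)).1 ≠ (f (i,j)).2 := by
    intro i j hi hj hij
    have hne0 : f (i, j) ≠ (0, 0) := by
      rw [← hf]
      exact fun h => hi (congrArg Prod.fst (hinj h))
    refine ⟨?_, ?_, ?_⟩
    · intro h
      rcases eq_or_ne (f (i,j)).2 0 with h2 | h2
      · exact hne0 (Prod.ext h h2)
      · exact hi ((hC2 _).mp ⟨h, h2⟩).1
    · intro h
      rcases eq_or_ne (f (i,j)).1 0 with h2 | h2
      · exact hne0 (Prod.ext h2 h)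
      · exact hj ((hC1 _).mp ⟨h, h2⟩).1
    · intro h
      rcases eq_or_ne (f (i,j)).1 0 with h2 | h2
      · exact hne0 (Prod.ext h2 (h ▸ h2))
      · exact hij ((hC3 _).mp ⟨h, h2⟩).1
  -- key dichotomy
  have key : ∀ i j : ZMod n, i ≠ 0 → j ≠ 0 → i ≠ j →
      (f (i,j)).1 = A i ∨
        (j = -i ∧ (f (i,j)).1 = 2 * A i ∧ (f (i,j)).2 = A i) := by
    intro i j hi hj hij
    obtain ⟨hq1, hq2, hq12⟩ := hgen i j hi hj hij
    by_cases hx : (f (i,j)).1 = A i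
    · exact Or.inl hx
    right
    -- (2): adjacency to (i,i) gives y = A i
    have hy : (f (i,j)).2 = A i := by
      have hadj : (Gamma n).Adj (i, j) (i, i) := by
        rw [gamma_adj_iff]
        exact ⟨fun h => hij (congrArg Prod.snd h).symm, Or.inr (Or.inl rfl)⟩
      have hh := hmadj _ _ hadj
      rw [hfC3pt', gamma_adj_iff] at hh
      dsimp only at hh
      obtain ⟨-, h | h | h⟩ := hh
      · exact h
      · exact absurd h hx
      · exact absurd (by linear_combination h) hq12
    -- (1): adjacency to (i,0) gives x = 2 A i
    have hx2 : (f (i,j)).1 = 2 * A i := by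
      have hadj : (Gamma n).Adj (i, j) (i, 0) := by
        rw [gamma_adj_iff]
        exact ⟨fun h => hj (congrArg Prod.snd h), Or.inr (Or.inl rfl)⟩
      have hh := hmadj _ _ hadj
      rw [hfC1pt, gamma_adj_iff] at hh
      dsimp only at hh
      obtain ⟨-, h | h | h⟩ := hh
      · exact absurd h hq2
      · exact absurd h hx
      · rw [hy] at h; linear_combination h
    refine ⟨?_, hx2, hy⟩
    -- (4): adjacency to (j,j) gives A j = 2 A i
    have hAj : A j = 2 * A i := by
      have hadj : (Gamma n).Adj (i, j) (j, j) := by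
        rw [gamma_adj_iff]
        exact ⟨fun h => hij (congrArg Prod.fst h), Or.inl rfl⟩
      have hh := hmadj _ _ hadj
      rw [hfC3pt', gamma_adj_iff] at hh
      dsimp only at hh
      obtain ⟨-, h | h | h⟩ := hh
      · rw [hy] at h; exact absurd (hAinj _ _ h.symm) (Ne.symm hij)
      · rw [hx2] at h; exact h.symm
      · exact absurd (by linear_combination h) hq12
    -- (3): adjacency to (0,j) gives 3 A i = 0
    have h3Ai : 3 * A i = 0 := by
      have hadj : (Gamma n).Adj (i, j) (0, j) := by
        rw [gamma_adj_iff]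
        exact ⟨fun h => hi (congrArg Prod.fst h), Or.inl rfl⟩
      have hh := hmadj _ _ hadj
      rw [hfC2pt, gamma_adj_iff] at hh
      dsimp only at hh
      obtain ⟨-, h | h | h⟩ := hh
      · rw [hy, hAj] at h; linear_combination -3 * h
      · exact absurd h hq1
      · rw [hx2, hy, hAj] at h; linear_combination h
    -- (5): adjacency to (i-j, 0) gives i = 2 j
    have hij0 : i - j ≠ 0 := sub_ne_zero_of_ne hij
    have e1 : i = 2 * j := by
      have hadj : (Gamma n).Adj (i, j) (i - j, 0) := by
        rw [gamma_adj_iff]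
        refine ⟨fun h => hj (congrArg Prod.snd h), Or.inr (Or.inr (by ring))⟩
      have hh := hmadj _ _ hadj
      rw [hfC1pt, gamma_adj_iff] at hh
      dsimp only at hh
      obtain ⟨-, h | h | h⟩ := hh
      · exact absurd h hq2
      · rw [hx2, ← hAj] at h
        have := hAinj _ _ h.symm
        linear_combination this
      · rw [hx2, hy] at h
        have : A (i - j) = A i := by linear_combination -h
        have := hAinj _ _ this
        exact absurd (by linear_combination -this) hj
    -- (6): adjacency to (0, j-i) gives j = 2 i
    have hji0 : j - i ≠ 0 := sub_ne_zero_of_ne (Ne.symm hij)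
    have e2 : j = 2 * i := by
      have hadj : (Gamma n).Adj (i, j) (0, j - i) := by
        rw [gamma_adj_iff]
        refine ⟨fun h => hi (congrArg Prod.fst h), Or.inr (Or.inr (by ring))⟩
      have hh := hmadj _ _ hadj
      rw [hfC2pt, gamma_adj_iff] at hh
      dsimp only at hh
      obtain ⟨-, h | h | h⟩ := hh
      · rw [hy] at h
        have := hAinj _ _ h
        linear_combination -this
      · exact absurd h hq1
      · rw [hx2, hy] at h
        have : A (j - i) = A j := by rw [hAj]; linear_combination h - h3Ai
        have := hAinj _ _ this
        exact absurd (by linear_combination -this) hi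
    linear_combination -e1 - e2
  -- column preservation
  have col : ∀ i j : ZMod n, i ≠ 0 → j ≠ 0 → i ≠ j → (f (i,j)).1 = A i := by
    intro i j hi hj hij
    rcases key i j hi hj hij with h | ⟨hji, hx, hy⟩
    · exact h
    exfalso
    -- pick j' ∉ {0, i, -i}
    obtain ⟨j', hj'⟩ : ∃ j' : ZMod n, j' ≠ 0 ∧ j' ≠ i ∧ j' ≠ -i := by
      by_contra hc
      push_neg at hc
      have hsub : (Finset.univ : Finset (ZMod n)) ⊆ {0, i, -i} := by
        intro x _
        simp only [Finset.mem_insert, Finset.mem_singleton]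
        rcases eq_or_ne x 0 with h | h
        · exact Or.inl h
        rcases eq_or_ne x i with h' | h'
        · exact Or.inr (Or.inl h')
        · exact Or.inr (Or.inr (hc x h h'))
      have hcard := Finset.card_le_card hsub
      rw [Finset.card_univ, ZMod.card] at hcard
      have : ({0, i, -i} : Finset (ZMod n)).card ≤ 3 := by
        apply le_trans (Finset.card_insert_le _ _)
        have : ({i, -i} : Finset (ZMod n)).card ≤ 2 := by
          apply le_trans (Finset.card_insert_le _ _)
          simp
        omega
      omega
    obtain ⟨hj'0, hj'i, hj'ni⟩ := hj'
    have hij' : i ≠ j' := Ne.symm hj'i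
    have hcol' : (f (i,j')).1 = A i := by
      rcases key i j' hi hj'0 hij' with h | ⟨hbad, -, -⟩
      · exact h
      · exact absurd hbad hj'ni
    obtain ⟨hq1', hq2', hq12'⟩ := hgen i j' hi hj'0 hij'
    have hadj : (Gamma n).Adj (i, j) (i, j') := by
      rw [gamma_adj_iff]
      refine ⟨?_, Or.inr (Or.inl rfl)⟩
      intro h
      exact hj'ni ((congrArg Prod.snd h).symm.trans hji)
    have hh := hmadj _ _ hadj
    rw [gamma_adj_iff] at hh
    obtain ⟨-, h | h | h⟩ := hh
    · rw [hy] at h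
      exact hq12' (hcol'.trans h)
    · rw [hx, hcol'] at h
      exact hAne i hi (by linear_combination h)
    · rw [hx, hy, hcol'] at h
      exact hq2' (by linear_combination h)
  -- full coordinates
  have colAll : ∀ i j : ZMod n, (f (i, j)).1 = A i := by
    intro i j
    rcases eq_or_ne j 0 with rfl | hj
    · rw [hfC1pt]
    rcases eq_or_ne i 0 with rfl | hi
    · rw [hfC2pt, hA0]
    rcases eq_or_ne i j with rfl | hij
    · rw [hfC3pt']
    · exact col i j hi hj hij
  have rowAll : ∀ i j : ZMod n, (f (i, j)).2 = A j := by
    intro i j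
    rcases eq_or_ne j 0 with rfl | hj
    · rw [hfC1pt, hA0]
    rcases eq_or_ne i 0 with rfl | hi
    · rw [hfC2pt]
    rcases eq_or_ne i j with rfl | hij
    · rw [hfC3pt']
    obtain ⟨hq1, hq2, hq12⟩ := hgen i j hi hj hij
    have hadj : (Gamma n).Adj (i, j) (j, j) := by
      rw [gamma_adj_iff]
      exact ⟨fun h => hij (congrArg Prod.fst h), Or.inl rfl⟩
    have hh := hmadj _ _ hadj
    rw [hfC3pt', gamma_adj_iff] at hh
    dsimp only at hh
    obtain ⟨-, h | h | h⟩ := hh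
    · exact h
    · rw [colAll i j] at h
      exact absurd (hAinj _ _ h) hij
    · exact absurd (by linear_combination h) hq12
  have feq : ∀ i j : ZMod n, f (i, j) = (A i, A j) :=
    fun i j => Prod.ext (colAll i j) (rowAll i j)
  -- additivity
  have hadd : ∀ a b : ZMod n, A (a + b) = A a + A b := by
    intro a b
    rcases eq_or_ne b 0 with rfl | hb
    · rw [add_zero, hA0, add_zero]
    have hadj : (Gamma n).Adj (b, a + b) (0, a) := by
      rw [gamma_adj_iff]
      exact ⟨fun h => hb (congrArg Prod.fst h), Or.inr (Or.inr (by ring))⟩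
    have hh := hmadj _ _ hadj
    rw [feq, hfC2pt, gamma_adj_iff] at hh
    dsimp only at hh
    obtain ⟨-, h | h | h⟩ := hh
    · have := hAinj _ _ h
      exact absurd (by linear_combination this) hb
    · exact absurd h (hAne b hb)
    · linear_combination -h
  have hmulNat : ∀ m : ℕ, A (m : ZMod n) = A 1 * m := by
    intro m
    induction m with
    | zero => simpa using hA0
    | succ m ih =>
      push_cast
      rw [hadd, ih]
      ring
  have hmul : ∀ k : ZMod n, A k = A 1 * k := by
    intro k
    have := hmulNat k.val
    rwa [ZMod.natCast_zmod_val] at this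
  -- the unit
  have h1ne : (1 : ZMod n) ≠ 0 := one_ne_zero
  have hmem : (((0 : ZMod n), (1 : ZMod n)) : ZMod n × ZMod n) ∈ C2 n := ⟨rfl, h1ne⟩
  rw [← h2] at hmem
  obtain ⟨q, hq, he⟩ := hmem
  have hfq : f (0, q.2) = (0, 1) := by
    rw [show (((0 : ZMod n), q.2) : ZMod n × ZMod n) = q from Prod.ext hq.1.symm rfl]
    exact he
  rw [hfC2pt] at hfq
  have hu : A 1 * q.2 = 1 := by
    rw [← hmul]
    exact congrArg Prod.snd hfq
  refine ⟨⟨A 1, q.2, hu, by rw [mul_comm]; exact hu⟩, ?_⟩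
  rintro ⟨i, j⟩
  rw [feq]
  exact Prod.ext (hmul i) (hmul j)
end

section
/- Let n ≥ 4 and let f be an automorphism of Γ(n) such that f(0,0) = (0,0), f(C₁) = C₁, f(C₂) = C₂ and f(C₃) = C₃ (setwise). Then there exists an injective function c : ℤ_n → ℤ_n with c(0) = 0 and c(i) ≠ 0 for i ≠ 0, such that f(i,j) = (c(i), c(j)) for all i, j ∈ ℤ_n. -/
/-- If an automorphism `f` of `Γ(n)` fixes `(0,0)` and stabilizes each
of `C₁`, `C₂`, `C₃` setwise, then `f` acts coordinatewise via an injective map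
`c : ℤ_n → ℤ_n` with `c(0) = 0` and `c(i) ≠ 0` for `i ≠ 0`. -/
theorem Gamma_aut_fixing_cliques_coordinatewise (n : ℕ) (hn : 4 ≤ n)
    (f : Gamma n ≃g Gamma n) (hf : f (0, 0) = (0, 0)) (h1 : ⇑f '' C1 n = C1 n)
    (h2 : ⇑f '' C2 n = C2 n) (h3 : ⇑f '' C3 n = C3 n) :
    ∃ c : ZMod n → ZMod n, Function.Injective c ∧ c 0 = 0 ∧
      (∀ i : ZMod n, i ≠ 0 → c i ≠ 0) ∧
      (∀ i j : ZMod n, f (i, j) = (c i, c j)) := by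
  haveI : NeZero n := ⟨by omega⟩
  have hinj : Function.Injective ⇑f := f.injective
  have fAdj : ∀ x y, (Gamma n).Adj x y → (Gamma n).Adj (f x) (f y) :=
    fun x y h => f.map_adj_iff.mpr h
  have getAdj : ∀ a b a' b' : ZMod n, (Gamma n).Adj (a, b) (a', b') →
      (b = b' ∨ a = a' ∨ a - a' = b - b') := by
    intro a b a' b' h
    have hS : (a - a', b - b') ≠ 0 ∧ (b - b' = 0 ∨ a - a' = 0 ∨ a - a' = b - b') := h.2
    rcases hS.2 with h' | h' | h'
    · exact Or.inl (sub_eq_zero.mp h')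
    · exact Or.inr (Or.inl (sub_eq_zero.mp h'))
    · exact Or.inr (Or.inr h')
  have mkAdj : ∀ a b a' b' : ZMod n, (a, b) ≠ (a', b') →
      (b - b' = 0 ∨ a - a' = 0 ∨ a - a' = b - b') → (Gamma n).Adj (a, b) (a', b') :=
    fun a b a' b' h hs => ⟨h, sub_ne_zero_of_ne h, hs⟩
  have key0 : ∀ a b a' b' u v u' v' : ZMod n, f (a, b) = (u, v) → f (a', b') = (u', v') →
      (a, b) ≠ (a', b') → (b - b' = 0 ∨ a - a' = 0 ∨ a - a' = b - b') →
      (v = v' ∨ u = u' ∨ u - u' = v - v') := by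
    intro a b a' b' u v u' v' hx hy hne hs
    have h := fAdj _ _ (mkAdj a b a' b' hne hs)
    rw [hx, hy] at h
    exact getAdj _ _ _ _ h
  have hmem : ∀ C : Set (ZMod n × ZMod n), ⇑f '' C = C → ∀ x, f x ∈ C ↔ x ∈ C := by
    intro C hC x
    constructor
    · intro hx
      rw [← hC] at hx
      obtain ⟨y, hy, hyx⟩ := hx
      rwa [← hinj hyx]
    · intro hx
      rw [← hC]
      exact Set.mem_image_of_mem _ hx
  have hf0 : f 0 = 0 := by rw [← Prod.mk_zero_zero]; exact hf
  have hzero : ∀ x, f x = 0 → x = 0 := fun x hx => hinj (hx.trans hf0.symm)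
  set c : ZMod n → ZMod n := fun i => (f (0, i)).2 with hcdef
  have hc0 : c 0 = 0 := by show (f (0, 0)).2 = 0; rw [hf]
  have hcol : ∀ j : ZMod n, f (0, j) = (0, c j) := by
    intro j
    by_cases hj : j = 0
    · subst hj; rw [hf, hc0]
    · have hm : f (0, j) ∈ C2 n := (hmem _ h2 _).2 ⟨rfl, hj⟩
      exact Prod.ext hm.1 rfl
  have cnz : ∀ j : ZMod n, j ≠ 0 → c j ≠ 0 := by
    intro j hj
    have hm : f (0, j) ∈ C2 n := (hmem _ h2 _).2 ⟨rfl, hj⟩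
    exact hm.2
  have cinj : Function.Injective c := by
    intro a b hab
    have h : f (0, a) = f (0, b) := by rw [hcol, hcol, hab]
    exact congrArg Prod.snd (hinj h)
  have hdiag : ∀ i : ZMod n, f (i, i) = (c i, c i) := by
    intro i
    by_cases hi : i = 0
    · subst hi; rw [hf, hc0]
    · obtain ⟨⟨D, E⟩, hD⟩ : ∃ p, f (i, i) = p := ⟨_, rfl⟩
      have hm : (D, E) ∈ C3 n := by rw [← hD]; exact (hmem _ h3 _).2 ⟨rfl, hi⟩
      have hDE : D = E := hm.1
      subst hDE
      have h := key0 0 i i i 0 (c i) D D (hcol i) hD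
        (by intro hcon; rw [Prod.mk.injEq] at hcon; exact hi hcon.1.symm)
        (Or.inl (sub_self i))
      rcases h with h | h | h
      · rw [hD, ← h]
      · exact absurd h.symm hm.2
      · exact absurd (by linear_combination -h) (cnz i hi)
  have hrow : ∀ i : ZMod n, f (i, 0) = (c i, 0) := by
    intro i
    by_cases hi : i = 0
    · subst hi; rw [hf, hc0]
    · obtain ⟨⟨A, B⟩, hA⟩ : ∃ p, f (i, 0) = p := ⟨_, rfl⟩
      have hm : (A, B) ∈ C1 n := by rw [← hA]; exact (hmem _ h1 _).2 ⟨rfl, hi⟩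
      have hB : B = 0 := hm.1
      subst hB
      have h := key0 i 0 i i A 0 (c i) (c i) hA (hdiag i)
        (by intro hcon; rw [Prod.mk.injEq] at hcon; exact hi hcon.2.symm)
        (Or.inr (Or.inl (sub_self i)))
      rcases h with h | h | h
      · exact absurd (by linear_combination -h) (cnz i hi)
      · rw [hA, h]
      · exact absurd (by linear_combination h) hm.2
  have key : ∀ i j : ZMod n, i ≠ 0 → j ≠ 0 → i ≠ j →
      f (i, j) = (c i, c j) ∨ (f (i, j) = (c j, c i) ∧ i = 2 * j ∧ j = 2 * i) := by
    intro i j hi hj hij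
    obtain ⟨⟨u, v⟩, hfij⟩ : ∃ p, f (i, j) = p := ⟨_, rfl⟩
    have hune : u ≠ 0 := by
      intro h0
      by_cases hv0 : v = 0
      · have hz : f (i, j) = 0 := by rw [hfij, h0, hv0, Prod.mk_zero_zero]
        have := hzero _ hz
        rw [← Prod.mk_zero_zero, Prod.mk.injEq] at this
        exact hi this.1
      · have hm : (i, j) ∈ C2 n := (hmem _ h2 _).1 (by rw [hfij]; exact ⟨h0, hv0⟩)
        exact hi hm.1
    have hvne : v ≠ 0 := by
      intro h0
      have hm : (i, j) ∈ C1 n := (hmem _ h1 _).1 (by rw [hfij]; exact ⟨h0, hune⟩)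
      exact hj hm.1
    have huv : u ≠ v := by
      intro h0
      have hm : (i, j) ∈ C3 n := (hmem _ h3 _).1 (by rw [hfij]; exact ⟨h0, hune⟩)
      exact hij hm.1
    have cicj : c i ≠ c j := fun h => hij (cinj h)
    have hI := key0 i j i i u v (c i) (c i) hfij (hdiag i)
      (by intro hcon; rw [Prod.mk.injEq] at hcon; exact hij hcon.2.symm)
      (Or.inr (Or.inl (sub_self i)))
    have hJ := key0 i j j j u v (c j) (c j) hfij (hdiag j)
      (by intro hcon; rw [Prod.mk.injEq] at hcon; exact hij hcon.1)
      (Or.inl (sub_self j))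
    have hI' : u = c i ∨ v = c i := by
      rcases hI with h | h | h
      · exact Or.inr h
      · exact Or.inl h
      · exact absurd (by linear_combination h) huv
    have hJ' : u = c j ∨ v = c j := by
      rcases hJ with h | h | h
      · exact Or.inr h
      · exact Or.inl h
      · exact absurd (by linear_combination h) huv
    rcases hI' with hu' | hv'
    · rcases hJ' with hu'' | hv''
      · exact absurd (hu'.symm.trans hu'') cicj
      · left; rw [hfij, hu', hv'']
    · rcases hJ' with hu'' | hv''
      · -- case B : u = c j, v = c i
        right
        have hBij : f (i, j) = (c j, c i) := by rw [hfij, hu'', hv']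
        refine ⟨hBij, ?_⟩
        have hb1 := key0 i j i 0 (c j) (c i) (c i) 0 hBij (hrow i)
          (by intro hcon; rw [Prod.mk.injEq] at hcon; exact hj hcon.2)
          (Or.inr (Or.inl (sub_self i)))
        have hcj2 : c j = 2 * c i := by
          rcases hb1 with h | h | h
          · exact absurd h (cnz i hi)
          · exact absurd (cinj h) (fun h' => hij h'.symm)
          · linear_combination h
        have hb2 := key0 i j 0 j (c j) (c i) 0 (c j) hBij (hcol j)
          (by intro hcon; rw [Prod.mk.injEq] at hcon; exact hi hcon.1)
          (Or.inl (sub_self j))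
        have hci2 : c i = 2 * c j := by
          rcases hb2 with h | h | h
          · exact absurd (cinj h) hij
          · exact absurd h (cnz j hj)
          · linear_combination -h
        have h3ci : 3 * c i = 0 := by linear_combination -hci2 - 2 * hcj2
        have hb3 := key0 i j (i - j) 0 (c j) (c i) (c (i - j)) 0 hBij (hrow (i - j))
          (by intro hcon; rw [Prod.mk.injEq] at hcon; exact hj hcon.2)
          (Or.inr (Or.inr (by ring)))
        have hi2j : i = 2 * j := by
          rcases hb3 with h | h | h
          · exact absurd h (cnz i hi)
          · have h' := cinj h
            linear_combination -h'
          · exfalso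
            have hcc : c (i - j) = c i := by linear_combination -h + hcj2
            have h' := cinj hcc
            exact hj (by linear_combination -h')
        have hb4 := key0 i j 0 (j - i) (c j) (c i) 0 (c (j - i)) hBij (hcol (j - i))
          (by intro hcon; rw [Prod.mk.injEq] at hcon; exact hi hcon.1)
          (Or.inr (Or.inr (by ring)))
        have hj2i : j = 2 * i := by
          rcases hb4 with h | h | h
          · have h' := cinj h
            linear_combination -h'
          · exact absurd h (cnz j hj)
          · exfalso
            have e1 : c (j - i) = c i - c j := by linear_combination h
            have e2 : c j = -c i := by linear_combination hcj2 + h3ci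
            have hcc : c (j - i) = c j := by linear_combination e1 - 2 * e2 + h3ci
            have h' := cinj hcc
            exact hi (by linear_combination -h')
        exact ⟨hi2j, hj2i⟩
      · exact absurd (hv'.symm.trans hv'') cicj
  have good : ∀ i j : ZMod n, i ≠ 0 → j ≠ 0 → i ≠ j → f (i, j) = (c i, c j) := by
    intro i j hi hj hij
    rcases key i j hi hj hij with h | ⟨hB, hi2, hj2⟩
    · exact h
    · exfalso
      have h3i : 3 * i = 0 := by linear_combination -hi2 - 2 * hj2
      have hdvd : (3 : ℕ) ∣ n := by
        have e1 : addOrderOf i ∣ 3 := addOrderOf_dvd_of_nsmul_eq_zero (by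
          show (3 : ℕ) • i = 0
          rw [nsmul_eq_mul]
          push_cast
          linear_combination h3i)
        have e2 : addOrderOf i ∣ n := addOrderOf_dvd_of_nsmul_eq_zero (by
          rw [nsmul_eq_mul, ZMod.natCast_self, zero_mul])
        rcases (Nat.prime_three.eq_one_or_self_of_dvd _ e1) with h | h
        · exact absurd (AddMonoid.addOrderOf_eq_one_iff.mp h) hi
        · rwa [← h]
      have hcard : 1 < (Finset.univ \ {0, i, j} : Finset (ZMod n)).card := by
        have hs : ({0, i, j} : Finset (ZMod n)).card ≤ 3 :=
          (Finset.card_insert_le _ _).trans (by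
            have := Finset.card_insert_le i ({j} : Finset (ZMod n))
            simp only [Finset.card_singleton] at this
            omega)
        rw [Finset.card_sdiff_of_subset (Finset.subset_univ _), Finset.card_univ, ZMod.card]
        omega
      obtain ⟨k1, hk1, k2, hk2, hk12⟩ := Finset.one_lt_card.mp hcard
      simp only [Finset.mem_sdiff, Finset.mem_univ, Finset.mem_insert,
        Finset.mem_singleton, true_and, not_or] at hk1 hk2
      have fact : ∀ k : ZMod n, k ≠ 0 → k ≠ i → k ≠ j → c k = 2 * c i - c j := by
        intro k hk0 hki hkj
        have hfik : f (i, k) = (c i, c k) := by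
          rcases key i k hi hk0 (fun h => hki h.symm) with h | ⟨_, _, hk2i⟩
          · exact h
          · exact absurd (hk2i.trans hj2.symm) hkj
        have h := key0 i j i k (c j) (c i) (c i) (c k) hB hfik
          (by intro hcon; rw [Prod.mk.injEq] at hcon; exact hkj hcon.2.symm)
          (Or.inr (Or.inl (sub_self i)))
        rcases h with h | h | h
        · exact absurd (cinj h).symm hki
        · exact absurd (cinj h) (fun h' => hij h'.symm)
        · linear_combination h
      have heq := (fact k1 hk1.1 hk1.2.1 hk1.2.2).trans
        (fact k2 hk2.1 hk2.2.1 hk2.2.2).symm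
      exact hk12 (cinj heq)
  refine ⟨c, cinj, hc0, cnz, ?_⟩
  intro i j
  by_cases hi : i = 0
  · subst hi; rw [hcol, hc0]
  · by_cases hj : j = 0
    · subst hj; rw [hrow, hc0]
    · by_cases hij : i = j
      · subst hij; exact hdiag i
      · exact good i j hi hj hij
end

section
/- Let n ≥ 4, let f be an automorphism of Γ(n) with f(0,0) = (0,0), f(C₁) = C₁, f(C₂) = C₂, f(C₃) = C₃, and let c : ℤ_n → ℤ_n be an injective function with c(0) = 0 such that f(i,j) = (c(i), c(j)) for all i, j ∈ ℤ_n. Then c(i+k) − c(i) = c(j+k) − c(j) for all nonzero i, j, k ∈ ℤ_n. -/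
/-- **Claim 2.** With `f` and `c` as in the key lemma, the increments
of `c` are constant: `c(i+k) - c(i) = c(j+k) - c(j)` for nonzero `i, j, k`. -/
theorem Gamma_aut_c_constant_increments (n : ℕ) (hn : 4 ≤ n)
    (f : Gamma n ≃g Gamma n) (hf : f (0, 0) = (0, 0)) (h1 : ⇑f '' C1 n = C1 n)
    (h2 : ⇑f '' C2 n = C2 n) (h3 : ⇑f '' C3 n = C3 n)
    (c : ZMod n → ZMod n) (hc_inj : Function.Injective c) (hc0 : c 0 = 0)
    (hfc : ∀ i j : ZMod n, f (i, j) = (c i, c j)) :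
    ∀ i j k : ZMod n, i ≠ 0 → j ≠ 0 → k ≠ 0 →
      c (i + k) - c i = c (j + k) - c j := by
  intro i j k hi hj hk
  have hadj : (Gamma n).Adj (i + k, j + k) (i, j) := by
    refine ⟨?_, ?_, ?_⟩
    · intro h
      apply hk
      have := congrArg Prod.fst h
      simpa using sub_eq_zero.mpr this
    · intro h
      apply hk
      have := congrArg Prod.fst h
      simp only [Prod.fst_sub, Prod.fst_zero] at this
      linear_combination this
    · right; right
      simp
  have hadj' := f.map_rel_iff.mpr hadj
  rw [hfc, hfc] at hadj'
  obtain ⟨hne, hS0, hS⟩ := hadj'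
  rcases hS with h | h | h
  · exfalso
    simp only [Prod.snd_sub] at h
    exact hk (by simpa using hc_inj (sub_eq_zero.mp h))
  · exfalso
    simp only [Prod.fst_sub] at h
    exact hk (by simpa using hc_inj (sub_eq_zero.mp h))
  · simpa using h
end

section
/- Let n ≥ 4, let f be an automorphism of Γ(n) with f(0,0) = (0,0), f(C₁) = C₁, f(C₂) = C₂, f(C₃) = C₃, and let c : ℤ_n → ℤ_n be an injective function with c(0) = 0 such that f(i,j) = (c(i), c(j)) for all i, j ∈ ℤ_n. Then c(i) + c(−i) = 0 in ℤ_n for every nonzero i ∈ ℤ_n. -/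
/-- **Claim 3.** With `f` and `c` as in the key lemma,
`c(i) + c(-i) = 0` for every nonzero `i`. -/
theorem Gamma_aut_c_antisymmetric (n : ℕ) (hn : 4 ≤ n)
    (f : Gamma n ≃g Gamma n) (hf : f (0, 0) = (0, 0)) (h1 : ⇑f '' C1 n = C1 n)
    (h2 : ⇑f '' C2 n = C2 n) (h3 : ⇑f '' C3 n = C3 n)
    (c : ZMod n → ZMod n) (hc_inj : Function.Injective c) (hc0 : c 0 = 0)
    (hfc : ∀ i j : ZMod n, f (i, j) = (c i, c j)) :
    ∀ i : ZMod n, i ≠ 0 → c i + c (-i) = 0 := by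
  intro i hi
  have hci : c i ≠ 0 := fun h => hi (hc_inj (h.trans hc0.symm))
  have hcni : c (-i) ≠ 0 := by
    intro h
    exact hi (neg_eq_zero.mp (hc_inj (h.trans hc0.symm)))
  have hadj : (Gamma n).Adj (i, 0) (0, -i) := by
    refine ⟨?_, ?_, ?_⟩
    · intro h
      exact hi (congrArg Prod.fst h)
    · intro h
      exact hi (by simpa using congrArg Prod.fst h)
    · right; right
      show i - 0 = 0 - -i
      ring
  have hadj' : (Gamma n).Adj (f (i, 0)) (f (0, -i)) := f.map_adj_iff.mpr hadj
  rw [hfc, hfc, hc0] at hadj'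
  obtain ⟨-, hne, h⟩ := hadj'
  simp only [Prod.fst_sub, Prod.snd_sub] at h
  rcases h with h | h | h
  · exact absurd (by linear_combination -h) hcni
  · exact absurd (by linear_combination h) hci
  · linear_combination h
end

section
/- Let n ≥ 4 and let c₁, c₂, …, c_{n−1} be pairwise distinct nonzero elements of ℤ_n such that c_{i+1} − c_i = d for all 1 ≤ i ≤ n−2 (for some fixed d ∈ ℤ_n) and c₁ + c_{n−1} = 0 in ℤ_n. Then d is a unit of ℤ_n, c₁ is a unit of ℤ_n, and c_i = i·c₁ in ℤ_n for every 1 ≤ i ≤ n−1. -/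
/-- If `c₁, …, c_{n-1}` are pairwise distinct nonzero elements of `ℤ_n`
with constant difference `d` and `c₁ + c_{n-1} = 0`, then `d` and `c₁` are units and
`cᵢ = i·c₁` for all `1 ≤ i ≤ n-1`. -/
theorem arithmetic_progression_units (n : ℕ) (hn : 4 ≤ n) (c : ℕ → ZMod n) (d : ZMod n)
    (h_distinct : ∀ i j : ℕ, 1 ≤ i → i ≤ n - 1 → 1 ≤ j → j ≤ n - 1 → i ≠ j → c i ≠ c j)
    (h_nonzero : ∀ i : ℕ, 1 ≤ i → i ≤ n - 1 → c i ≠ 0)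
    (h_step : ∀ i : ℕ, 1 ≤ i → i ≤ n - 2 → c (i + 1) - c i = d)
    (h_sum : c 1 + c (n - 1) = 0) :
    IsUnit d ∧ IsUnit (c 1) ∧ ∀ i : ℕ, 1 ≤ i → i ≤ n - 1 → c i = (i : ZMod n) * c 1 := by
  haveI : NeZero n := ⟨by omega⟩
  -- general formula
  have hck : ∀ k : ℕ, k ≤ n - 2 → c (1 + k) = c 1 + (k : ZMod n) * d := by
    intro k
    induction k with
    | zero => intro _; simp
    | succ k ih =>
      intro hk
      have h1 := h_step (1 + k) (by omega) (by omega)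
      have h2 := ih (by omega)
      push_cast
      have : c (1 + (k + 1)) = c (1 + k) + d := by
        rw [show 1 + (k+1) = (1+k) + 1 by ring]
        linear_combination h1
      rw [this, h2]; ring
  -- d is a unit
  have hd : IsUnit d := by
    by_contra hd
    rw [show d = ((d.val : ℕ) : ZMod n) by simp [ZMod.natCast_val, ZMod.cast_id],
      ZMod.isUnit_iff_coprime] at hd
    set g := Nat.gcd d.val n with hg
    have hgn : g ∣ n := Nat.gcd_dvd_right _ _
    have hg1 : 2 ≤ g := by
      have : g ≠ 0 := by
        intro h; rw [hg] at h
        have := Nat.eq_zero_of_gcd_eq_zero_right h; omega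
      have : g ≠ 1 := hd
      omega
    set m := n / g with hm
    have hmn : m * g = n := Nat.div_mul_cancel hgn
    have hm1 : 1 ≤ m := by
      rcases Nat.eq_zero_or_pos m with h | h
      · rw [h] at hmn; omega
      · exact h
    have hm2 : m ≤ n - 2 := by
      have : m ≤ n / 2 := by
        rw [hm]; exact Nat.div_le_div_left hg1 (by omega)
      omega
    have hmd : (m : ZMod n) * d = 0 := by
      have : ((m * d.val : ℕ) : ZMod n) = 0 := by
        rw [ZMod.natCast_eq_zero_iff]
        obtain ⟨t, ht⟩ := Nat.gcd_dvd_left d.val n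
        exact ⟨t, by rw [ht, ← hg, ← Nat.mul_assoc, hmn]⟩
      push_cast at this
      rwa [ZMod.natCast_val, ZMod.cast_id] at this
    have : c (1 + m) = c 1 := by rw [hck m hm2, hmd, add_zero]
    exact h_distinct (1 + m) 1 (by omega) (by omega) (by omega) (by omega) (by omega) this
  -- c 1 = d
  have hcast : ((n - 2 : ℕ) : ZMod n) = -2 := by
    have : ((n - 2 : ℕ) : ZMod n) + 2 = 0 := by
      rw [show ((2 : ZMod n)) = ((2 : ℕ) : ZMod n) by push_cast; ring, ← Nat.cast_add,
        show n - 2 + 2 = n by omega, ZMod.natCast_self]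
    linear_combination this
  have hsum2 : c 1 + c 1 - 2 * d = 0 := by
    have h1 : c (1 + (n - 2)) = c 1 + ((n - 2 : ℕ) : ZMod n) * d := hck (n - 2) le_rfl
    rw [hcast] at h1
    rw [show n - 1 = 1 + (n - 2) by omega] at h_sum
    linear_combination h_sum - h1
  have he : c 1 = d := by
    by_contra he
    set e := c 1 - d with hedef
    have he0 : e ≠ 0 := sub_ne_zero_of_ne he
    have h2e : e + e = 0 := by rw [hedef]; linear_combination hsum2
    set u := e * ((hd.unit⁻¹ : (ZMod n)ˣ) : ZMod n) with hu
    have hud : u * d = e := by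
      rw [hu, mul_assoc]
      rw [IsUnit.val_inv_mul hd, mul_one]
    have hu0 : u ≠ 0 := by
      intro h
      apply he0
      rw [← hud, h, zero_mul]
    set j := u.val with hj
    have hj0 : j ≠ 0 := fun h => hu0 ((ZMod.val_eq_zero u).mp h)
    have hjn : j < n := ZMod.val_lt u
    have hju : (j : ZMod n) = u := by rw [hj, ZMod.natCast_val, ZMod.cast_id]
    have hcj : c j = 0 := by
      have h1 : c j = c 1 + ((j - 1 : ℕ) : ZMod n) * d := by
        have := hck (j - 1) (by omega)
        rwa [show 1 + (j - 1) = j by omega] at this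
      have h2 : ((j - 1 : ℕ) : ZMod n) = u - 1 := by
        rw [← hju, show (j : ℕ) = (j - 1) + 1 by omega]
        push_cast; ring
      rw [h1, h2]
      have : c 1 = d + e := by rw [hedef]; ring
      rw [this]
      linear_combination hud + h2e
    exact h_nonzero j (by omega) (by omega) hcj
  refine ⟨hd, he ▸ hd, fun i hi1 hi2 => ?_⟩
  have h1 : c i = c 1 + ((i - 1 : ℕ) : ZMod n) * d := by
    have := hck (i - 1) (by omega)
    rwa [show 1 + (i - 1) = i by omega] at this
  have h2 : ((i - 1 : ℕ) : ZMod n) = (i : ZMod n) - 1 := by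
    rw [show (i : ℕ) = (i - 1) + 1 by omega]
    push_cast; ring
  rw [h1, h2, ← he]; ring
end

section
/- For every integer n ≥ 4, the automorphism group Aut(Γ(n)) has exactly 6·n²·φ(n) elements, where φ is Euler's totient function. -/
namespace GA
variable {n : ℕ}

lemma adj_iff {x y : ZMod n × ZMod n} : (Gamma n).Adj x y ↔ x - y ∈ cayS n := by
  constructor
  · exact fun h => h.2
  · intro h
    exact ⟨fun he => h.1 (by simp [he]), h⟩


lemma mem_cayS' {p : ZMod n × ZMod n} :
    p ∈ cayS n ↔ ((p.1 ≠ 0 ∧ p.2 = 0) ∨ (p.1 = 0 ∧ p.2 ≠ 0) ∨ (p.1 = p.2 ∧ p.1 ≠ 0)) := by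
  have : p ≠ 0 ↔ ¬(p.1 = 0 ∧ p.2 = 0) := by
    rw [ne_eq, Prod.ext_iff]; simp
  simp only [cayS, Set.mem_setOf_eq, this]
  constructor
  · rintro ⟨h1, h2 | h2 | h2⟩ <;> tauto
  · rintro (⟨h1, h2⟩ | ⟨h1, h2⟩ | ⟨h1, h2⟩) <;> refine ⟨?_, by tauto⟩ <;> tauto

lemma mk_mem_cayS' {a b : ZMod n} :
    (a, b) ∈ cayS n ↔ ((a ≠ 0 ∧ b = 0) ∨ (a = 0 ∧ b ≠ 0) ∨ (a = b ∧ a ≠ 0)) := mem_cayS'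

/-- Lemma C for the horizontal line: a vertex of `S` adjacent to two distinct
points of `S` on the line `y = 0` is itself on that line. -/
lemma lineC0 {x1 y1 z1 z2 : ZMod n} (hx1 : x1 ≠ 0) (hy1 : y1 ≠ 0) (hne : x1 ≠ y1)
    (hz : (z1, z2) ∈ cayS n) (h1 : (z1 - x1, z2) ∈ cayS n) (h2 : (z1 - y1, z2) ∈ cayS n) :
    z2 = 0 := by
  rcases mk_mem_cayS'.1 hz with ⟨hza, hzb⟩ | ⟨hza, hzb⟩ | ⟨hza, hzb⟩ <;>
  rcases mk_mem_cayS'.1 h1 with ⟨h1a, h1b⟩ | ⟨h1a, h1b⟩ | ⟨h1a, h1b⟩ <;>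
  rcases mk_mem_cayS'.1 h2 with ⟨h2a, h2b⟩ | ⟨h2a, h2b⟩ | ⟨h2a, h2b⟩ <;>
  first
    | (simp_all [sub_eq_zero, sub_eq_self]; done)
    | exact absurd (by linear_combination h1a - h2a) hne
    | exact absurd (by linear_combination h2a - h1a) hne
    | linear_combination h1a
    | linear_combination h2a
    | linear_combination h1a - h2a
    | linear_combination h2a - h1a
    | linear_combination h1a + h2a
    | simp_all [sub_eq_zero, sub_eq_self]

lemma lineC1 {x2 y2 z1 z2 : ZMod n} (hx : x2 ≠ 0) (hy : y2 ≠ 0) (hne : x2 ≠ y2)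
    (hz : (z1, z2) ∈ cayS n) (h1 : (z1, z2 - x2) ∈ cayS n) (h2 : (z1, z2 - y2) ∈ cayS n) :
    z1 = 0 := by
  rcases mk_mem_cayS'.1 hz with ⟨hza, hzb⟩ | ⟨hza, hzb⟩ | ⟨hza, hzb⟩ <;>
  rcases mk_mem_cayS'.1 h1 with ⟨h1a, h1b⟩ | ⟨h1a, h1b⟩ | ⟨h1a, h1b⟩ <;>
  rcases mk_mem_cayS'.1 h2 with ⟨h2a, h2b⟩ | ⟨h2a, h2b⟩ | ⟨h2a, h2b⟩ <;>
  first
    | (simp_all [sub_eq_zero, sub_eq_self]; done)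
    | exact absurd (by linear_combination h1a - h2a) hne
    | exact absurd (by linear_combination h2a - h1a) hne
    | linear_combination h1a
    | linear_combination h2a
    | linear_combination h1a - h2a
    | linear_combination h2a - h1a
    | linear_combination h1a + h2a
    | simp_all [sub_eq_zero, sub_eq_self]

lemma lineC2 {x1 y1 z1 z2 : ZMod n} (hx : x1 ≠ 0) (hy : y1 ≠ 0) (hne : x1 ≠ y1)
    (hz : (z1, z2) ∈ cayS n) (h1 : (z1 - x1, z2 - x1) ∈ cayS n)
    (h2 : (z1 - y1, z2 - y1) ∈ cayS n) : z1 = z2 := by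
  rcases mk_mem_cayS'.1 hz with ⟨hza, hzb⟩ | ⟨hza, hzb⟩ | ⟨hza, hzb⟩ <;>
  rcases mk_mem_cayS'.1 h1 with ⟨h1a, h1b⟩ | ⟨h1a, h1b⟩ | ⟨h1a, h1b⟩ <;>
  rcases mk_mem_cayS'.1 h2 with ⟨h2a, h2b⟩ | ⟨h2a, h2b⟩ | ⟨h2a, h2b⟩ <;>
  first
    | (simp_all [sub_eq_zero, sub_eq_self]; done)
    | exact absurd (by linear_combination h1a - h2a) hne
    | exact absurd (by linear_combination h2a - h1a) hne
    | linear_combination h1a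
    | linear_combination h2a
    | linear_combination h1a - h2a
    | linear_combination h2a - h1a
    | linear_combination h1a + h2a
    | simp_all [sub_eq_zero, sub_eq_self]

set_option linter.unreachableTactic false
set_option linter.unusedTactic false

def bp (i : Fin 3) (a : ZMod n) : ZMod n × ZMod n :=
  match i with | 0 => (a, 0) | 1 => (0, a) | 2 => (a, a)

def inL (i : Fin 3) (p : ZMod n × ZMod n) : Prop :=
  match i with | 0 => p.2 = 0 | 1 => p.1 = 0 | 2 => p.1 = p.2

lemma inL_bp (i : Fin 3) (a : ZMod n) : inL i (bp i a) := by
  fin_cases i <;> simp [inL, bp]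

lemma bp_mem {a : ZMod n} (ha : a ≠ 0) (i : Fin 3) : bp i a ∈ cayS n := by
  fin_cases i <;> simp [bp, mk_mem_cayS', ha]

lemma bp_sub (i : Fin 3) (a b : ZMod n) : bp i a - bp i b = bp i (a - b) := by
  fin_cases i <;> simp [bp, Prod.ext_iff]

lemma bp_inj {i : Fin 3} {a b : ZMod n} (h : bp i a = bp i b) : a = b := by
  fin_cases i <;> simpa [bp, Prod.ext_iff] using h

lemma bp_cross_ne {i j : Fin 3} {a b : ZMod n} (hij : i ≠ j) (ha : a ≠ 0) :
    bp i a ≠ bp j b := by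
  intro h
  fin_cases i <;> fin_cases j <;> simp_all [bp, Prod.ext_iff] <;> tauto

lemma exists_inL {p : ZMod n × ZMod n} (h : p ∈ cayS n) : ∃ i, inL i p := by
  rcases h.2 with h' | h' | h'
  exacts [⟨0, h'⟩, ⟨1, h'⟩, ⟨2, h'⟩]

lemma ne_zero_coord₁ {p : ZMod n × ZMod n} (h : p ∈ cayS n) (h2 : p.2 = 0) : p.1 ≠ 0 :=
  fun hh => h.1 (Prod.ext hh h2)

lemma ne_zero_coord₂ {p : ZMod n × ZMod n} (h : p ∈ cayS n) (h1 : p.1 = 0) : p.2 ≠ 0 :=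
  fun hh => h.1 (Prod.ext h1 hh)

lemma ne_zero_coord₃ {p : ZMod n × ZMod n} (h : p ∈ cayS n) (hd : p.1 = p.2) : p.1 ≠ 0 :=
  fun hh => h.1 (Prod.ext hh (by rw [← hd]; exact hh))

lemma inL_same_adj {i : Fin 3} {p q : ZMod n × ZMod n} (hp : inL i p) (hq : inL i q)
    (hne : p ≠ q) : p - q ∈ cayS n := by
  have key : p - q = (p.1 - q.1, p.2 - q.2) := rfl
  fin_cases i
  · simp only [inL] at hp hq
    rw [key, mk_mem_cayS']
    refine Or.inl ⟨fun h => hne (Prod.ext (sub_eq_zero.1 h) (by rw [hp, hq])), by rw [hp, hq, sub_self]⟩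
  · simp only [inL] at hp hq
    rw [key, mk_mem_cayS']
    refine Or.inr (Or.inl ⟨by rw [hp, hq, sub_self], fun h => hne (Prod.ext (by rw [hp, hq]) (sub_eq_zero.1 h))⟩)
  · simp only [inL] at hp hq
    rw [key, mk_mem_cayS']
    refine Or.inr (Or.inr ⟨by rw [hp, hq], fun h => hne (Prod.ext (sub_eq_zero.1 h) ?_)⟩)
    have h2 : p.2 - q.2 = 0 := by rw [← hp, ← hq]; exact h
    exact sub_eq_zero.1 h2

lemma lineC {i : Fin 3} {x y z : ZMod n × ZMod n} (hx : x ∈ cayS n) (hy : y ∈ cayS n)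
    (hz : z ∈ cayS n) (hxy : x ≠ y) (hix : inL i x) (hiy : inL i y)
    (h1 : z - x ∈ cayS n) (h2 : z - y ∈ cayS n) : inL i z := by
  have hzeta : (z.1, z.2) ∈ cayS n := by rwa [Prod.mk.eta]
  fin_cases i
  · simp only [inL] at hix hiy ⊢
    have hx1 := ne_zero_coord₁ hx hix
    have hy1 := ne_zero_coord₁ hy hiy
    have hne : x.1 ≠ y.1 := fun h => hxy (Prod.ext h (by rw [hix, hiy]))
    have e1 : z - x = (z.1 - x.1, z.2) := by
      rw [Prod.ext_iff]; constructor <;> simp [hix]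
    have e2 : z - y = (z.1 - y.1, z.2) := by
      rw [Prod.ext_iff]; constructor <;> simp [hiy]
    exact lineC0 hx1 hy1 hne hzeta (e1 ▸ h1) (e2 ▸ h2)
  · simp only [inL] at hix hiy ⊢
    have hx1 := ne_zero_coord₂ hx hix
    have hy1 := ne_zero_coord₂ hy hiy
    have hne : x.2 ≠ y.2 := fun h => hxy (Prod.ext (by rw [hix, hiy]) h)
    have e1 : z - x = (z.1, z.2 - x.2) := by
      rw [Prod.ext_iff]; constructor <;> simp [hix]
    have e2 : z - y = (z.1, z.2 - y.2) := by
      rw [Prod.ext_iff]; constructor <;> simp [hiy]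
    exact lineC1 hx1 hy1 hne hzeta (e1 ▸ h1) (e2 ▸ h2)
  · simp only [inL] at hix hiy ⊢
    have hx1 := ne_zero_coord₃ hx hix
    have hy1 := ne_zero_coord₃ hy hiy
    have hne : x.1 ≠ y.1 := fun h => hxy (Prod.ext h (by rw [← hix, ← hiy, h]))
    have e1 : z - x = (z.1 - x.1, z.2 - x.1) := by
      rw [Prod.ext_iff]; constructor <;> simp [hix]
    have e2 : z - y = (z.1 - y.1, z.2 - y.1) := by
      rw [Prod.ext_iff]; constructor <;> simp [hiy]
    exact lineC2 hx1 hy1 hne hzeta (e1 ▸ h1) (e2 ▸ h2)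

lemma zero_not_mem : (0 : ZMod n × ZMod n) ∉ cayS n := fun h => h.1 rfl

lemma neg_mem_cayS {p : ZMod n × ZMod n} : -p ∈ cayS n ↔ p ∈ cayS n := by
  simp only [mem_cayS', Prod.fst_neg, Prod.snd_neg, neg_eq_zero, neg_inj, ne_eq]

lemma adj_iff' {x y : ZMod n × ZMod n} : (Gamma n).Adj x y ↔ x - y ∈ cayS n := adj_iff

/-- The triangle-shape lemma: a triangle with one vertex on each line. -/
lemma triD {a b c : ZMod n} (ha : a ≠ 0) (hb : b ≠ 0) (hc : c ≠ 0)
    (hxy : (a, -b) ∈ cayS n) (hxz : (a - c, -c) ∈ cayS n) (hyz : (-c, b - c) ∈ cayS n) :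
    b = a ∧ c = a ∧ a + a = 0 := by
  have h1 : c = a := by
    rcases mk_mem_cayS'.1 hxz with ⟨h1a, h1b⟩ | ⟨h1a, h1b⟩ | ⟨h1a, h1b⟩
    · exact absurd (neg_eq_zero.1 h1b) hc
    · linear_combination -h1a
    · exact absurd (by linear_combination h1a) ha
  have h2 : b = c := by
    rcases mk_mem_cayS'.1 hyz with ⟨h2a, h2b⟩ | ⟨h2a, h2b⟩ | ⟨h2a, h2b⟩
    · linear_combination h2b
    · exact absurd (neg_eq_zero.1 h2a) hc
    · exact absurd (by linear_combination -h2a) hb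
  refine ⟨h2.trans h1, h1, ?_⟩
  rcases mk_mem_cayS'.1 hxy with ⟨h3a, h3b⟩ | ⟨h3a, h3b⟩ | ⟨h3a, h3b⟩
  · exact absurd (neg_eq_zero.1 h3b) hb
  · exact absurd h3a ha
  · linear_combination h3a - h2 - h1

lemma inL_repr {j : Fin 3} {p : ZMod n × ZMod n} (hp : p ∈ cayS n) (hj : inL j p) :
    ∃ v, v ≠ 0 ∧ p = bp j v := by
  fin_cases j
  · exact ⟨p.1, ne_zero_coord₁ hp hj, Prod.ext rfl hj⟩
  · exact ⟨p.2, ne_zero_coord₂ hp hj, Prod.ext hj rfl⟩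
  · exact ⟨p.1, ne_zero_coord₃ hp hj, Prod.ext rfl (by exact hj.symm ▸ rfl)⟩

lemma triShape {x y z : ZMod n × ZMod n} (hx : x ∈ cayS n) (hy : y ∈ cayS n)
    (hz : z ∈ cayS n) (h0x : inL 0 x) (h1y : inL 1 y) (h2z : inL 2 z)
    (hxy : x - y ∈ cayS n) (hxz : x - z ∈ cayS n) (hyz : y - z ∈ cayS n) :
    ∃ w : ZMod n, w ≠ 0 ∧ w + w = 0 ∧ x = bp 0 w ∧ y = bp 1 w ∧ z = bp 2 w := by
  obtain ⟨a, ha, rfl⟩ := inL_repr hx h0x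
  obtain ⟨b, hb, rfl⟩ := inL_repr hy h1y
  obtain ⟨c, hc, rfl⟩ := inL_repr hz h2z
  have e1 : bp 0 a - bp 1 b = ((a, -b) : ZMod n × ZMod n) := by
    simp [bp, Prod.ext_iff]
  have e2 : bp 0 a - bp 2 c = ((a - c, -c) : ZMod n × ZMod n) := by
    simp [bp, Prod.ext_iff]
  have e3 : bp 1 b - bp 2 c = ((-c, b - c) : ZMod n × ZMod n) := by
    simp [bp, Prod.ext_iff]
  obtain ⟨k1, k2, k3⟩ := triD ha hb hc (e1 ▸ hxy) (e2 ▸ hxz) (e3 ▸ hyz)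
  exact ⟨a, ha, k3, rfl, by rw [k1], by rw [k2]⟩

section Aut

variable (e : Gamma n ≃g Gamma n)

lemma adj_zero {x : ZMod n × ZMod n} : (Gamma n).Adj 0 x ↔ x ∈ cayS n := by
  rw [adj_iff, zero_sub, neg_mem_cayS]

lemma hmem (h0 : e 0 = 0) (p : ZMod n × ZMod n) : e p ∈ cayS n ↔ p ∈ cayS n := by
  have h := e.map_rel_iff (a := 0) (b := p)
  rw [h0] at h
  rw [← adj_zero, ← adj_zero]
  exact h

lemma hdiff (p q : ZMod n × ZMod n) : e p - e q ∈ cayS n ↔ p - q ∈ cayS n := by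
  rw [← adj_iff, ← adj_iff]
  exact e.map_rel_iff

lemma einj : Function.Injective e := e.toEquiv.injective

end Aut

lemma cast_ne (hn : 4 ≤ n) {a b : ℕ} (ha : a < n) (hb : b < n) (hab : a ≠ b) :
    (a : ZMod n) ≠ (b : ZMod n) := by
  haveI : NeZero n := ⟨by omega⟩
  intro h
  apply hab
  have h2 := congrArg ZMod.val h
  rwa [ZMod.val_cast_of_lt ha, ZMod.val_cast_of_lt hb] at h2

lemma one_nz (hn : 4 ≤ n) : (1 : ZMod n) ≠ 0 := by
  have := cast_ne hn (a := 1) (b := 0) (by omega) (by omega) (by omega); simpa using this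

lemma two_nz (hn : 4 ≤ n) : (2 : ZMod n) ≠ 0 := by
  have := cast_ne hn (a := 2) (b := 0) (by omega) (by omega) (by omega); simpa using this

lemma three_nz (hn : 4 ≤ n) : (3 : ZMod n) ≠ 0 := by
  have := cast_ne hn (a := 3) (b := 0) (by omega) (by omega) (by omega); simpa using this

lemma one_ne_two (hn : 4 ≤ n) : (1 : ZMod n) ≠ 2 := by
  have := cast_ne hn (a := 1) (b := 2) (by omega) (by omega) (by omega); simpa using this

lemma one_ne_three (hn : 4 ≤ n) : (1 : ZMod n) ≠ 3 := by
  have := cast_ne hn (a := 1) (b := 3) (by omega) (by omega) (by omega); simpa using this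

lemma two_ne_three (hn : 4 ≤ n) : (2 : ZMod n) ≠ 3 := by
  have := cast_ne hn (a := 2) (b := 3) (by omega) (by omega) (by omega); simpa using this

lemma four_nz (hn5 : 5 ≤ n) : (4 : ZMod n) ≠ 0 := by
  have := cast_ne (by omega : 4 ≤ n) (a := 4) (b := 0) (by omega) (by omega) (by omega)
  simpa using this

lemma one_ne_four (hn5 : 5 ≤ n) : (1 : ZMod n) ≠ 4 := by
  have := cast_ne (by omega : 4 ≤ n) (a := 1) (b := 4) (by omega) (by omega) (by omega)
  simpa using this

lemma two_ne_four (hn5 : 5 ≤ n) : (2 : ZMod n) ≠ 4 := by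
  have := cast_ne (by omega : 4 ≤ n) (a := 2) (b := 4) (by omega) (by omega) (by omega)
  simpa using this

lemma three_ne_four (hn5 : 5 ≤ n) : (3 : ZMod n) ≠ 4 := by
  have := cast_ne (by omega : 4 ≤ n) (a := 3) (b := 4) (by omega) (by omega) (by omega)
  simpa using this

section Star

variable (e : Gamma n ≃g Gamma n)

/-- If two images of a star lie on a common line, all images do. -/
lemma starLine_pos (h0 : e 0 = 0) (i : Fin 3) {a b : ZMod n} {j : Fin 3}
    (ha : a ≠ 0) (hb : b ≠ 0) (hab : a ≠ b)
    (hja : inL j (e (bp i a))) (hjb : inL j (e (bp i b))) :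
    ∀ c, c ≠ 0 → inL j (e (bp i c)) := by
  intro c hc
  rcases eq_or_ne c a with rfl | hca
  · exact hja
  rcases eq_or_ne c b with rfl | hcb
  · exact hjb
  have memS : ∀ t : ZMod n, t ≠ 0 → e (bp i t) ∈ cayS n := fun t ht =>
    (hmem e h0 _).2 (bp_mem ht i)
  have diff : ∀ s t : ZMod n, s ≠ t → e (bp i s) - e (bp i t) ∈ cayS n := fun s t hst => by
    rw [hdiff, bp_sub]
    exact bp_mem (sub_ne_zero_of_ne hst) i
  have hne : e (bp i a) ≠ e (bp i b) := fun h => hab (bp_inj (einj e h))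
  exact lineC (memS a ha) (memS b hb) (memS c hc) hne hja hjb
    (diff c a hca) (diff c b hcb)

/-- The exceptional configuration: all three images on pairwise different lines. -/
lemma Kshape (hn : 4 ≤ n) (h0 : e 0 = 0) (i : Fin 3) {j1 j2 j3 : Fin 3}
    (hj1 : inL j1 (e (bp i 1))) (hj2 : inL j2 (e (bp i 2))) (hj3 : inL j3 (e (bp i 3)))
    (h12 : j1 ≠ j2) (h13 : j1 ≠ j3) (h23 : j2 ≠ j3) :
    ∃ w : ZMod n, w ≠ 0 ∧ w + w = 0 ∧
      ∀ j : Fin 3, ∃ t : ZMod n, t ≠ 0 ∧ e (bp i t) = bp j w := by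
  have memS : ∀ t : ZMod n, t ≠ 0 → e (bp i t) ∈ cayS n := fun t ht =>
    (hmem e h0 _).2 (bp_mem ht i)
  have diff : ∀ s t : ZMod n, s ≠ t → e (bp i s) - e (bp i t) ∈ cayS n := fun s t hst => by
    rw [hdiff, bp_sub]
    exact bp_mem (sub_ne_zero_of_ne hst) i
  have m1 := memS 1 (one_nz hn)
  have m2 := memS 2 (two_nz hn)
  have m3 := memS 3 (three_nz hn)
  have d12 := diff 1 2 (one_ne_two hn)
  have d21 := diff 2 1 (Ne.symm (one_ne_two hn))
  have d13 := diff 1 3 (one_ne_three hn)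
  have d31 := diff 3 1 (Ne.symm (one_ne_three hn))
  have d23 := diff 2 3 (two_ne_three hn)
  have d32 := diff 3 2 (Ne.symm (two_ne_three hn))
  have n1 := one_nz hn
  have n2 := two_nz hn
  have n3 := three_nz hn
  fin_cases j1 <;> fin_cases j2 <;> fin_cases j3 <;>
    first
      | exact absurd rfl h12
      | exact absurd rfl h13
      | exact absurd rfl h23
      | skip
  · obtain ⟨w, hw0, hww, e1, e2, e3⟩ := triShape m1 m2 m3 hj1 hj2 hj3 d12 d13 d23
    refine ⟨w, hw0, hww, fun j => ?_⟩
    fin_cases j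
    exacts [⟨1, n1, e1⟩, ⟨2, n2, e2⟩, ⟨3, n3, e3⟩]
  · obtain ⟨w, hw0, hww, e1, e2, e3⟩ := triShape m1 m3 m2 hj1 hj3 hj2 d13 d12 d32
    refine ⟨w, hw0, hww, fun j => ?_⟩
    fin_cases j
    exacts [⟨1, n1, e1⟩, ⟨3, n3, e2⟩, ⟨2, n2, e3⟩]
  · obtain ⟨w, hw0, hww, e1, e2, e3⟩ := triShape m2 m1 m3 hj2 hj1 hj3 d21 d23 d13
    refine ⟨w, hw0, hww, fun j => ?_⟩
    fin_cases j
    exacts [⟨2, n2, e1⟩, ⟨1, n1, e2⟩, ⟨3, n3, e3⟩]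
  · obtain ⟨w, hw0, hww, e1, e2, e3⟩ := triShape m3 m1 m2 hj3 hj1 hj2 d31 d32 d12
    refine ⟨w, hw0, hww, fun j => ?_⟩
    fin_cases j
    exacts [⟨3, n3, e1⟩, ⟨1, n1, e2⟩, ⟨2, n2, e3⟩]
  · obtain ⟨w, hw0, hww, e1, e2, e3⟩ := triShape m2 m3 m1 hj2 hj3 hj1 d23 d21 d31
    refine ⟨w, hw0, hww, fun j => ?_⟩
    fin_cases j
    exacts [⟨2, n2, e1⟩, ⟨3, n3, e2⟩, ⟨1, n1, e3⟩]
  · obtain ⟨w, hw0, hww, e1, e2, e3⟩ := triShape m3 m2 m1 hj3 hj2 hj1 d32 d31 d21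
    refine ⟨w, hw0, hww, fun j => ?_⟩
    fin_cases j
    exacts [⟨3, n3, e1⟩, ⟨2, n2, e2⟩, ⟨1, n1, e3⟩]

end Star

lemma inL_unique {j j' : Fin 3} {p : ZMod n × ZMod n} (hp : p ∈ cayS n)
    (h1 : inL j p) (h2 : inL j' p) : j = j' := by
  fin_cases j <;> fin_cases j' <;> first
    | rfl
    | (exfalso; apply hp.1; simp only [inL] at h1 h2;
       exact Prod.ext (by simp_all) (by simp_all))

lemma starLine (hn : 4 ≤ n) (e : Gamma n ≃g Gamma n) (h0 : e 0 = 0) (i : Fin 3) :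
    ∃ j : Fin 3, ∀ a : ZMod n, a ≠ 0 → inL j (e (bp i a)) := by
  have n1 := one_nz hn
  have n2 := two_nz hn
  have n3 := three_nz hn
  have memS : ∀ (i' : Fin 3) (t : ZMod n), t ≠ 0 → e (bp i' t) ∈ cayS n := fun i' t ht =>
    (hmem e h0 _).2 (bp_mem ht i')
  obtain ⟨j1, hj1⟩ := exists_inL (memS i 1 n1)
  obtain ⟨j2, hj2⟩ := exists_inL (memS i 2 n2)
  obtain ⟨j3, hj3⟩ := exists_inL (memS i 3 n3)
  by_cases h12 : j1 = j2
  · exact ⟨j1, starLine_pos e h0 i n1 n2 (one_ne_two hn) hj1 (h12 ▸ hj2)⟩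
  by_cases h13 : j1 = j3
  · exact ⟨j1, starLine_pos e h0 i n1 n3 (one_ne_three hn) hj1 (h13 ▸ hj3)⟩
  by_cases h23 : j2 = j3
  · exact ⟨j2, starLine_pos e h0 i n2 n3 (two_ne_three hn) hj2 (h23 ▸ hj3)⟩
  exfalso
  rcases Nat.lt_or_ge n 5 with h45 | h5
  · -- the case n = 4
    have hn4 : n = 4 := by omega
    subst hn4
    obtain ⟨w, hw0, hww, hK⟩ := Kshape e hn h0 i hj1 hj2 hj3 h12 h13 h23
    obtain ⟨i', hi'i⟩ : ∃ i' : Fin 3, i' ≠ i := by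
      fin_cases i
      exacts [⟨1, by decide⟩, ⟨0, by decide⟩, ⟨0, by decide⟩]
    obtain ⟨j1', hj1'⟩ := exists_inL (memS i' 1 n1)
    obtain ⟨j2', hj2'⟩ := exists_inL (memS i' 2 n2)
    obtain ⟨j3', hj3'⟩ := exists_inL (memS i' 3 n3)
    -- helper to finish from "all three images of star i' lie on line j'"
    have finish : ∀ j' : Fin 3, (∀ c : ZMod 4, c ≠ 0 → inL j' (e (bp i' c))) → False := by
      intro j' hall
      obtain ⟨v1, hv1, hx1⟩ := inL_repr (memS i' 1 n1) (hall 1 n1)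
      obtain ⟨v2, hv2, hx2⟩ := inL_repr (memS i' 2 n2) (hall 2 n2)
      obtain ⟨v3, hv3, hx3⟩ := inL_repr (memS i' 3 n3) (hall 3 n3)
      have hvne : v1 ≠ v2 ∧ v1 ≠ v3 ∧ v2 ≠ v3 := by
        refine ⟨fun h => ?_, fun h => ?_, fun h => ?_⟩
        · exact (one_ne_two hn) (bp_inj (einj e
            (hx1.trans ((show bp j' v1 = bp j' v2 by rw [h]).trans hx2.symm))))
        · exact (one_ne_three hn) (bp_inj (einj e
            (hx1.trans ((show bp j' v1 = bp j' v3 by rw [h]).trans hx3.symm))))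
        · exact (two_ne_three hn) (bp_inj (einj e
            (hx2.trans ((show bp j' v2 = bp j' v3 by rw [h]).trans hx3.symm))))
      have dec : ∀ (w v1 v2 v3 : ZMod 4), w ≠ 0 → v1 ≠ 0 → v2 ≠ 0 → v3 ≠ 0 →
          v1 ≠ v2 → v1 ≠ v3 → v2 ≠ v3 → (w = v1 ∨ w = v2 ∨ w = v3) := by decide
      have hw_mem : w = v1 ∨ w = v2 ∨ w = v3 :=
        dec w v1 v2 v3 hw0 hv1 hv2 hv3 hvne.1 hvne.2.1 hvne.2.2
      obtain ⟨s, hs0, hsE⟩ := hK j'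
      rcases hw_mem with h | h | h
      · exact bp_cross_ne hi'i n1 (einj e (hx1.trans (by rw [h]) |>.trans hsE.symm))
      · exact bp_cross_ne hi'i n2 (einj e (hx2.trans (by rw [h]) |>.trans hsE.symm))
      · exact bp_cross_ne hi'i n3 (einj e (hx3.trans (by rw [h]) |>.trans hsE.symm))
    by_cases g12 : j1' = j2'
    · exact finish j1' (starLine_pos e h0 i' n1 n2 (one_ne_two hn) hj1' (g12 ▸ hj2'))
    by_cases g13 : j1' = j3'
    · exact finish j1' (starLine_pos e h0 i' n1 n3 (one_ne_three hn) hj1' (g13 ▸ hj3'))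
    by_cases g23 : j2' = j3'
    · exact finish j2' (starLine_pos e h0 i' n2 n3 (two_ne_three hn) hj2' (g23 ▸ hj3'))
    · obtain ⟨w', hw0', hww', hK'⟩ := Kshape e hn h0 i' hj1' hj2' hj3' g12 g13 g23
      have dec2 : ∀ (w w' : ZMod 4), w ≠ 0 → w + w = 0 → w' ≠ 0 → w' + w' = 0 → w = w' := by
        decide
      have hwe : w = w' := dec2 w w' hw0 hww hw0' hww'
      obtain ⟨s, hs0, hsE⟩ := hK 0
      obtain ⟨s', hs0', hsE'⟩ := hK' 0
      exact bp_cross_ne hi'i hs0' (einj e (hsE'.trans (by rw [hwe]) |>.trans hsE.symm))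
  · -- n ≥ 5 : pigeonhole using the image of 4
    obtain ⟨j4, hj4⟩ := exists_inL (memS i 4 (four_nz h5))
    have dec3 : ∀ (a b c d : Fin 3), ¬a = b → ¬a = c → ¬b = c → (d = a ∨ d = b ∨ d = c) := by
      decide
    rcases dec3 j1 j2 j3 j4 h12 h13 h23 with h | h | h
    · have := starLine_pos e h0 i n1 (four_nz h5) (one_ne_four h5) hj1 (h ▸ hj4) 2 n2
      exact h12 (inL_unique (memS i 2 n2) this hj2)
    · have := starLine_pos e h0 i n2 (four_nz h5) (two_ne_four h5) hj2 (h ▸ hj4) 1 n1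
      exact h12 (inL_unique (memS i 1 n1) hj1 this)
    · have := starLine_pos e h0 i n3 (four_nz h5) (three_ne_four h5) hj3 (h ▸ hj4) 1 n1
      exact h13 (inL_unique (memS i 1 n1) hj1 this)

lemma mem_cayS_smul (u : (ZMod n)ˣ) (p : ZMod n × ZMod n) :
    ((u : ZMod n) * p.1, (u : ZMod n) * p.2) ∈ cayS n ↔ p ∈ cayS n := by
  rw [show p ∈ cayS n ↔ _ from Iff.rfl]
  simp only [cayS, Set.mem_setOf_eq, ne_eq, Prod.mk_eq_zero, Units.mul_right_eq_zero,
    Units.mul_right_inj]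
  rw [show (p = 0) ↔ (p.1 = 0 ∧ p.2 = 0) by rw [Prod.ext_iff]; simp]


def gmap (k : Fin 6) (p : ZMod n × ZMod n) : ZMod n × ZMod n :=
  match k with
  | 0 => (p.1, p.2)
  | 1 => (p.2, p.1)
  | 2 => (p.1, p.1 - p.2)
  | 3 => (p.2 - p.1, p.2)
  | 4 => (p.1 - p.2, p.1)
  | 5 => (p.2, p.2 - p.1)

def ginv (k : Fin 6) : Fin 6 :=
  match k with
  | 0 => 0 | 1 => 1 | 2 => 2 | 3 => 3 | 4 => 5 | 5 => 4

lemma eq_sub_self_iff {a b : ZMod n} : a = a - b ↔ b = 0 := by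
  rw [eq_comm, sub_eq_self]

lemma gmap_ginv (k : Fin 6) (p : ZMod n × ZMod n) : gmap (ginv k) (gmap k p) = p := by
  fin_cases k <;> simp [gmap, ginv, Prod.ext_iff] <;> ring_nf

lemma ginv_ginv (k : Fin 6) : ginv (ginv k) = k := by fin_cases k <;> rfl

lemma gmap_sub (k : Fin 6) (p q : ZMod n × ZMod n) : gmap k (p - q) = gmap k p - gmap k q := by
  fin_cases k <;> simp [gmap, Prod.ext_iff] <;> ring

lemma mem_cayS_gmap (k : Fin 6) (p : ZMod n × ZMod n) : gmap k p ∈ cayS n ↔ p ∈ cayS n := by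
  fin_cases k <;>
  · simp only [gmap, mem_cayS', sub_eq_zero, sub_eq_self, ne_eq]
    try rfl
    all_goals try (constructor <;> intro h <;>
      rcases h with ⟨h1, h2⟩ | ⟨h1, h2⟩ | ⟨h1, h2⟩ <;>
      simp_all [sub_eq_zero, sub_eq_self, eq_sub_self_iff] <;> try tauto)


def stdFun (c : ZMod n × ZMod n) (u : (ZMod n)ˣ) (k : Fin 6) (p : ZMod n × ZMod n) :
    ZMod n × ZMod n :=
  ((u : ZMod n) * (gmap k p).1 + c.1, (u : ZMod n) * (gmap k p).2 + c.2)

def gEquiv (k : Fin 6) : (ZMod n × ZMod n) ≃ (ZMod n × ZMod n) where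
  toFun := gmap k
  invFun := gmap (ginv k)
  left_inv := fun p => gmap_ginv k p
  right_inv := fun p => by
    have := gmap_ginv (ginv k) p
    rwa [ginv_ginv] at this

def uEquiv (u : (ZMod n)ˣ) : (ZMod n × ZMod n) ≃ (ZMod n × ZMod n) where
  toFun := fun p => ((u : ZMod n) * p.1, (u : ZMod n) * p.2)
  invFun := fun p => ((u⁻¹ : (ZMod n)ˣ) * p.1, ((u⁻¹ : (ZMod n)ˣ) : ZMod n) * p.2)
  left_inv := fun p => by simp [Prod.ext_iff]
  right_inv := fun p => by simp [Prod.ext_iff]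

def stdEquiv (c : ZMod n × ZMod n) (u : (ZMod n)ˣ) (k : Fin 6) :
    (ZMod n × ZMod n) ≃ (ZMod n × ZMod n) :=
  ((gEquiv k).trans (uEquiv u)).trans (Equiv.addRight c)

lemma stdEquiv_apply (c : ZMod n × ZMod n) (u : (ZMod n)ˣ) (k : Fin 6) (p : ZMod n × ZMod n) :
    stdEquiv c u k p = stdFun c u k p := rfl

lemma stdFun_sub (c : ZMod n × ZMod n) (u : (ZMod n)ˣ) (k : Fin 6) (p q : ZMod n × ZMod n) :
    stdFun c u k p - stdFun c u k q =
      ((u : ZMod n) * (gmap k (p - q)).1, (u : ZMod n) * (gmap k (p - q)).2) := by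
  simp only [stdFun, gmap_sub, Prod.ext_iff, Prod.fst_sub, Prod.snd_sub]
  constructor <;> ring

def std (c : ZMod n × ZMod n) (u : (ZMod n)ˣ) (k : Fin 6) : Gamma n ≃g Gamma n where
  toEquiv := stdEquiv c u k
  map_rel_iff' := by
    intro p q
    rw [adj_iff, adj_iff, stdEquiv_apply, stdEquiv_apply, stdFun_sub,
      mem_cayS_smul, mem_cayS_gmap]

lemma std_apply (c : ZMod n × ZMod n) (u : (ZMod n)ˣ) (k : Fin 6) (p : ZMod n × ZMod n) :
    std c u k p = ((u : ZMod n) * (gmap k p).1 + c.1, (u : ZMod n) * (gmap k p).2 + c.2) := rfl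

lemma gmap_zero (k : Fin 6) : gmap k (0 : ZMod n × ZMod n) = 0 := by
  fin_cases k <;> simp [gmap]

lemma starDistinct (hn : 4 ≤ n) (e : Gamma n ≃g Gamma n) (h0 : e 0 = 0)
    {i i' j : Fin 3} (hii : i ≠ i')
    (hi : ∀ a : ZMod n, a ≠ 0 → inL j (e (bp i a)))
    (hi' : ∀ a : ZMod n, a ≠ 0 → inL j (e (bp i' a))) : False := by
  have n1 := one_nz hn
  have n2 := two_nz hn
  have n12 := one_ne_two hn
  -- choose b depending on (i, i')
  have main : ∀ b : ZMod n, b ≠ 0 → bp i 1 - bp i' b ∈ cayS n := by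
    intro b hb
    have hEa := hi 1 n1
    have hEb := hi' b hb
    have hne : e (bp i 1) ≠ e (bp i' b) := fun h => bp_cross_ne hii n1 (einj e h)
    exact (hdiff e _ _).1 (inL_same_adj hEa hEb hne)
  fin_cases i <;> fin_cases i' <;> first
    | exact hii rfl
    | (have hS := main 1 n1
       have hS' : ((1 : ZMod n) - 0, (0 : ZMod n) - 1) ∈ cayS n := hS
       rcases mk_mem_cayS'.1 hS' with ⟨h1, h2⟩ | ⟨h1, h2⟩ | ⟨h1, h2⟩ <;>
         first
           | exact n1 (by linear_combination h1)
           | exact n1 (by linear_combination h2)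
           | exact n1 (by linear_combination -h1)
           | exact n1 (by linear_combination -h2)
           | exact n2 (by linear_combination h1)
           | exact n2 (by linear_combination -h1)
           | exact n12 (by linear_combination h1)
           | exact n12 (by linear_combination -h1)
           | exact n12 (by linear_combination h2)
           | exact n12 (by linear_combination -h2))
    | (have hS := main 1 n1
       have hS' : ((0 : ZMod n) - 1, (1 : ZMod n) - 0) ∈ cayS n := hS
       rcases mk_mem_cayS'.1 hS' with ⟨h1, h2⟩ | ⟨h1, h2⟩ | ⟨h1, h2⟩ <;>
         first
           | exact n1 (by linear_combination h1)
           | exact n1 (by linear_combination h2)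
           | exact n1 (by linear_combination -h1)
           | exact n1 (by linear_combination -h2)
           | exact n2 (by linear_combination h1)
           | exact n2 (by linear_combination -h1)
           | exact n12 (by linear_combination h1)
           | exact n12 (by linear_combination -h1)
           | exact n12 (by linear_combination h2)
           | exact n12 (by linear_combination -h2))
    | (have hS := main 2 n2
       have hS' : ((1 : ZMod n) - 2, (0 : ZMod n) - 2) ∈ cayS n := hS
       rcases mk_mem_cayS'.1 hS' with ⟨h1, h2⟩ | ⟨h1, h2⟩ | ⟨h1, h2⟩ <;>
         first
           | exact n1 (by linear_combination h1)
           | exact n1 (by linear_combination h2)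
           | exact n1 (by linear_combination -h1)
           | exact n1 (by linear_combination -h2)
           | exact n2 (by linear_combination h1)
           | exact n2 (by linear_combination -h1)
           | exact n2 (by linear_combination h2)
           | exact n2 (by linear_combination -h2)
           | exact n12 (by linear_combination h1)
           | exact n12 (by linear_combination -h1)
           | exact n12 (by linear_combination h2)
           | exact n12 (by linear_combination -h2))
    | (have hS := main 2 n2
       have hS' : ((0 : ZMod n) - 2, (1 : ZMod n) - 2) ∈ cayS n := hS
       rcases mk_mem_cayS'.1 hS' with ⟨h1, h2⟩ | ⟨h1, h2⟩ | ⟨h1, h2⟩ <;>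
         first
           | exact n1 (by linear_combination h1)
           | exact n1 (by linear_combination h2)
           | exact n1 (by linear_combination -h1)
           | exact n1 (by linear_combination -h2)
           | exact n2 (by linear_combination h1)
           | exact n2 (by linear_combination -h1)
           | exact n2 (by linear_combination h2)
           | exact n2 (by linear_combination -h2)
           | exact n12 (by linear_combination h1)
           | exact n12 (by linear_combination -h1)
           | exact n12 (by linear_combination h2)
           | exact n12 (by linear_combination -h2))
    | (have hS := main 2 n2
       have hS' : ((1 : ZMod n) - 2, (1 : ZMod n) - 0) ∈ cayS n := hS
       rcases mk_mem_cayS'.1 hS' with ⟨h1, h2⟩ | ⟨h1, h2⟩ | ⟨h1, h2⟩ <;>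
         first
           | exact n1 (by linear_combination h1)
           | exact n1 (by linear_combination h2)
           | exact n1 (by linear_combination -h1)
           | exact n1 (by linear_combination -h2)
           | exact n2 (by linear_combination h1)
           | exact n2 (by linear_combination -h1)
           | exact n2 (by linear_combination h2 - h1)
           | exact n2 (by linear_combination h1 - h2)
           | exact n12 (by linear_combination h1)
           | exact n12 (by linear_combination -h1)
           | exact n12 (by linear_combination h2)
           | exact n12 (by linear_combination -h2))
    | (have hS := main 2 n2
       have hS' : ((1 : ZMod n) - 0, (1 : ZMod n) - 2) ∈ cayS n := hS
       rcases mk_mem_cayS'.1 hS' with ⟨h1, h2⟩ | ⟨h1, h2⟩ | ⟨h1, h2⟩ <;>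
         first
           | exact n1 (by linear_combination h1)
           | exact n1 (by linear_combination h2)
           | exact n1 (by linear_combination -h1)
           | exact n1 (by linear_combination -h2)
           | exact n2 (by linear_combination h1)
           | exact n2 (by linear_combination -h1)
           | exact n2 (by linear_combination h2 - h1)
           | exact n2 (by linear_combination h1 - h2)
           | exact n12 (by linear_combination h1)
           | exact n12 (by linear_combination -h1)
           | exact n12 (by linear_combination h2)
           | exact n12 (by linear_combination -h2))

lemma fix0' (hn : 4 ≤ n) (e : Gamma n ≃g Gamma n) (h0 : e 0 = 0)
    (hL : ∀ i : Fin 3, ∀ a : ZMod n, a ≠ 0 → inL i (e (bp i a))) :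
    ∃ u : (ZMod n)ˣ, ∀ p : ZMod n × ZMod n,
      e p = ((u : ZMod n) * p.1, (u : ZMod n) * p.2) := by
  haveI : NeZero n := ⟨by omega⟩
  set α : ZMod n → ZMod n := fun a => (e (a, 0)).1 with hα
  have A0 : α 0 = 0 := by
    have h00 : ((0 : ZMod n), (0 : ZMod n)) = (0 : ZMod n × ZMod n) := rfl
    show (e ((0 : ZMod n), (0 : ZMod n))).1 = 0
    rw [h00, h0]
    rfl
  have hSmem : ∀ p, e p ∈ cayS n ↔ p ∈ cayS n := hmem e h0
  have hD : ∀ p q, e p - e q ∈ cayS n ↔ p - q ∈ cayS n := hdiff e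
  have hA : ∀ a : ZMod n, a ≠ 0 → e (a, 0) = (α a, 0) := fun a ha =>
    Prod.ext rfl (hL 0 a ha)
  have hAnz : ∀ a : ZMod n, a ≠ 0 → α a ≠ 0 := fun a ha =>
    ne_zero_coord₁ ((hSmem _).2 (bp_mem ha 0)) (hL 0 a ha)
  -- diagonal
  have hC : ∀ a : ZMod n, a ≠ 0 → e (a, a) = (α a, α a) := by
    intro a ha
    have hdiag : (e (a, a)).1 = (e (a, a)).2 := hL 2 a ha
    have hg : (e (a, a)).1 ≠ 0 := ne_zero_coord₃ ((hSmem _).2 (bp_mem ha 2)) hdiag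
    have key : e (a, 0) - e (a, a) ∈ cayS n := by
      rw [hD]
      have hd : ((a, (0 : ZMod n)) : ZMod n × ZMod n) - (a, a) = (0, -a) := by
        rw [Prod.mk_sub_mk]
        exact Prod.ext (by ring) (by ring)
      rw [hd, mk_mem_cayS']
      exact Or.inr (Or.inl ⟨rfl, neg_ne_zero.2 ha⟩)
    rw [hA a ha] at key
    have key' : (α a - (e (a, a)).1, 0 - (e (a, a)).2) ∈ cayS n := key
    rcases mk_mem_cayS'.1 key' with ⟨h1, h2⟩ | ⟨h1, h2⟩ | ⟨h1, h2⟩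
    · exact absurd (hdiag.trans (by linear_combination -h2)) hg
    · refine Prod.ext (by linear_combination -h1) ?_
      rw [← hdiag]
      exact (by linear_combination -h1 : (e (a,a)).1 = α a)
    · exact absurd (by linear_combination h1 + hdiag) (hAnz a ha)
  -- vertical
  have hB : ∀ a : ZMod n, a ≠ 0 → e (0, a) = (0, α a) := by
    intro a ha
    have hvert : (e (0, a)).1 = 0 := hL 1 a ha
    have hg : (e (0, a)).2 ≠ 0 := ne_zero_coord₂ ((hSmem _).2 (bp_mem ha 1)) hvert
    have key : e (0, a) - e (a, a) ∈ cayS n := by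
      rw [hD]
      have hd : (((0 : ZMod n), a) : ZMod n × ZMod n) - (a, a) = (-a, 0) := by
        rw [Prod.mk_sub_mk]
        exact Prod.ext (by ring) (by ring)
      rw [hd, mk_mem_cayS']
      exact Or.inl ⟨neg_ne_zero.2 ha, rfl⟩
    rw [hC a ha] at key
    have key' : ((e (0, a)).1 - α a, (e (0, a)).2 - α a) ∈ cayS n := key
    rcases mk_mem_cayS'.1 key' with ⟨h1, h2⟩ | ⟨h1, h2⟩ | ⟨h1, h2⟩
    · exact Prod.ext hvert (by linear_combination h2)
    · exact absurd (by linear_combination hvert - h1) (hAnz a ha)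
    · exact absurd (by linear_combination hvert - h1) hg
  -- negation
  have hneg : ∀ a : ZMod n, a ≠ 0 → α (-a) = -α a := by
    intro a ha
    have hna : (-a : ZMod n) ≠ 0 := neg_ne_zero.2 ha
    have key : e (a, 0) - e (0, -a) ∈ cayS n := by
      rw [hD]
      have hd : ((a, (0 : ZMod n)) : ZMod n × ZMod n) - (0, -a) = (a, a) := by
        rw [Prod.mk_sub_mk]
        exact Prod.ext (by ring) (by ring)
      rw [hd, mk_mem_cayS']
      exact Or.inr (Or.inr ⟨rfl, ha⟩)
    rw [hA a ha, hB (-a) hna] at key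
    have key' : (α a - 0, 0 - α (-a)) ∈ cayS n := key
    rcases mk_mem_cayS'.1 key' with ⟨h1, h2⟩ | ⟨h1, h2⟩ | ⟨h1, h2⟩
    · exact absurd (by linear_combination -h2) (hAnz _ hna)
    · exact absurd (by linear_combination h1) (hAnz a ha)
    · linear_combination h1
  -- injectivity of α
  have hInj : ∀ a b : ZMod n, α a = α b → a = b := by
    intro a b h
    rcases eq_or_ne a 0 with rfl | ha
    · rcases eq_or_ne b 0 with rfl | hb
      · rfl
      · exact absurd (h.symm.trans A0) (hAnz b hb)
    · rcases eq_or_ne b 0 with rfl | hb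
      · exact absurd (h.trans A0) (hAnz a ha)
      · have h2 : e (a, 0) = e (b, 0) := by rw [hA a ha, hA b hb, h]
        exact congrArg Prod.fst (einj e h2)
  -- off-line vertices
  have hOff : ∀ a b : ZMod n, a ≠ 0 → b ≠ 0 → a ≠ b →
      (e (a, b)).1 ≠ 0 ∧ (e (a, b)).2 ≠ 0 ∧ (e (a, b)).1 ≠ (e (a, b)).2 := by
    intro a b ha hb hab
    have hnotS : ((a, b) : ZMod n × ZMod n) ∉ cayS n := by
      rw [mk_mem_cayS']
      rintro (⟨_, h⟩ | ⟨h, _⟩ | ⟨h, _⟩)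
      exacts [hb h, ha h, hab h]
    have hnotS' : e (a, b) ∉ cayS n := fun h => hnotS ((hSmem _).1 h)
    have hne0 : e (a, b) ≠ 0 := by
      intro h
      exact ha (congrArg Prod.fst (einj e (h.trans h0.symm)))
    have hd : ¬((e (a, b)).2 = 0 ∨ (e (a, b)).1 = 0 ∨ (e (a, b)).1 = (e (a, b)).2) :=
      fun hdis => hnotS' ⟨hne0, hdis⟩
    exact ⟨fun h => hd (Or.inr (Or.inl h)), fun h => hd (Or.inl h),
      fun h => hd (Or.inr (Or.inr h))⟩
  -- the matching lemma
  have hM : ∀ a b : ZMod n, a ≠ 0 → b ≠ 0 → a ≠ b →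
      e (a, b) = (α a, α b) ∨ (e (a, b) = (α b, α a) ∧ α b = α a + α a) := by
    intro a b ha hb hab
    obtain ⟨hp, hq, hpq⟩ := hOff a b ha hb hab
    have mkdiff : ∀ s t : ZMod n, ((a, b) : ZMod n × ZMod n) - (s, t) = (a - s, b - t) :=
      fun s t => by rw [Prod.mk_sub_mk]
    have R1 : ((e (a, b)).1 - α a, (e (a, b)).2) ∈ cayS n := by
      have key : e (a, b) - e (a, 0) ∈ cayS n := by
        rw [hD]
        have hd : ((a, b) : ZMod n × ZMod n) - (a, 0) = (0, b) := by
          rw [mkdiff]; exact Prod.ext (by ring) (by ring)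
        rw [hd, mk_mem_cayS']
        exact Or.inr (Or.inl ⟨rfl, hb⟩)
      rw [hA a ha] at key
      have key' : ((e (a, b)).1 - α a, (e (a, b)).2 - 0) ∈ cayS n := key
      rwa [sub_zero] at key'
    have R2 : ((e (a, b)).1, (e (a, b)).2 - α b) ∈ cayS n := by
      have key : e (a, b) - e (0, b) ∈ cayS n := by
        rw [hD]
        have hd : ((a, b) : ZMod n × ZMod n) - (0, b) = (a, 0) := by
          rw [mkdiff]; exact Prod.ext (by ring) (by ring)
        rw [hd, mk_mem_cayS']
        exact Or.inl ⟨ha, rfl⟩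
      rw [hB b hb] at key
      have key' : ((e (a, b)).1 - 0, (e (a, b)).2 - α b) ∈ cayS n := key
      rwa [sub_zero] at key'
    have R3 : ((e (a, b)).1 - α a, (e (a, b)).2 - α a) ∈ cayS n := by
      have key : e (a, b) - e (a, a) ∈ cayS n := by
        rw [hD]
        have hd : ((a, b) : ZMod n × ZMod n) - (a, a) = (0, b - a) := by
          rw [mkdiff]; exact Prod.ext (by ring) (by ring)
        rw [hd, mk_mem_cayS']
        exact Or.inr (Or.inl ⟨rfl, sub_ne_zero_of_ne (Ne.symm hab)⟩)
      rw [hC a ha] at key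
      exact key
    have R4 : ((e (a, b)).1 - α b, (e (a, b)).2 - α b) ∈ cayS n := by
      have key : e (a, b) - e (b, b) ∈ cayS n := by
        rw [hD]
        have hd : ((a, b) : ZMod n × ZMod n) - (b, b) = (a - b, 0) := by
          rw [mkdiff]; exact Prod.ext (by ring) (by ring)
        rw [hd, mk_mem_cayS']
        exact Or.inl ⟨sub_ne_zero_of_ne hab, rfl⟩
      rw [hC b hb] at key
      exact key
    rcases mk_mem_cayS'.1 R3 with ⟨h3a, h3b⟩ | ⟨h3a, h3b⟩ | ⟨h3a, h3b⟩
    · -- snd : q = α a, fst nonzero : p ≠ α a  → swap case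
      have hq_eq : (e (a, b)).2 = α a := by linear_combination h3b
      have hp_eq : (e (a, b)).1 = α a + α a := by
        rcases mk_mem_cayS'.1 R1 with ⟨h1a, h1b⟩ | ⟨h1a, h1b⟩ | ⟨h1a, h1b⟩
        · exact absurd h1b hq
        · exact absurd h1a h3a
        · linear_combination h1a + hq_eq
      have hp_eq' : (e (a, b)).1 = α b := by
        rcases mk_mem_cayS'.1 R4 with ⟨h4a, h4b⟩ | ⟨h4a, h4b⟩ | ⟨h4a, h4b⟩
        · exact absurd (hInj a b (hq_eq.symm.trans (by linear_combination h4b))) hab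
        · linear_combination h4a
        · exact absurd (by linear_combination h4a) hpq
      refine Or.inr ⟨Prod.ext hp_eq' hq_eq, hp_eq'.symm.trans hp_eq⟩
    · -- fst : p = α a  → normal case
      have hp_eq : (e (a, b)).1 = α a := by linear_combination h3a
      rcases mk_mem_cayS'.1 R2 with ⟨h2a, h2b⟩ | ⟨h2a, h2b⟩ | ⟨h2a, h2b⟩
      · exact Or.inl (Prod.ext hp_eq (by linear_combination h2b))
      · exact absurd h2a hp
      · -- q = p + α b = α a + α b ; contradiction via R4
        have hq_eq : (e (a, b)).2 = α a + α b := by linear_combination -h2a + hp_eq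
        rcases mk_mem_cayS'.1 R4 with ⟨h4a, h4b⟩ | ⟨h4a, h4b⟩ | ⟨h4a, h4b⟩
        · exact absurd (by linear_combination h4b - hq_eq) (hAnz a ha)
        · exact absurd (hInj a b (by linear_combination h4a - hp_eq)) hab
        · exact absurd (by linear_combination h4a) hpq
    · exact absurd (by linear_combination h3a) hpq
  -- swap case is impossible
  have hGen : ∀ a b : ZMod n, a ≠ 0 → b ≠ 0 → a ≠ b → e (a, b) = (α a, α b) := by
    intro a b ha hb hab
    rcases hM a b ha hb hab with h | ⟨hswap, hsum⟩
    · exact h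
    exfalso
    obtain ⟨c, hc0, hca, hcb⟩ : ∃ c : ZMod n, c ≠ 0 ∧ c ≠ a ∧ c ≠ b := by
      by_contra hcon
      push_neg at hcon
      have hsub : (Finset.univ : Finset (ZMod n)) ⊆ {0, a, b} := by
        intro c _
        simp only [Finset.mem_insert, Finset.mem_singleton]
        by_cases h1 : c = 0
        · exact Or.inl h1
        by_cases h2 : c = a
        · exact Or.inr (Or.inl h2)
        exact Or.inr (Or.inr (hcon c h1 h2))
      have hcard := Finset.card_le_card hsub
      rw [Finset.card_univ, ZMod.card] at hcard
      have h3 : ({0, a, b} : Finset (ZMod n)).card ≤ 3 := by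
        refine le_trans (Finset.card_insert_le _ _) ?_
        have h4 := Finset.card_insert_le a ({b} : Finset (ZMod n))
        rw [Finset.card_singleton] at h4
        omega
      omega
    rcases hM a c ha hc0 (Ne.symm hca) with hnorm | ⟨hswap', hsum'⟩
    · have key : e (a, b) - e (a, c) ∈ cayS n := by
        rw [hD]
        have hd : ((a, b) : ZMod n × ZMod n) - (a, c) = (0, b - c) := by
          rw [Prod.mk_sub_mk]; exact Prod.ext (by ring) (by ring)
        rw [hd, mk_mem_cayS']
        exact Or.inr (Or.inl ⟨rfl, sub_ne_zero_of_ne (fun h => hcb h.symm)⟩)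
      rw [hswap, hnorm] at key
      have key' : (α b - α a, α a - α c) ∈ cayS n := key
      rcases mk_mem_cayS'.1 key' with ⟨h1, h2⟩ | ⟨h1, h2⟩ | ⟨h1, h2⟩
      · exact hca (hInj c a (by linear_combination -h2))
      · exact hAnz a ha (by linear_combination h1 - hsum)
      · exact hAnz c hc0 (by linear_combination h1 - hsum)
    · exact hcb (hInj c b (hsum'.trans hsum.symm))
  -- additivity
  have hadd : ∀ a t : ZMod n, α (a + t) = α a + α t := by
    intro a t
    rcases eq_or_ne a 0 with rfl | ha
    · rw [zero_add, A0, zero_add]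
    rcases eq_or_ne t 0 with rfl | ht
    · rw [add_zero, A0, add_zero]
    rcases eq_or_ne (a + t) 0 with hat | hat
    · have htna : t = -a := by linear_combination hat
      rw [hat, A0, htna, hneg a ha]
      ring
    have hv := hGen (a + t) t hat ht (fun h => ha (by linear_combination h))
    have key : e (a + t, t) - e (a, 0) ∈ cayS n := by
      rw [hD]
      have hd : ((a + t, t) : ZMod n × ZMod n) - (a, 0) = (t, t) := by
        rw [Prod.mk_sub_mk]; exact Prod.ext (by ring) (by ring)
      rw [hd, mk_mem_cayS']
      exact Or.inr (Or.inr ⟨rfl, ht⟩)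
    rw [hv, hA a ha] at key
    have key' : (α (a + t) - α a, α t - 0) ∈ cayS n := key
    rw [sub_zero] at key'
    rcases mk_mem_cayS'.1 key' with ⟨h1, h2⟩ | ⟨h1, h2⟩ | ⟨h1, h2⟩
    · exact absurd h2 (hAnz t ht)
    · exact absurd (congrArg (· - a) (hInj _ _ (by linear_combination h1 : α (a+t) = α a)))
        (fun hh => ht (by linear_combination hh))
    · linear_combination h1
  -- α is multiplication by α 1
  have hmul : ∀ a : ZMod n, α a = a * α 1 := by
    intro a
    obtain ⟨m, rfl⟩ : ∃ m : ℕ, (m : ZMod n) = a := ⟨a.val, ZMod.natCast_rightInverse a⟩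
    induction m with
    | zero => simpa using A0
    | succ k ih =>
        have hcast : ((k + 1 : ℕ) : ZMod n) = (k : ZMod n) + 1 := by push_cast; ring
        rw [hcast, hadd, ih]
        ring
  -- unit
  have hSurj : Function.Surjective α :=
    Finite.injective_iff_surjective.1 (fun a b h => hInj a b h)
  obtain ⟨b, hb1⟩ := hSurj 1
  have hu : IsUnit (α 1) := isUnit_iff_exists_inv.2 ⟨b, by rw [mul_comm, ← hmul b, hb1]⟩
  refine ⟨hu.unit, fun p => ?_⟩
  have hcoe : (hu.unit : ZMod n) = α 1 := hu.unit_spec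
  obtain ⟨x, y⟩ := p
  rw [hcoe]
  rcases eq_or_ne x 0 with rfl | hx
  · rcases eq_or_ne y 0 with rfl | hy
    · have h00 : ((0 : ZMod n), (0 : ZMod n)) = (0 : ZMod n × ZMod n) := rfl
      rw [h00, h0]
      exact Prod.ext (by simp) (by simp)
    · rw [hB y hy]
      exact Prod.ext (by simp) (by rw [hmul y]; ring)
  · rcases eq_or_ne y 0 with rfl | hy
    · rw [hA x hx]
      exact Prod.ext (by rw [hmul x]; ring) (by simp)
    · rcases eq_or_ne x y with rfl | hxy
      · rw [hC x hx]
        exact Prod.ext (by rw [hmul x]; ring) (by rw [hmul x]; ring)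
      · rw [hGen x y hx hy hxy]
        exact Prod.ext (by rw [hmul x]; ring) (by rw [hmul y]; ring)

def gperm (k : Fin 6) (j : Fin 3) : Fin 3 :=
  match k, j with
  | 0, j => j
  | 1, 0 => 1 | 1, 1 => 0 | 1, 2 => 2
  | 2, 0 => 2 | 2, 1 => 1 | 2, 2 => 0
  | 3, 0 => 0 | 3, 1 => 2 | 3, 2 => 1
  | 4, 0 => 2 | 4, 1 => 0 | 4, 2 => 1
  | 5, 0 => 1 | 5, 1 => 2 | 5, 2 => 0

lemma inL_gmap {k : Fin 6} {j : Fin 3} {p : ZMod n × ZMod n} (h : inL j p) :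
    inL (gperm k j) (gmap k p) := by
  fin_cases k <;> fin_cases j <;>
    simp only [inL, gmap, gperm] at h ⊢ <;>
    first
      | exact h
      | linear_combination h
      | linear_combination -h

lemma gmap_smul (k : Fin 6) (u : ZMod n) (p : ZMod n × ZMod n) :
    gmap k ((u * p.1, u * p.2) : ZMod n × ZMod n) =
      (u * (gmap k p).1, u * (gmap k p).2) := by
  fin_cases k <;> simp [gmap, Prod.ext_iff] <;> ring

lemma std_one_zero (k : Fin 6) (q : ZMod n × ZMod n) :
    std (0 : ZMod n × ZMod n) 1 k q = gmap k q := by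
  rw [std_apply]
  exact Prod.ext (by simp) (by simp)

lemma fix0_aux (hn : 4 ≤ n) (e : Gamma n ≃g Gamma n) (h0 : e 0 = 0) (k : Fin 6)
    {j0 j1 j2 : Fin 3}
    (hg0 : gperm k j0 = 0) (hg1 : gperm k j1 = 1) (hg2 : gperm k j2 = 2)
    (hj0 : ∀ a : ZMod n, a ≠ 0 → inL j0 (e (bp 0 a)))
    (hj1 : ∀ a : ZMod n, a ≠ 0 → inL j1 (e (bp 1 a)))
    (hj2 : ∀ a : ZMod n, a ≠ 0 → inL j2 (e (bp 2 a))) :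
    ∃ (u : (ZMod n)ˣ) (k' : Fin 6), ∀ p, e p = stdFun 0 u k' p := by
  set e' : Gamma n ≃g Gamma n := e.trans (std 0 1 k) with he'def
  have he' : ∀ p, e' p = gmap k (e p) := fun p => by
    rw [he'def, RelIso.trans_apply, std_one_zero]
  have h0' : e' 0 = 0 := by rw [he', h0, gmap_zero]
  have hL' : ∀ i : Fin 3, ∀ a : ZMod n, a ≠ 0 → inL i (e' (bp i a)) := by
    intro i a ha
    fin_cases i
    · rw [he']
      have hx := inL_gmap (k := k) (hj0 a ha)
      rw [hg0] at hx
      exact hx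
    · rw [he']
      have hx := inL_gmap (k := k) (hj1 a ha)
      rw [hg1] at hx
      exact hx
    · rw [he']
      have hx := inL_gmap (k := k) (hj2 a ha)
      rw [hg2] at hx
      exact hx
  obtain ⟨u, hu⟩ := fix0' hn e' h0' hL'
  refine ⟨u, ginv k, fun p => ?_⟩
  have h1 : gmap k (e p) = ((u : ZMod n) * p.1, (u : ZMod n) * p.2) := by
    rw [← he' p]; exact hu p
  have h2 : e p = gmap (ginv k) (((u : ZMod n) * p.1, (u : ZMod n) * p.2)) := by
    rw [← h1, gmap_ginv]
  rw [h2, gmap_smul]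
  exact Prod.ext (by simp [stdFun]) (by simp [stdFun])

lemma fix0 (hn : 4 ≤ n) (e : Gamma n ≃g Gamma n) (h0 : e 0 = 0) :
    ∃ (u : (ZMod n)ˣ) (k : Fin 6), ∀ p, e p = stdFun 0 u k p := by
  obtain ⟨j0, hj0⟩ := starLine hn e h0 0
  obtain ⟨j1, hj1⟩ := starLine hn e h0 1
  obtain ⟨j2, hj2⟩ := starLine hn e h0 2
  have d01 : j0 ≠ j1 := by
    intro h; subst h; exact starDistinct hn e h0 (by decide) hj0 hj1
  have d02 : j0 ≠ j2 := by
    intro h; subst h; exact starDistinct hn e h0 (by decide) hj0 hj2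
  have d12 : j1 ≠ j2 := by
    intro h; subst h; exact starDistinct hn e h0 (by decide) hj1 hj2
  fin_cases j0 <;> fin_cases j1 <;> fin_cases j2 <;>
    first
      | exact absurd rfl d01
      | exact absurd rfl d02
      | exact absurd rfl d12
      | exact fix0_aux hn e h0 0 (by decide) (by decide) (by decide) hj0 hj1 hj2
      | exact fix0_aux hn e h0 1 (by decide) (by decide) (by decide) hj0 hj1 hj2
      | exact fix0_aux hn e h0 2 (by decide) (by decide) (by decide) hj0 hj1 hj2
      | exact fix0_aux hn e h0 3 (by decide) (by decide) (by decide) hj0 hj1 hj2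
      | exact fix0_aux hn e h0 4 (by decide) (by decide) (by decide) hj0 hj1 hj2
      | exact fix0_aux hn e h0 5 (by decide) (by decide) (by decide) hj0 hj1 hj2

lemma units_nz (hn : 4 ≤ n) (u : (ZMod n)ˣ) : (u : ZMod n) ≠ 0 := by
  haveI : Fact (1 < n) := ⟨by omega⟩
  intro h
  have h1 : (u : ZMod n) * (u⁻¹ : (ZMod n)ˣ) = 1 := u.mul_inv
  rw [h, zero_mul] at h1
  exact zero_ne_one h1

lemma std_surj (hn : 4 ≤ n) (e : Gamma n ≃g Gamma n) :
    ∃ t : (ZMod n × ZMod n) × (ZMod n)ˣ × Fin 6, std t.1 t.2.1 t.2.2 = e := by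
  set c : ZMod n × ZMod n := e 0 with hc
  set e' : Gamma n ≃g Gamma n := e.trans (std (-c) 1 0) with he'def
  have he' : ∀ p, e' p = ((e p).1 - c.1, (e p).2 - c.2) := fun p => by
    rw [he'def, RelIso.trans_apply, std_apply]
    exact Prod.ext (by simp [gmap]; ring) (by simp [gmap]; ring)
  have h0' : e' 0 = 0 := by
    rw [he', ← hc]
    exact Prod.ext (by simp) (by simp)
  obtain ⟨u, k, hu⟩ := fix0 hn e' h0'
  refine ⟨⟨c, u, k⟩, ?_⟩
  apply DFunLike.ext
  intro p
  have h1 := hu p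
  rw [he' p] at h1
  have h2 : (e p).1 = (u : ZMod n) * (gmap k p).1 + c.1 := by
    have := congrArg Prod.fst h1
    simp only [stdFun] at this
    simp at this ⊢
    linear_combination this
  have h3 : (e p).2 = (u : ZMod n) * (gmap k p).2 + c.2 := by
    have := congrArg Prod.snd h1
    simp only [stdFun] at this
    simp at this ⊢
    linear_combination this
  rw [std_apply]
  exact (Prod.ext h2 h3).symm

lemma std_inj (hn : 4 ≤ n) :
    Function.Injective
      (fun t : (ZMod n × ZMod n) × (ZMod n)ˣ × Fin 6 => std t.1 t.2.1 t.2.2) := by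
  rintro ⟨c, u, k⟩ ⟨c', u', k'⟩ h
  simp only at h
  have happ : ∀ p, std c u k p = std c' u' k' p := fun p => by rw [h]
  have unz := units_nz hn u
  have unz' := units_nz hn u'
  have h0 := happ 0
  rw [std_apply, std_apply, gmap_zero, gmap_zero] at h0
  simp only [Prod.fst_zero, Prod.snd_zero, mul_zero, zero_add] at h0
  have hcc : c = c' := Prod.ext (congrArg Prod.fst h0) (congrArg Prod.snd h0)
  subst hcc
  have h1 := happ (1, 0)
  have h2 := happ (0, 1)
  rw [std_apply, std_apply] at h1 h2
  rw [Prod.ext_iff] at h1 h2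
  have e11 : (u : ZMod n) * (gmap k ((1 : ZMod n), (0 : ZMod n))).1 =
      (u' : ZMod n) * (gmap k' ((1 : ZMod n), (0 : ZMod n))).1 := by
    have := h1.1; simpa using this
  have e12 : (u : ZMod n) * (gmap k ((1 : ZMod n), (0 : ZMod n))).2 =
      (u' : ZMod n) * (gmap k' ((1 : ZMod n), (0 : ZMod n))).2 := by
    have := h1.2; simpa using this
  have e21 : (u : ZMod n) * (gmap k ((0 : ZMod n), (1 : ZMod n))).1 =
      (u' : ZMod n) * (gmap k' ((0 : ZMod n), (1 : ZMod n))).1 := by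
    have := h2.1; simpa using this
  have e22 : (u : ZMod n) * (gmap k ((0 : ZMod n), (1 : ZMod n))).2 =
      (u' : ZMod n) * (gmap k' ((0 : ZMod n), (1 : ZMod n))).2 := by
    have := h2.2; simpa using this
  have key : (u : ZMod n) = (u' : ZMod n) ∧ k = k' := by
    fin_cases k <;> fin_cases k' <;>
      simp only [gmap] at e11 e12 e21 e22 <;>
      simp only [mul_one, mul_zero, sub_zero, zero_sub, mul_neg, sub_self,
        neg_eq_zero, zero_eq_neg, neg_inj] at e11 e12 e21 e22 <;>
      first
        | exact ⟨e11, rfl⟩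
        | exact ⟨e12, rfl⟩
        | exact ⟨e21, rfl⟩
        | exact ⟨e22, rfl⟩
        | exact absurd e11 unz
        | exact absurd e12 unz
        | exact absurd e21 unz
        | exact absurd e22 unz
        | exact absurd e11.symm unz'
        | exact absurd e12.symm unz'
        | exact absurd e21.symm unz'
        | exact absurd e22.symm unz'
  exact Prod.ext rfl (Prod.ext (Units.ext key.1) key.2)

lemma card_aut (hn : 4 ≤ n) :
    Nat.card (Gamma n ≃g Gamma n) = 6 * n ^ 2 * Nat.totient n := by
  haveI : NeZero n := ⟨by omega⟩
  have bij : Function.Bijective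
      (fun t : (ZMod n × ZMod n) × (ZMod n)ˣ × Fin 6 => std t.1 t.2.1 t.2.2) :=
    ⟨std_inj hn, fun e => std_surj hn e⟩
  rw [← Nat.card_eq_of_bijective _ bij, Nat.card_prod, Nat.card_prod, Nat.card_prod]
  simp only [Nat.card_eq_fintype_card, ZMod.card, ZMod.card_units_eq_totient,
    Fintype.card_fin]
  ring

end GA

/-- For `n ≥ 4`, `Aut(Γ(n))` has exactly `6·n²·φ(n)` elements. -/
theorem Gamma_card_aut (n : ℕ) (hn : 4 ≤ n) :
    Nat.card (Gamma n ≃g Gamma n) = 6 * n ^ 2 * Nat.totient n := by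
  exact GA.card_aut hn
end

section
/- If n ≥ 4 is prime, then Γ(n) is arc-transitive: for all vertices u, v, x, y of Γ(n) with u adjacent to v and x adjacent to y, there exists an automorphism f of Γ(n) with f(u) = x and f(v) = y. -/
section Aux
variable {n : ℕ}

lemma mem_cayS_iff (p : ZMod n × ZMod n) :
    p ∈ cayS n ↔ p ≠ 0 ∧ (p.2 = 0 ∨ p.1 = 0 ∨ p.1 = p.2) := Iff.rfl

lemma eq_zero_iff (p : ZMod n × ZMod n) : p = 0 ↔ p.1 = 0 ∧ p.2 = 0 := by
  simp [Prod.ext_iff]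

/-- The swap map. -/
def sigmaE (n : ℕ) : (ZMod n × ZMod n) ≃+ (ZMod n × ZMod n) where
  toFun p := (p.2, p.1)
  invFun p := (p.2, p.1)
  left_inv p := rfl
  right_inv p := rfl
  map_add' p q := rfl

/-- The map `(a,b) ↦ (a, a-b)`. -/
def tauE (n : ℕ) : (ZMod n × ZMod n) ≃+ (ZMod n × ZMod n) where
  toFun p := (p.1, p.1 - p.2)
  invFun p := (p.1, p.1 - p.2)
  left_inv p := by simp
  right_inv p := by simp
  map_add' p q := by
    simp only [Prod.fst_add, Prod.snd_add, Prod.mk_add_mk, Prod.mk.injEq]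
    exact ⟨trivial, by ring⟩

/-- Scaling by a nonzero `c` (with `n` prime). -/
def mulE (hp : Fact n.Prime) (c : ZMod n) (hc : c ≠ 0) :
    (ZMod n × ZMod n) ≃+ (ZMod n × ZMod n) where
  toFun p := (c * p.1, c * p.2)
  invFun p := (c⁻¹ * p.1, c⁻¹ * p.2)
  left_inv p := by
    rw [Prod.ext_iff]
    constructor <;> · simp only []; field_simp
  right_inv p := by
    rw [Prod.ext_iff]
    constructor <;> · simp only []; field_simp
  map_add' p q := by
    simp only [Prod.fst_add, Prod.snd_add, Prod.mk_add_mk, Prod.mk.injEq]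
    constructor <;> ring

lemma sigmaE_mem (p : ZMod n × ZMod n) : sigmaE n p ∈ cayS n ↔ p ∈ cayS n := by
  simp only [mem_cayS_iff, ne_eq, eq_zero_iff, sigmaE, AddEquiv.coe_mk, Equiv.coe_fn_mk]
  constructor <;> rintro ⟨h0, h⟩ <;> exact ⟨fun ⟨a, b⟩ => h0 ⟨b, a⟩, by tauto⟩

lemma tauE_mem (p : ZMod n × ZMod n) : tauE n p ∈ cayS n ↔ p ∈ cayS n := by
  have key : ∀ a b : ZMod n, (a = a - b) = (b = 0) := fun a b => by
    apply propext; constructor <;> intro h <;> linear_combination h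
  simp only [mem_cayS_iff, ne_eq, eq_zero_iff, tauE, AddEquiv.coe_mk, Equiv.coe_fn_mk,
    sub_eq_zero, key]
  constructor <;> rintro ⟨h0, h⟩
  · exact ⟨fun ⟨a, b⟩ => h0 ⟨a, a.trans b.symm⟩, by tauto⟩
  · exact ⟨fun ⟨a, b⟩ => h0 ⟨a, b.symm.trans a⟩, by tauto⟩

lemma mulE_mem (hp : Fact n.Prime) (c : ZMod n) (hc : c ≠ 0) (p : ZMod n × ZMod n) :
    mulE hp c hc p ∈ cayS n ↔ p ∈ cayS n := by
  simp only [mem_cayS_iff, ne_eq, eq_zero_iff, mulE, AddEquiv.coe_mk, Equiv.coe_fn_mk,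
    mul_eq_zero, hc, false_or]
  constructor <;> rintro ⟨h0, h⟩ <;> refine ⟨h0, ?_⟩
  · rcases h with h | h | h
    · exact Or.inl h
    · exact Or.inr (Or.inl h)
    · exact Or.inr (Or.inr (mul_left_cancel₀ hc h))
  · rcases h with h | h | h
    · exact Or.inl h
    · exact Or.inr (Or.inl h)
    · exact Or.inr (Or.inr (by rw [h]))

lemma exists_to_basis (hp : Fact n.Prime) {s : ZMod n × ZMod n} (hs : s ∈ cayS n) :
    ∃ A : (ZMod n × ZMod n) ≃+ (ZMod n × ZMod n),
      (∀ p, A p ∈ cayS n ↔ p ∈ cayS n) ∧ A s = (1, 0) := by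
  obtain ⟨h0, h⟩ := hs
  rcases h with h | h | h
  · have h1 : s.1 ≠ 0 := fun h1 => h0 ((eq_zero_iff s).mpr ⟨h1, h⟩)
    refine ⟨mulE hp s.1⁻¹ (inv_ne_zero h1), mulE_mem hp _ _, ?_⟩
    simp [mulE, h, inv_mul_cancel₀ h1]
  · have h2 : s.2 ≠ 0 := fun h2 => h0 ((eq_zero_iff s).mpr ⟨h, h2⟩)
    refine ⟨(sigmaE n).trans (mulE hp s.2⁻¹ (inv_ne_zero h2)), fun p => ?_, ?_⟩
    · rw [AddEquiv.trans_apply, mulE_mem, sigmaE_mem]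
    · simp [sigmaE, mulE, h, inv_mul_cancel₀ h2]
  · have h1 : s.1 ≠ 0 := fun h1 => h0 ((eq_zero_iff s).mpr ⟨h1, h.symm.trans h1⟩)
    refine ⟨(tauE n).trans (mulE hp s.1⁻¹ (inv_ne_zero h1)), fun p => ?_, ?_⟩
    · rw [AddEquiv.trans_apply, mulE_mem, tauE_mem]
    · simp [tauE, mulE, ← h, inv_mul_cancel₀ h1]

end Aux

/-- If `n ≥ 4` is prime, then `Γ(n)` is arc-transitive. -/
theorem Gamma_arc_transitive (n : ℕ) (hn : 4 ≤ n) (hp : n.Prime) :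
    ∀ u v x y : ZMod n × ZMod n, (Gamma n).Adj u v → (Gamma n).Adj x y →
      ∃ f : Gamma n ≃g Gamma n, f u = x ∧ f v = y := by
  intro u v x y huv hxy
  haveI hpf : Fact n.Prime := ⟨hp⟩
  obtain ⟨As, hAs, hAs1⟩ := exists_to_basis hpf (show u ≠ v ∧ u - v ∈ cayS n from huv).2
  obtain ⟨At, hAt, hAt1⟩ := exists_to_basis hpf (show x ≠ y ∧ x - y ∈ cayS n from hxy).2
  set A : (ZMod n × ZMod n) ≃+ (ZMod n × ZMod n) := As.trans At.symm with hA
  have hAmem : ∀ p, A p ∈ cayS n ↔ p ∈ cayS n := by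
    intro p
    rw [hA, AddEquiv.trans_apply, ← hAt, AddEquiv.apply_symm_apply, hAs]
  have hAuv : A (u - v) = x - y := by
    rw [hA, AddEquiv.trans_apply, hAs1, ← hAt1, AddEquiv.symm_apply_apply]
  refine ⟨⟨⟨fun z => A (z - u) + x, fun w => A.symm (w - x) + u, ?_, ?_⟩, ?_⟩, ?_, ?_⟩
  · intro z
    simp
  · intro w
    simp
  · intro a b
    simp only [Equiv.coe_fn_mk, Gamma]
    have hsub : (A (a - u) + x) - (A (b - u) + x) = A (a - b) := by
      rw [add_sub_add_right_eq_sub, ← A.map_sub]; congr 1; abel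
    constructor <;> rintro ⟨h1, h2⟩
    · refine ⟨fun hab => h1 (by rw [hab]), ?_⟩
      rw [hsub, hAmem] at h2; exact h2
    · refine ⟨fun hab => h1 ?_, ?_⟩
      · have := add_right_cancel hab
        have := A.injective this
        have : a = b := by linear_combination (norm := abel) this
        rw [this]
      · rw [hsub, hAmem]; exact h2
  · show A (u - u) + x = x
    simp
  · show A (v - u) + x = y
    have : A (v - u) = -(x - y) := by rw [← neg_sub, A.map_neg, hAuv]
    rw [this]; abel
end

section
/- Let n ≥ 7 be prime. Then the vertices (2,3) and (4,2) are both at graph distance 2 from (0,0) in Γ(n), but there is no automorphism f of Γ(n) with f(0,0) = (0,0) and f(2,3) = (4,2). -/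
lemma Gamma_adj {n : ℕ} {x y : ZMod n × ZMod n} :
    (Gamma n).Adj x y ↔ x ≠ y ∧ (x.2 - y.2 = 0 ∨ x.1 - y.1 = 0 ∨ x.1 - y.1 = x.2 - y.2) := by
  show (x ≠ y ∧ x - y ∈ cayS n) ↔ _
  constructor
  · rintro ⟨h1, _, h2⟩
    simp only [Prod.fst_sub, Prod.snd_sub] at h2
    exact ⟨h1, h2⟩
  · rintro ⟨h1, h2⟩
    exact ⟨h1, sub_ne_zero_of_ne h1, by simpa only [Prod.fst_sub, Prod.snd_sub] using h2⟩

lemma znz {n : ℕ} (hn : 7 ≤ n) {k : ℕ} (h1 : 0 < k) (h2 : k < 7) : ((k : ℕ) : ZMod n) ≠ 0 := by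
  intro h
  rw [ZMod.natCast_eq_zero_iff] at h
  have := Nat.le_of_dvd h1 h
  omega

lemma nz1 {n : ℕ} (hn : 7 ≤ n) : (1 : ZMod n) ≠ 0 := by
  have := znz hn (k := 1) (by norm_num) (by norm_num); push_cast at this; exact this

lemma nz2 {n : ℕ} (hn : 7 ≤ n) : (2 : ZMod n) ≠ 0 := by
  have := znz hn (k := 2) (by norm_num) (by norm_num); push_cast at this; exact this

lemma nz3 {n : ℕ} (hn : 7 ≤ n) : (3 : ZMod n) ≠ 0 := by
  have := znz hn (k := 3) (by norm_num) (by norm_num); push_cast at this; exact this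

lemma nz4 {n : ℕ} (hn : 7 ≤ n) : (4 : ZMod n) ≠ 0 := by
  have := znz hn (k := 4) (by norm_num) (by norm_num); push_cast at this; exact this

lemma nz5 {n : ℕ} (hn : 7 ≤ n) : (5 : ZMod n) ≠ 0 := by
  have := znz hn (k := 5) (by norm_num) (by norm_num); push_cast at this; exact this

/-- Characterization of common neighbours of `(0,0)` and `(2,3)`. -/
lemma common_nbr {n : ℕ} (hn : 7 ≤ n) {w : ZMod n × ZMod n}
    (h0 : (Gamma n).Adj (0, 0) w) (hv : (Gamma n).Adj ((2 : ZMod n), (3 : ZMod n)) w) :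
    w = (2, 0) ∨ w = (-1, 0) ∨ w = (0, 3) ∨ w = (0, 1) ∨ w = (3, 3) ∨ w = (2, 2) := by
  obtain ⟨x, y⟩ := w
  rw [Gamma_adj] at h0 hv
  obtain ⟨-, p0⟩ := h0
  obtain ⟨-, pv⟩ := hv
  norm_num at p0 pv
  rcases p0 with h | h | h <;> rcases pv with h' | h' | h'
  · exact absurd (show (3 : ZMod n) = 0 by linear_combination h' + h) (nz3 hn)
  · left; have hx : x = 2 := by linear_combination -h'
    have hy : y = 0 := by linear_combination h
    subst hx; subst hy; rfl
  · right; left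
    have hx : x = -1 := by linear_combination h - h'
    have hy : y = 0 := by linear_combination h
    subst hx; subst hy; rfl
  · right; right; left
    have hx : x = 0 := by linear_combination h
    have hy : y = 3 := by linear_combination -h'
    subst hx; subst hy; rfl
  · exact absurd (show (2 : ZMod n) = 0 by linear_combination h' + h) (nz2 hn)
  · right; right; right; left
    have hx : x = 0 := by linear_combination h
    have hy : y = 1 := by linear_combination h' + h
    subst hx; subst hy; rfl
  · right; right; right; right; left
    have hy : y = 3 := by linear_combination -h'
    have hx : x = 3 := by linear_combination h - h'
    subst hx; subst hy; rfl
  · right; right; right; right; right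
    have hx : x = 2 := by linear_combination -h'
    have hy : y = 2 := by linear_combination -h' - h
    subst hx; subst hy; rfl
  · exact absurd (show (1 : ZMod n) = 0 by linear_combination -h - h') (nz1 hn)

section NonAdj
variable {n : ℕ}

lemma na_ab (hn : 7 ≤ n) : ¬ (Gamma n).Adj ((2 : ZMod n), 0) (0, 3) := by
  rw [Gamma_adj]; rintro ⟨-, h | h | h⟩ <;> norm_num at h <;>
  first
    | exact nz1 hn (by linear_combination h) | exact nz1 hn (by linear_combination -h)
    | exact nz2 hn (by linear_combination h) | exact nz2 hn (by linear_combination -h)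
    | exact nz3 hn (by linear_combination h) | exact nz3 hn (by linear_combination -h)
    | exact nz4 hn (by linear_combination h) | exact nz4 hn (by linear_combination -h)
    | exact nz5 hn (by linear_combination h) | exact nz5 hn (by linear_combination -h)

lemma na_ac (hn : 7 ≤ n) : ¬ (Gamma n).Adj ((2 : ZMod n), 0) (0, 1) := by
  rw [Gamma_adj]; rintro ⟨-, h | h | h⟩ <;> norm_num at h <;>
  first
    | exact nz1 hn (by linear_combination h) | exact nz1 hn (by linear_combination -h)
    | exact nz2 hn (by linear_combination h) | exact nz2 hn (by linear_combination -h)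
    | exact nz3 hn (by linear_combination h) | exact nz3 hn (by linear_combination -h)
    | exact nz4 hn (by linear_combination h) | exact nz4 hn (by linear_combination -h)
    | exact nz5 hn (by linear_combination h) | exact nz5 hn (by linear_combination -h)

lemma na_ad (hn : 7 ≤ n) : ¬ (Gamma n).Adj ((2 : ZMod n), 0) (3, 3) := by
  rw [Gamma_adj]; rintro ⟨-, h | h | h⟩ <;> norm_num at h <;>
  first
    | exact nz1 hn (by linear_combination h) | exact nz1 hn (by linear_combination -h)
    | exact nz2 hn (by linear_combination h) | exact nz2 hn (by linear_combination -h)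
    | exact nz3 hn (by linear_combination h) | exact nz3 hn (by linear_combination -h)
    | exact nz4 hn (by linear_combination h) | exact nz4 hn (by linear_combination -h)
    | exact nz5 hn (by linear_combination h) | exact nz5 hn (by linear_combination -h)

lemma na_bc (hn : 7 ≤ n) : ¬ (Gamma n).Adj ((-1 : ZMod n), 0) (0, 3) := by
  rw [Gamma_adj]; rintro ⟨-, h | h | h⟩ <;> norm_num at h <;>
  first
    | exact nz1 hn (by linear_combination h) | exact nz1 hn (by linear_combination -h)
    | exact nz2 hn (by linear_combination h) | exact nz2 hn (by linear_combination -h)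
    | exact nz3 hn (by linear_combination h) | exact nz3 hn (by linear_combination -h)
    | exact nz4 hn (by linear_combination h) | exact nz4 hn (by linear_combination -h)
    | exact nz5 hn (by linear_combination h) | exact nz5 hn (by linear_combination -h)

lemma na_bd (hn : 7 ≤ n) : ¬ (Gamma n).Adj ((-1 : ZMod n), 0) (3, 3) := by
  rw [Gamma_adj]; rintro ⟨-, h | h | h⟩ <;> norm_num at h <;>
  first
    | exact nz1 hn (by linear_combination h) | exact nz1 hn (by linear_combination -h)
    | exact nz2 hn (by linear_combination h) | exact nz2 hn (by linear_combination -h)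
    | exact nz3 hn (by linear_combination h) | exact nz3 hn (by linear_combination -h)
    | exact nz4 hn (by linear_combination h) | exact nz4 hn (by linear_combination -h)
    | exact nz5 hn (by linear_combination h) | exact nz5 hn (by linear_combination -h)

lemma na_be (hn : 7 ≤ n) : ¬ (Gamma n).Adj ((-1 : ZMod n), 0) (2, 2) := by
  rw [Gamma_adj]; rintro ⟨-, h | h | h⟩ <;> norm_num at h <;>
  first
    | exact nz1 hn (by linear_combination h) | exact nz1 hn (by linear_combination -h)
    | exact nz2 hn (by linear_combination h) | exact nz2 hn (by linear_combination -h)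
    | exact nz3 hn (by linear_combination h) | exact nz3 hn (by linear_combination -h)
    | exact nz4 hn (by linear_combination h) | exact nz4 hn (by linear_combination -h)
    | exact nz5 hn (by linear_combination h) | exact nz5 hn (by linear_combination -h)

lemma na_cd (hn : 7 ≤ n) : ¬ (Gamma n).Adj ((0 : ZMod n), 3) (2, 2) := by
  rw [Gamma_adj]; rintro ⟨-, h | h | h⟩ <;> norm_num at h <;>
  first
    | exact nz1 hn (by linear_combination h) | exact nz1 hn (by linear_combination -h)
    | exact nz2 hn (by linear_combination h) | exact nz2 hn (by linear_combination -h)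
    | exact nz3 hn (by linear_combination h) | exact nz3 hn (by linear_combination -h)
    | exact nz4 hn (by linear_combination h) | exact nz4 hn (by linear_combination -h)
    | exact nz5 hn (by linear_combination h) | exact nz5 hn (by linear_combination -h)

lemma na_ce (hn : 7 ≤ n) : ¬ (Gamma n).Adj ((0 : ZMod n), 1) (3, 3) := by
  rw [Gamma_adj]; rintro ⟨-, h | h | h⟩ <;> norm_num at h <;>
  first
    | exact nz1 hn (by linear_combination h) | exact nz1 hn (by linear_combination -h)
    | exact nz2 hn (by linear_combination h) | exact nz2 hn (by linear_combination -h)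
    | exact nz3 hn (by linear_combination h) | exact nz3 hn (by linear_combination -h)
    | exact nz4 hn (by linear_combination h) | exact nz4 hn (by linear_combination -h)
    | exact nz5 hn (by linear_combination h) | exact nz5 hn (by linear_combination -h)

lemma na_cf (hn : 7 ≤ n) : ¬ (Gamma n).Adj ((0 : ZMod n), 1) (2, 2) := by
  rw [Gamma_adj]; rintro ⟨-, h | h | h⟩ <;> norm_num at h <;>
  first
    | exact nz1 hn (by linear_combination h) | exact nz1 hn (by linear_combination -h)
    | exact nz2 hn (by linear_combination h) | exact nz2 hn (by linear_combination -h)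
    | exact nz3 hn (by linear_combination h) | exact nz3 hn (by linear_combination -h)
    | exact nz4 hn (by linear_combination h) | exact nz4 hn (by linear_combination -h)
    | exact nz5 hn (by linear_combination h) | exact nz5 hn (by linear_combination -h)

end NonAdj

section Keys
variable {n : ℕ}

def inA (n : ℕ) (w : ZMod n × ZMod n) : Prop :=
  w = (2, 0) ∨ w = (-1, 0) ∨ w = (0, 3) ∨ w = (0, 1) ∨ w = (3, 3) ∨ w = (2, 2)

lemma key1 (hn : 7 ≤ n) {w : ZMod n × ZMod n} (hw : inA n w)
    (hadj : (Gamma n).Adj ((2 : ZMod n), 0) w) : w = (-1, 0) ∨ w = (2, 2) := by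
  rcases hw with rfl | rfl | rfl | rfl | rfl | rfl
  · exact absurd hadj ((Gamma n).loopless.irrefl _)
  · exact Or.inl rfl
  · exact absurd hadj (na_ab hn)
  · exact absurd hadj (na_ac hn)
  · exact absurd hadj (na_ad hn)
  · exact Or.inr rfl

lemma key2 (hn : 7 ≤ n) {w : ZMod n × ZMod n} (hw : inA n w)
    (hadj : (Gamma n).Adj ((-1 : ZMod n), 0) w) : w = (2, 0) ∨ w = (0, 1) := by
  rcases hw with rfl | rfl | rfl | rfl | rfl | rfl
  · exact Or.inl rfl
  · exact absurd hadj ((Gamma n).loopless.irrefl _)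
  · exact absurd hadj (na_bc hn)
  · exact Or.inr rfl
  · exact absurd hadj (na_bd hn)
  · exact absurd hadj (na_be hn)

lemma key3 (hn : 7 ≤ n) {w : ZMod n × ZMod n} (hw : inA n w)
    (hadj : (Gamma n).Adj ((0 : ZMod n), 3) w) : w = (0, 1) ∨ w = (3, 3) := by
  rcases hw with rfl | rfl | rfl | rfl | rfl | rfl
  · exact absurd hadj.symm (na_ab hn)
  · exact absurd hadj.symm (na_bc hn)
  · exact absurd hadj ((Gamma n).loopless.irrefl _)
  · exact Or.inl rfl
  · exact Or.inr rfl
  · exact absurd hadj (na_cd hn)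

lemma key4 (hn : 7 ≤ n) {w : ZMod n × ZMod n} (hw : inA n w)
    (hadj : (Gamma n).Adj ((0 : ZMod n), 1) w) : w = (-1, 0) ∨ w = (0, 3) := by
  rcases hw with rfl | rfl | rfl | rfl | rfl | rfl
  · exact absurd hadj.symm (na_ac hn)
  · exact Or.inl rfl
  · exact Or.inr rfl
  · exact absurd hadj ((Gamma n).loopless.irrefl _)
  · exact absurd hadj (na_ce hn)
  · exact absurd hadj (na_cf hn)

lemma key5 (hn : 7 ≤ n) {w : ZMod n × ZMod n} (hw : inA n w)
    (hadj : (Gamma n).Adj ((3 : ZMod n), 3) w) : w = (0, 3) ∨ w = (2, 2) := by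
  rcases hw with rfl | rfl | rfl | rfl | rfl | rfl
  · exact absurd hadj.symm (na_ad hn)
  · exact absurd hadj.symm (na_bd hn)
  · exact Or.inl rfl
  · exact absurd hadj.symm (na_ce hn)
  · exact absurd hadj ((Gamma n).loopless.irrefl _)
  · exact Or.inr rfl

lemma key6 (hn : 7 ≤ n) {w : ZMod n × ZMod n} (hw : inA n w)
    (hadj : (Gamma n).Adj ((2 : ZMod n), 2) w) : w = (2, 0) ∨ w = (3, 3) := by
  rcases hw with rfl | rfl | rfl | rfl | rfl | rfl
  · exact Or.inl rfl
  · exact absurd hadj.symm (na_be hn)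
  · exact absurd hadj.symm (na_cd hn)
  · exact absurd hadj.symm (na_cf hn)
  · exact Or.inr rfl
  · exact absurd hadj ((Gamma n).loopless.irrefl _)

end Keys

lemma pigeon {α : Type*} {p q a b c : α} (ha : a = p ∨ a = q) (hb : b = p ∨ b = q)
    (hc : c = p ∨ c = q) (hab : a ≠ b) (hac : a ≠ c) (hbc : b ≠ c) : False := by
  rcases ha with rfl | rfl <;> rcases hb with rfl | rfl <;> rcases hc with rfl | rfl <;> simp_all

/-- distance-2 helper -/
lemma dist_two {n : ℕ} (hn : 7 ≤ n) {v m : ZMod n × ZMod n}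
    (h1 : (Gamma n).Adj (0, 0) m) (h2 : (Gamma n).Adj m v)
    (hne : ((0, 0) : ZMod n × ZMod n) ≠ v) (hnadj : ¬ (Gamma n).Adj (0, 0) v) :
    (Gamma n).dist (0, 0) v = 2 := by
  have hle : (Gamma n).dist (0, 0) v ≤ 2 :=
    SimpleGraph.dist_le (SimpleGraph.Walk.cons h1 (SimpleGraph.Walk.cons h2 SimpleGraph.Walk.nil))
  have hpos : 0 < (Gamma n).dist (0, 0) v :=
    SimpleGraph.Reachable.pos_dist_of_ne
      ⟨SimpleGraph.Walk.cons h1 (SimpleGraph.Walk.cons h2 SimpleGraph.Walk.nil)⟩ hne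
  have hone : (Gamma n).dist (0, 0) v ≠ 1 := fun h =>
    hnadj (SimpleGraph.dist_eq_one_iff_adj.mp h)
  omega

/-- For prime `n ≥ 7`, the vertices `(2,3)` and `(4,2)` are both at
distance `2` from `(0,0)` in `Γ(n)`, but no automorphism of `Γ(n)` fixes `(0,0)` and
maps `(2,3)` to `(4,2)`. -/
theorem Gamma_not_distance_transitive_witness (n : ℕ) (hn : 7 ≤ n) (hp : n.Prime) :
    (Gamma n).dist (0, 0) ((2 : ZMod n), (3 : ZMod n)) = 2 ∧
    (Gamma n).dist (0, 0) ((4 : ZMod n), (2 : ZMod n)) = 2 ∧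
    ¬ ∃ f : Gamma n ≃g Gamma n,
        f (0, 0) = (0, 0) ∧ f ((2 : ZMod n), (3 : ZMod n)) = ((4 : ZMod n), (2 : ZMod n)) := by
  have adj02 : (Gamma n).Adj (0, 0) ((2 : ZMod n), 2) := by
    rw [Gamma_adj]
    refine ⟨fun h => nz2 hn (congrArg Prod.fst h).symm, Or.inr (Or.inr (by norm_num))⟩
  refine ⟨?_, ?_, ?_⟩
  · -- dist to (2,3)
    refine dist_two hn adj02 ?_ ?_ ?_
    · rw [Gamma_adj]
      refine ⟨fun h => nz1 hn (by
        have h' : (2 : ZMod n) = 3 := congrArg Prod.snd h; linear_combination -h'), ?_⟩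
      norm_num
    · intro h
      have h' : (0 : ZMod n) = 3 := congrArg Prod.snd h
      exact nz3 hn (by linear_combination -h')
    · rw [Gamma_adj]
      rintro ⟨-, h | h | h⟩ <;> norm_num at h <;>
      first
        | exact nz1 hn (by linear_combination h) | exact nz1 hn (by linear_combination -h)
        | exact nz2 hn (by linear_combination h) | exact nz2 hn (by linear_combination -h)
        | exact nz3 hn (by linear_combination h) | exact nz3 hn (by linear_combination -h)
  · -- dist to (4,2)
    refine dist_two hn adj02 ?_ ?_ ?_
    · rw [Gamma_adj]
      refine ⟨fun h => nz2 hn (by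
        have h' : (2 : ZMod n) = 4 := congrArg Prod.fst h; linear_combination -h'), ?_⟩
      norm_num
    · intro h
      have h' : (0 : ZMod n) = 2 := congrArg Prod.snd h
      exact nz2 hn (by linear_combination -h')
    · rw [Gamma_adj]
      rintro ⟨-, h | h | h⟩ <;> norm_num at h <;>
      first
        | exact nz1 hn (by linear_combination h) | exact nz1 hn (by linear_combination -h)
        | exact nz2 hn (by linear_combination h) | exact nz2 hn (by linear_combination -h)
        | exact nz3 hn (by linear_combination h) | exact nz3 hn (by linear_combination -h)
        | exact nz4 hn (by linear_combination h) | exact nz4 hn (by linear_combination -h)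
  · rintro ⟨f, hf0, hfv⟩
    have hg0 : f.symm (0, 0) = (0, 0) := f.toEquiv.symm_apply_eq.mpr hf0.symm
    have hgv : f.symm ((4 : ZMod n), 2) = ((2 : ZMod n), 3) :=
      f.toEquiv.symm_apply_eq.mpr hfv.symm
    have hmap : ∀ x y : ZMod n × ZMod n,
        (Gamma n).Adj (f.symm x) (f.symm y) ↔ (Gamma n).Adj x y :=
      fun x y => SimpleGraph.Iso.map_adj_iff f.symm
    -- concrete adjacencies
    have A0u : (Gamma n).Adj (0, 0) ((2 : ZMod n), 0) := by
      rw [Gamma_adj]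
      exact ⟨fun h => nz2 hn (congrArg Prod.fst h).symm, Or.inl (by norm_num)⟩
    have Avu : (Gamma n).Adj ((4 : ZMod n), 2) ((2 : ZMod n), 0) := by
      rw [Gamma_adj]
      refine ⟨fun h => nz2 hn (congrArg Prod.snd h), ?_⟩
      norm_num
    have A0a : (Gamma n).Adj (0, 0) ((4 : ZMod n), 0) := by
      rw [Gamma_adj]
      exact ⟨fun h => nz4 hn (congrArg Prod.fst h).symm, Or.inl (by norm_num)⟩
    have Ava : (Gamma n).Adj ((4 : ZMod n), 2) ((4 : ZMod n), 0) := by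
      rw [Gamma_adj]
      refine ⟨fun h => nz2 hn (congrArg Prod.snd h), ?_⟩
      norm_num
    have A0b : (Gamma n).Adj (0, 0) ((0 : ZMod n), -2) := by
      rw [Gamma_adj]
      refine ⟨fun h => nz2 hn (by
        have h' : (0 : ZMod n) = -2 := congrArg Prod.snd h; linear_combination h'), ?_⟩
      norm_num
    have Avb : (Gamma n).Adj ((4 : ZMod n), 2) ((0 : ZMod n), -2) := by
      rw [Gamma_adj]
      refine ⟨fun h => nz4 hn (congrArg Prod.fst h), ?_⟩
      norm_num
    have Avc : (Gamma n).Adj ((4 : ZMod n), 2) ((2 : ZMod n), 2) := by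
      rw [Gamma_adj]
      refine ⟨fun h => nz2 hn (by
        have h' : (4 : ZMod n) = 2 := congrArg Prod.fst h; linear_combination h'), ?_⟩
      norm_num
    have Aua : (Gamma n).Adj ((2 : ZMod n), 0) ((4 : ZMod n), 0) := by
      rw [Gamma_adj]
      refine ⟨fun h => nz2 hn (by
        have h' : (2 : ZMod n) = 4 := congrArg Prod.fst h; linear_combination -h'), ?_⟩
      norm_num
    have Aub : (Gamma n).Adj ((2 : ZMod n), 0) ((0 : ZMod n), -2) := by
      rw [Gamma_adj]
      refine ⟨fun h => nz2 hn (congrArg Prod.fst h), ?_⟩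
      norm_num
    have Auc : (Gamma n).Adj ((2 : ZMod n), 0) ((2 : ZMod n), 2) := by
      rw [Gamma_adj]
      refine ⟨fun h => nz2 hn (by
        have h' : (0 : ZMod n) = 2 := congrArg Prod.snd h; linear_combination -h'), ?_⟩
      norm_num
    -- pulled-back facts
    have hu6 : inA n (f.symm ((2 : ZMod n), 0)) :=
      common_nbr hn (by rw [← hg0]; exact (hmap _ _).mpr A0u)
        (by rw [← hgv]; exact (hmap _ _).mpr Avu)
    have ha6 : inA n (f.symm ((4 : ZMod n), 0)) :=
      common_nbr hn (by rw [← hg0]; exact (hmap _ _).mpr A0a)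
        (by rw [← hgv]; exact (hmap _ _).mpr Ava)
    have hb6 : inA n (f.symm ((0 : ZMod n), -2)) :=
      common_nbr hn (by rw [← hg0]; exact (hmap _ _).mpr A0b)
        (by rw [← hgv]; exact (hmap _ _).mpr Avb)
    have hc6 : inA n (f.symm ((2 : ZMod n), 2)) :=
      common_nbr hn (by rw [← hg0]; exact (hmap _ _).mpr adj02)
        (by rw [← hgv]; exact (hmap _ _).mpr Avc)
    have hua : (Gamma n).Adj (f.symm ((2 : ZMod n), 0)) (f.symm ((4 : ZMod n), 0)) :=
      (hmap _ _).mpr Aua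
    have hub : (Gamma n).Adj (f.symm ((2 : ZMod n), 0)) (f.symm ((0 : ZMod n), -2)) :=
      (hmap _ _).mpr Aub
    have huc : (Gamma n).Adj (f.symm ((2 : ZMod n), 0)) (f.symm ((2 : ZMod n), 2)) :=
      (hmap _ _).mpr Auc
    have hab : f.symm ((4 : ZMod n), 0) ≠ f.symm ((0 : ZMod n), -2) := by
      intro h
      exact nz4 hn (congrArg Prod.fst (f.symm.injective h))
    have hac : f.symm ((4 : ZMod n), 0) ≠ f.symm ((2 : ZMod n), 2) := by
      intro h
      have h' : (4 : ZMod n) = 2 := congrArg Prod.fst (f.symm.injective h)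
      exact nz2 hn (by linear_combination h')
    have hbc : f.symm ((0 : ZMod n), -2) ≠ f.symm ((2 : ZMod n), 2) := by
      intro h
      have h' : (0 : ZMod n) = 2 := congrArg Prod.fst (f.symm.injective h)
      exact nz2 hn (by linear_combination -h')
    rcases hu6 with h | h | h | h | h | h <;> rw [h] at hua hub huc
    · exact pigeon (key1 hn ha6 hua) (key1 hn hb6 hub) (key1 hn hc6 huc) hab hac hbc
    · exact pigeon (key2 hn ha6 hua) (key2 hn hb6 hub) (key2 hn hc6 huc) hab hac hbc
    · exact pigeon (key3 hn ha6 hua) (key3 hn hb6 hub) (key3 hn hc6 huc) hab hac hbc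
    · exact pigeon (key4 hn ha6 hua) (key4 hn hb6 hub) (key4 hn hc6 huc) hab hac hbc
    · exact pigeon (key5 hn ha6 hua) (key5 hn hb6 hub) (key5 hn hc6 huc) hab hac hbc
    · exact pigeon (key6 hn ha6 hua) (key6 hn hb6 hub) (key6 hn hc6 huc) hab hac hbc
end
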